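/- arXiv:1607.03251 — 7 statements merged into one kernel-verified Lean document; each statement's English description precedes it below -/
import Mathlib

section
/- Fix an integer n ≥ 2. Define the n×n matrix A by A_{i,j} = a_n² λ_{j,n} p_{n-1}(x_{j,n})² λ_{i,n-1} p_n(x_{i,n-1})² / (x_{j,n} − x_{i,n-1})² for 1 ≤ i ≤ n−1 and 1 ≤ j ≤ n, and A_{n,j} = λ_{j,n} p_{n-1}(x_{j,n})² for 1 ≤ j ≤ n. Then A is doubly stochastic, x_{i,n-1} = Σ_{j=1}^{n} A_{i,j} x_{j,n} for every 1 ≤ i ≤ n−1, and b_{n-1} = Σ_{j=1}^{n} A_{n,j} x_{j,n}. -/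
open MeasureTheory Polynomial Finset

open Matrix


lemma aux_rec {p : ℕ → Polynomial ℝ} {a b : ℕ → ℝ}
    (hrec : ∀ m : ℕ, Polynomial.X * p (m + 1) =
      Polynomial.C (a (m + 2)) * p (m + 2) + Polynomial.C (b (m + 1)) * p (m + 1) +
        Polynomial.C (a (m + 1)) * p m)
    (k : ℕ) (t : ℝ) :
    t * (p (k+1)).eval t
      = a (k+2) * (p (k+2)).eval t + b (k+1) * (p (k+1)).eval t + a (k+1) * (p k).eval t := by
  have := congrArg (Polynomial.eval t) (hrec k)
  simpa using this

lemma aux_rec0 {p : ℕ → Polynomial ℝ} {a b : ℕ → ℝ}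
    (hrec0 : Polynomial.X * p 0 = Polynomial.C (a 1) * p 1 + Polynomial.C (b 0) * p 0)
    (t : ℝ) :
    t * (p 0).eval t = a 1 * (p 1).eval t + b 0 * (p 0).eval t := by
  have := congrArg (Polynomial.eval t) hrec0
  simpa using this

lemma aux_cd {p : ℕ → Polynomial ℝ} {a b : ℕ → ℝ}
    (hrec0 : Polynomial.X * p 0 = Polynomial.C (a 1) * p 1 + Polynomial.C (b 0) * p 0)
    (hrec : ∀ m : ℕ, Polynomial.X * p (m + 1) =
      Polynomial.C (a (m + 2)) * p (m + 2) + Polynomial.C (b (m + 1)) * p (m + 1) +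
        Polynomial.C (a (m + 1)) * p m)
    (k : ℕ) : ∀ s t : ℝ,
    (s - t) * ∑ i ∈ range (k+1), (p i).eval s * (p i).eval t
      = a (k+1) * ((p (k+1)).eval s * (p k).eval t - (p k).eval s * (p (k+1)).eval t) := by
  induction k with
  | zero =>
    intro s t
    have hs := aux_rec0 hrec0 s
    have ht := aux_rec0 hrec0 t
    rw [show (0:ℕ)+1 = 1 from rfl, Finset.sum_range_one]
    linear_combination (p 0).eval t * hs - (p 0).eval s * ht
  | succ k ih =>
    intro s t
    rw [sum_range_succ]
    have hs := aux_rec hrec k s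
    have ht := aux_rec hrec k t
    linear_combination ih s t + (p (k+1)).eval t * hs - (p (k+1)).eval s * ht

lemma aux_p0 {p : ℕ → Polynomial ℝ}
    (hdeg0 : (p 0).degree = 0) (hlead0 : 0 < (p 0).leadingCoeff) (t : ℝ) :
    0 < (p 0).eval t := by
  have h1 : p 0 = Polynomial.C ((p 0).coeff 0) :=
    Polynomial.eq_C_of_degree_le_zero (le_of_eq hdeg0)
  have h2 : (p 0).natDegree = 0 := Polynomial.natDegree_eq_zero_iff_degree_le_zero.2 (le_of_eq hdeg0)
  have : (p 0).leadingCoeff = (p 0).coeff 0 := by rw [Polynomial.leadingCoeff, h2]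
  rw [h1]
  simpa [← this] using hlead0

lemma aux_ncz {p : ℕ → Polynomial ℝ} {a b : ℕ → ℝ}
    (hdeg0 : (p 0).degree = 0) (hlead0 : 0 < (p 0).leadingCoeff)
    (hapos : ∀ m : ℕ, 1 ≤ m → 0 < a m)
    (hrec : ∀ m : ℕ, Polynomial.X * p (m + 1) =
      Polynomial.C (a (m + 2)) * p (m + 2) + Polynomial.C (b (m + 1)) * p (m + 1) +
        Polynomial.C (a (m + 1)) * p m) :
    ∀ k : ℕ, ∀ t : ℝ, (p k).eval t = 0 → (p (k+1)).eval t = 0 → False := by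
  intro k
  induction k with
  | zero => intro t h0 _; exact absurd h0 (ne_of_gt (aux_p0 hdeg0 hlead0 t))
  | succ k ih =>
    intro t h1 h2
    have hr := aux_rec hrec k t
    rw [h1, h2] at hr
    have ha := hapos (k+1) (by omega)
    have : (p k).eval t = 0 := by
      have : a (k+1) * (p k).eval t = 0 := by linarith
      exact (mul_eq_zero.1 this).resolve_left (ne_of_gt ha)
    exact ih t this h1


lemma aux_mono {x : ℕ → ℕ → ℝ} {m : ℕ}
    (hxmono : ∀ j : ℕ, 1 ≤ j → j + 1 ≤ m → x m j < x m (j + 1)) :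
    ∀ k j : ℕ, 1 ≤ j → j < k → k ≤ m → x m j < x m k := by
  intro k
  induction k with
  | zero => intro j _ h _; omega
  | succ k ih =>
    intro j hj hjk hkm
    rcases eq_or_lt_of_le (Nat.lt_succ_iff.1 hjk) with h | h
    · subst h; exact hxmono j hj hkm
    · exact (ih j hj h (by omega)).trans (hxmono k (by omega) hkm)

lemma aux_sumG {M d : ℕ} (hdM : d ≤ M) (w : ℕ → ℝ) (u : ℕ → ℕ → ℝ)
    (D : ∀ k l : ℕ, k < M → l < M →
      ∑ j ∈ range M, w j * (u k j * u l j) = if k = l then 1 else 0)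
    (c : ℕ → ℝ) :
    ∑ j ∈ range M, w j * (∑ k ∈ range d, c k * u k j)^2 = ∑ k ∈ range d, (c k)^2 := by
  calc ∑ j ∈ range M, w j * (∑ k ∈ range d, c k * u k j)^2
      = ∑ j ∈ range M, ∑ k ∈ range d, ∑ l ∈ range d,
          c k * c l * (w j * (u k j * u l j)) := by
        refine Finset.sum_congr rfl fun j _ => ?_
        rw [sq, Finset.sum_mul_sum, Finset.mul_sum]
        refine Finset.sum_congr rfl fun k _ => ?_
        rw [Finset.mul_sum]
        exact Finset.sum_congr rfl fun l _ => by ring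
    _ = ∑ k ∈ range d, ∑ l ∈ range d, c k * c l *
          ∑ j ∈ range M, w j * (u k j * u l j) := by
        rw [Finset.sum_comm]
        refine Finset.sum_congr rfl fun k _ => ?_
        rw [Finset.sum_comm]
        exact Finset.sum_congr rfl fun l _ => (Finset.mul_sum _ _ _).symm
    _ = ∑ k ∈ range d, (c k)^2 := by
        refine Finset.sum_congr rfl fun k hk => ?_
        have hk' : k < M := lt_of_lt_of_le (mem_range.1 hk) hdM
        rw [Finset.sum_eq_single k]
        · rw [D k k hk' hk', if_pos rfl]; ring
        · intro l hl hlk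
          rw [D k l hk' (lt_of_lt_of_le (mem_range.1 hl) hdM), if_neg (Ne.symm hlk), mul_zero]
        · intro h; exact absurd hk h


lemma aux_sumGy {M d : ℕ} (hdM : d < M) (w t : ℕ → ℝ) (u : ℕ → ℕ → ℝ)
    (D : ∀ k l : ℕ, k < M → l < M →
      ∑ j ∈ range M, w j * (u k j * u l j) = if k = l then 1 else 0)
    (α β γ : ℕ → ℝ)
    (hu : ∀ k : ℕ, k < d → ∀ j : ℕ,
      t j * u k j = α k * u (k+1) j + β k * u k j + γ k * u (k-1) j)
    (c : ℕ → ℝ) (Y : ℝ) (hcd : c d = 0)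
    (hc : ∀ k : ℕ, k < d → Y * c k = α k * c (k+1) + β k * c k + γ k * c (k-1)) :
    ∑ j ∈ range M, (w j * t j) * (∑ k ∈ range d, c k * u k j)^2
      = Y * ∑ k ∈ range d, (c k)^2 := by
  have hT : ∀ k l : ℕ, k < d → l < M →
      ∑ j ∈ range M, (w j * t j) * (u k j * u l j)
        = α k * (if k+1 = l then 1 else 0) + β k * (if k = l then 1 else 0)
          + γ k * (if k-1 = l then 1 else 0) := by
    intro k l hk hl
    have e1 : ∀ j : ℕ, (w j * t j) * (u k j * u l j)
        = α k * (w j * (u (k+1) j * u l j)) + β k * (w j * (u k j * u l j))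
          + γ k * (w j * (u (k-1) j * u l j)) := by
      intro j
      have := hu k hk j
      calc (w j * t j) * (u k j * u l j) = w j * ((t j * u k j) * u l j) := by ring
        _ = w j * ((α k * u (k+1) j + β k * u k j + γ k * u (k-1) j) * u l j) := by rw [this]
        _ = _ := by ring
    rw [Finset.sum_congr rfl fun j _ => e1 j]
    rw [Finset.sum_add_distrib, Finset.sum_add_distrib, ← Finset.mul_sum, ← Finset.mul_sum,
      ← Finset.mul_sum]
    rw [D (k+1) l (by omega) hl, D k l (by omega) hl, D (k-1) l (by omega) hl]
  calc ∑ j ∈ range M, (w j * t j) * (∑ k ∈ range d, c k * u k j)^2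
      = ∑ j ∈ range M, ∑ k ∈ range d, ∑ l ∈ range d,
          c k * c l * ((w j * t j) * (u k j * u l j)) := by
        refine Finset.sum_congr rfl fun j _ => ?_
        rw [sq, Finset.sum_mul_sum, Finset.mul_sum]
        refine Finset.sum_congr rfl fun k _ => ?_
        rw [Finset.mul_sum]
        exact Finset.sum_congr rfl fun l _ => by ring
    _ = ∑ k ∈ range d, ∑ l ∈ range d, c k * c l *
          ∑ j ∈ range M, (w j * t j) * (u k j * u l j) := by
        rw [Finset.sum_comm]
        refine Finset.sum_congr rfl fun k _ => ?_
        rw [Finset.sum_comm]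
        exact Finset.sum_congr rfl fun l _ => (Finset.mul_sum _ _ _).symm
    _ = ∑ k ∈ range d, c k * (Y * c k) := by
        refine Finset.sum_congr rfl fun k hk => ?_
        have hkd : k < d := mem_range.1 hk
        have e2 : ∀ l ∈ range d, c k * c l * ∑ j ∈ range M, (w j * t j) * (u k j * u l j)
            = c k * ((if k+1 = l then α k * c l else 0) + (if k = l then β k * c l else 0)
                + (if k-1 = l then γ k * c l else 0)) := by
          intro l hl
          rw [hT k l hkd (lt_of_lt_of_le (mem_range.1 hl) hdM.le)]
          split_ifs <;> ring
        rw [Finset.sum_congr rfl e2, ← Finset.mul_sum]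
        rw [Finset.sum_add_distrib, Finset.sum_add_distrib,
          Finset.sum_ite_eq, Finset.sum_ite_eq, Finset.sum_ite_eq]
        have m2 : k ∈ range d := hk
        have m3 : k - 1 ∈ range d := mem_range.2 (by omega)
        rw [if_pos m2, if_pos m3]
        have h1 : (if k+1 ∈ range d then α k * c (k+1) else 0) = α k * c (k+1) := by
          by_cases h : k+1 ∈ range d
          · rw [if_pos h]
          · have : k + 1 = d := by have := mem_range.not.1 h; omega
            rw [if_neg h, this, hcd, mul_zero]
        rw [h1, ← hc k hkd]
    _ = Y * ∑ k ∈ range d, (c k)^2 := by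
        rw [Finset.mul_sum]
        exact Finset.sum_congr rfl fun k _ => by ring


lemma aux_dorth {p : ℕ → Polynomial ℝ} {a b : ℕ → ℝ} {x : ℕ → ℕ → ℝ}
    {lam : ℕ → ℕ → ℝ} {d : ℕ}
    (hrec0 : Polynomial.X * p 0 = Polynomial.C (a 1) * p 1 + Polynomial.C (b 0) * p 0)
    (hrec : ∀ m : ℕ, Polynomial.X * p (m + 1) =
      Polynomial.C (a (m + 2)) * p (m + 2) + Polynomial.C (b (m + 1)) * p (m + 1) +
        Polynomial.C (a (m + 1)) * p m)
    (hroot : ∀ j : ℕ, 1 ≤ j → j ≤ d + 1 → (p (d+1)).eval (x (d+1) j) = 0)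
    (hmono : ∀ j : ℕ, 1 ≤ j → j + 1 ≤ d + 1 → x (d+1) j < x (d+1) (j + 1))
    (hlam : ∀ j : ℕ, lam (d+1) j = (∑ i ∈ range (d+1), ((p i).eval (x (d+1) j)) ^ 2)⁻¹)
    (hS : ∀ j : ℕ, 1 ≤ j → j ≤ d + 1 →
      0 < ∑ i ∈ range (d+1), ((p i).eval (x (d+1) j)) ^ 2) :
    ∀ k l : ℕ, k < d + 1 → l < d + 1 →
      ∑ j ∈ range (d+1), lam (d+1) (1+j) *
        ((p k).eval (x (d+1) (1+j)) * (p l).eval (x (d+1) (1+j)))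
      = if k = l then 1 else 0 := by
  set m := d + 1 with hmdef
  have hmono' : ∀ j k : ℕ, 1 ≤ j → j < k → k ≤ m → x m j < x m k :=
    fun j k h1 h2 h3 => aux_mono hmono k j h1 h2 h3
  have hdist : ∀ j j' : ℕ, 1 ≤ j → j ≤ m → 1 ≤ j' → j' ≤ m → j ≠ j' →
      x m j ≠ x m j' := by
    intro j j' h1 h2 h3 h4 h5
    rcases lt_or_gt_of_ne h5 with h | h
    · exact ne_of_lt (hmono' j j' h1 h h4)
    · exact (ne_of_lt (hmono' j' j h3 h h2)).symm
  have hwnn : ∀ j : ℕ, 0 ≤ lam m j := by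
    intro j
    rw [hlam j]
    exact inv_nonneg.2 (Finset.sum_nonneg fun i _ => sq_nonneg _)
  set M : Matrix (Fin m) (Fin m) ℝ :=
    Matrix.of fun k j => Real.sqrt (lam m (1+(j:ℕ))) * (p (k:ℕ)).eval (x m (1+(j:ℕ)))
    with hMdef
  have entry_sum : ∀ (j j' : Fin m),
      (∑ k : Fin m, M k j * M k j')
        = Real.sqrt (lam m (1+(j:ℕ))) * Real.sqrt (lam m (1+(j':ℕ))) *
          ∑ k ∈ range m, (p k).eval (x m (1+(j:ℕ))) * (p k).eval (x m (1+(j':ℕ))) := by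
    intro j j'
    rw [Finset.mul_sum]
    rw [← Fin.sum_univ_eq_sum_range (fun k =>
      Real.sqrt (lam m (1+(j:ℕ))) * Real.sqrt (lam m (1+(j':ℕ))) *
        ((p k).eval (x m (1+(j:ℕ))) * (p k).eval (x m (1+(j':ℕ)))))]
    exact Finset.sum_congr rfl fun k _ => by simp [hMdef]; ring
  have col : Mᵀ * M = 1 := by
    ext j j'
    rw [Matrix.mul_apply, Matrix.one_apply]
    simp only [Matrix.transpose_apply]
    rw [entry_sum j j']
    by_cases h : j = j'
    · subst h
      rw [if_pos rfl]
      have hj1 : 1 ≤ 1 + (j:ℕ) := by omega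
      have hj2 : 1 + (j:ℕ) ≤ m := by omega
      have hpos := hS (1+(j:ℕ)) hj1 hj2
      rw [Real.mul_self_sqrt (hwnn _), hlam]
      rw [show (∑ k ∈ range m, (p k).eval (x m (1+(j:ℕ))) * (p k).eval (x m (1+(j:ℕ))))
          = ∑ i ∈ range m, ((p i).eval (x m (1+(j:ℕ))))^2 from
        Finset.sum_congr rfl fun k _ => (pow_two _).symm]
      exact inv_mul_cancel₀ (ne_of_gt hpos)
    · rw [if_neg h]
      have hcd := aux_cd hrec0 hrec d (x m (1+(j:ℕ))) (x m (1+(j':ℕ)))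
      have hr1 : (p m).eval (x m (1+(j:ℕ))) = 0 := hroot _ (by omega) (by omega)
      have hr2 : (p m).eval (x m (1+(j':ℕ))) = 0 := hroot _ (by omega) (by omega)
      have hne : x m (1+(j:ℕ)) - x m (1+(j':ℕ)) ≠ 0 := by
        have := hdist (1+(j:ℕ)) (1+(j':ℕ)) (by omega) (by omega) (by omega) (by omega)
          (by simpa [Fin.ext_iff] using fun hh => h (Fin.ext (by omega)))
        exact sub_ne_zero.2 this
      have : ∑ k ∈ range m, (p k).eval (x m (1+(j:ℕ))) * (p k).eval (x m (1+(j':ℕ))) = 0 := by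
        have := hcd
        rw [hr1, hr2] at this
        simp only [zero_mul, mul_zero, sub_zero, zero_sub, mul_neg, mul_zero, neg_zero] at this
        exact (mul_eq_zero.1 this).resolve_left hne
      rw [this, mul_zero]
  have row : M * Mᵀ = 1 := mul_eq_one_comm.2 col
  intro k l hk hl
  have := congrFun (congrFun row ⟨k, hk⟩) ⟨l, hl⟩
  rw [Matrix.mul_apply, Matrix.one_apply] at this
  have lhs_eq : (∑ x_1 : Fin m, M ⟨k, hk⟩ x_1 * Mᵀ x_1 ⟨l, hl⟩)
      = ∑ j ∈ range m, lam m (1+j) * ((p k).eval (x m (1+j)) * (p l).eval (x m (1+j))) := by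
    rw [← Fin.sum_univ_eq_sum_range (fun j =>
      lam m (1+j) * ((p k).eval (x m (1+j)) * (p l).eval (x m (1+j))))]
    refine Finset.sum_congr rfl fun j _ => ?_
    simp only [Matrix.transpose_apply, hMdef, Matrix.of_apply]
    have hss : Real.sqrt (lam m (1+(j:ℕ))) * Real.sqrt (lam m (1+(j:ℕ))) = lam m (1+(j:ℕ)) :=
      Real.mul_self_sqrt (hwnn _)
    linear_combination ((p k).eval (x m (1+(j:ℕ))) * (p l).eval (x m (1+(j:ℕ)))) * hss
  rw [lhs_eq] at this
  rw [this]
  by_cases h : k = l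
  · simp [h]
  · rw [if_neg h, if_neg (by simpa [Fin.ext_iff] using h)]

lemma aux_icc (N : ℕ) (f : ℕ → ℝ) :
    ∑ j ∈ Finset.Icc 1 N, f j = ∑ j ∈ Finset.range N, f (1+j) := by
  rw [← Finset.Ico_add_one_right_eq_Icc, Finset.sum_Ico_eq_sum_range]
  simp

theorem stmt_0
    (μ : Measure ℝ) [IsProbabilityMeasure μ]
    (lo hi : ℝ)
    (hsupp : μ (Set.Icc lo hi)ᶜ = 0)
    (hinf : ∀ s : Finset ℝ, μ (↑s : Set ℝ)ᶜ ≠ 0)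
    (p : ℕ → Polynomial ℝ)
    (hdeg : ∀ m : ℕ, (p m).degree = m)
    (hlead : ∀ m : ℕ, 0 < (p m).leadingCoeff)
    (horth : ∀ m l : ℕ, ∫ t, (p m).eval t * (p l).eval t ∂μ = if m = l then 1 else 0)
    (a b : ℕ → ℝ)
    (hapos : ∀ m : ℕ, 1 ≤ m → 0 < a m)
    (hrec0 : Polynomial.X * p 0 = Polynomial.C (a 1) * p 1 + Polynomial.C (b 0) * p 0)
    (hrec : ∀ m : ℕ, Polynomial.X * p (m + 1) =
      Polynomial.C (a (m + 2)) * p (m + 2) + Polynomial.C (b (m + 1)) * p (m + 1) +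
        Polynomial.C (a (m + 1)) * p m)
    (x : ℕ → ℕ → ℝ)
    (hxroot : ∀ m j : ℕ, 1 ≤ j → j ≤ m → (p m).eval (x m j) = 0)
    (hxmono : ∀ m j : ℕ, 1 ≤ j → j + 1 ≤ m → x m j < x m (j + 1))
    (hxint : ∀ m j : ℕ, 1 ≤ j → j + 1 ≤ m → x m j < x (m - 1) j ∧ x (m - 1) j < x m (j + 1))
    (lam : ℕ → ℕ → ℝ)
    (hlam : ∀ m j : ℕ, lam m j = (∑ i ∈ Finset.range m, ((p i).eval (x m j)) ^ 2)⁻¹)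
    (n : ℕ) (hn : 2 ≤ n)
    (A : ℕ → ℕ → ℝ)
    (hA1 : ∀ i j : ℕ, 1 ≤ i → i ≤ n - 1 → 1 ≤ j → j ≤ n →
      A i j = a n ^ 2 * lam n j * ((p (n - 1)).eval (x n j)) ^ 2 * lam (n - 1) i *
        ((p n).eval (x (n - 1) i)) ^ 2 / (x n j - x (n - 1) i) ^ 2)
    (hA2 : ∀ j : ℕ, 1 ≤ j → j ≤ n → A n j = lam n j * ((p (n - 1)).eval (x n j)) ^ 2) :
    (∀ i j : ℕ, 1 ≤ i → i ≤ n → 1 ≤ j → j ≤ n → 0 ≤ A i j) ∧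
    (∀ i : ℕ, 1 ≤ i → i ≤ n → ∑ j ∈ Finset.Icc 1 n, A i j = 1) ∧
    (∀ j : ℕ, 1 ≤ j → j ≤ n → ∑ i ∈ Finset.Icc 1 n, A i j = 1) ∧
    (∀ i : ℕ, 1 ≤ i → i ≤ n - 1 → x (n - 1) i = ∑ j ∈ Finset.Icc 1 n, A i j * x n j) ∧
    b (n - 1) = ∑ j ∈ Finset.Icc 1 n, A n j * x n j := by
  obtain ⟨m, rfl⟩ : ∃ m, n = m + 2 := ⟨n - 2, by omega⟩
  clear hn hsupp hinf horth hxint lo hi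
  simp only [show m + 2 - 1 = m + 1 from rfl] at hA1 hA2 ⊢
  -- basic facts
  have hdeg0 : (p 0).degree = 0 := by simpa using hdeg 0
  have hp0 : ∀ t : ℝ, 0 < (p 0).eval t := aux_p0 hdeg0 (hlead 0)
  have ncz := aux_ncz hdeg0 (hlead 0) hapos hrec
  have Spos : ∀ (M : ℕ) (t : ℝ), 0 < ∑ i ∈ Finset.range (M+1), ((p i).eval t)^2 := by
    intro M t
    refine Finset.sum_pos' (fun i _ => sq_nonneg _) ⟨0, Finset.mem_range.2 (by omega), ?_⟩
    exact pow_pos (hp0 t) 2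
  have D2 := aux_dorth (d := m+1) hrec0 hrec (fun j h1 h2 => hxroot (m+2) j h1 h2)
    (fun j h1 h2 => hxmono (m+2) j h1 h2) (fun j => hlam (m+2) j)
    (fun j _ _ => Spos (m+1) _)
  have D1 := aux_dorth (d := m) hrec0 hrec (fun j h1 h2 => hxroot (m+1) j h1 h2)
    (fun j h1 h2 => hxmono (m+1) j h1 h2) (fun j => hlam (m+1) j)
    (fun j _ _ => Spos m _)
  -- distinctness of x (m+2) j and x (m+1) i
  have hne : ∀ i j : ℕ, 1 ≤ i → i ≤ m+1 → 1 ≤ j → j ≤ m+2 →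
      x (m+2) j - x (m+1) i ≠ 0 := by
    intro i j h1 h2 h3 h4 h
    have he : x (m+2) j = x (m+1) i := by linarith [sub_eq_zero.1 h]
    exact ncz (m+1) (x (m+2) j) (by rw [he]; exact hxroot (m+1) i h1 h2)
      (hxroot (m+2) j h3 h4)
  -- Christoffel-Darboux at mixed points
  have keyCD : ∀ i j : ℕ, 1 ≤ i → i ≤ m+1 → 1 ≤ j → j ≤ m+2 →
      (x (m+2) j - x (m+1) i) *
        (∑ k ∈ Finset.range (m+1), (p k).eval (x (m+1) i) * (p k).eval (x (m+2) j))
      = -(a (m+2) * ((p (m+1)).eval (x (m+2) j) * (p (m+2)).eval (x (m+1) i))) := by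
    intro i j h1 h2 h3 h4
    have hcd := aux_cd hrec0 hrec (m+1) (x (m+2) j) (x (m+1) i)
    rw [Finset.sum_range_succ] at hcd
    rw [hxroot (m+1) i h1 h2, hxroot (m+2) j h3 h4] at hcd
    have flip : ∑ k ∈ Finset.range (m+1), (p k).eval (x (m+1) i) * (p k).eval (x (m+2) j)
        = ∑ k ∈ Finset.range (m+1), (p k).eval (x (m+2) j) * (p k).eval (x (m+1) i) :=
      Finset.sum_congr rfl fun k _ => mul_comm _ _
    rw [flip]
    linear_combination hcd
  -- the key reformulation of A i j for i ≤ m+1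
  have keyA : ∀ i j : ℕ, 1 ≤ i → i ≤ m+1 → 1 ≤ j → j ≤ m+2 →
      A i j = lam (m+1) i * (lam (m+2) j *
        (∑ k ∈ Finset.range (m+1), (p k).eval (x (m+1) i) * (p k).eval (x (m+2) j))^2) := by
    intro i j h1 h2 h3 h4
    rw [hA1 i j h1 h2 h3 h4]
    have hst := hne i j h1 h2 h3 h4
    rw [div_eq_iff (pow_ne_zero 2 hst)]
    have hk := keyCD i j h1 h2 h3 h4
    linear_combination (lam (m+1) i * lam (m+2) j *
      (a (m+2) * ((p (m+1)).eval (x (m+2) j) * (p (m+2)).eval (x (m+1) i))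
       - (x (m+2) j - x (m+1) i) *
        (∑ k ∈ Finset.range (m+1), (p k).eval (x (m+1) i) * (p k).eval (x (m+2) j)))) * hk
  have lampos : ∀ (M : ℕ) (j : ℕ), lam (M+1) j * (∑ i ∈ Finset.range (M+1), ((p i).eval (x (M+1) j))^2) = 1 := by
    intro M j
    rw [hlam (M+1) j]
    exact inv_mul_cancel₀ (ne_of_gt (Spos M _))
  refine ⟨?_, ?_, ?_, ?_, ?_⟩
  -- (1) nonnegativity
  · intro i j h1 h2 h3 h4
    have l1 : 0 ≤ lam (m+2) j := by
      rw [hlam]; exact inv_nonneg.2 (Finset.sum_nonneg fun i _ => sq_nonneg _)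
    by_cases hi : i ≤ m + 1
    · rw [hA1 i j h1 hi h3 h4]
      refine div_nonneg ?_ (sq_nonneg _)
      have l2 : 0 ≤ lam (m+1) i := by
        rw [hlam]; exact inv_nonneg.2 (Finset.sum_nonneg fun i _ => sq_nonneg _)
      exact mul_nonneg (mul_nonneg (mul_nonneg (mul_nonneg (sq_nonneg _) l1) (sq_nonneg _)) l2)
        (sq_nonneg _)
    · have : i = m + 2 := by omega
      subst this
      rw [hA2 j h3 h4]
      exact mul_nonneg l1 (sq_nonneg _)
  -- (2) row sums
  · intro i h1 h2
    rw [aux_icc]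
    by_cases hi : i ≤ m + 1
    · have e : ∀ j ∈ Finset.range (m+2), A i (1+j)
          = lam (m+1) i * (lam (m+2) (1+j) *
            (∑ k ∈ Finset.range (m+1), (p k).eval (x (m+1) i) * (p k).eval (x (m+2) (1+j)))^2) :=
        fun j hj => keyA i (1+j) h1 hi (by omega) (by have := Finset.mem_range.1 hj; omega)
      rw [Finset.sum_congr rfl e, ← Finset.mul_sum]
      rw [aux_sumG (by omega : m+1 ≤ m+2) (fun j => lam (m+2) (1+j))
        (fun k j => (p k).eval (x (m+2) (1+j))) D2 (fun k => (p k).eval (x (m+1) i))]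
      exact lampos m i
    · have hieq : i = m + 2 := by omega
      subst hieq
      have e : ∀ j ∈ Finset.range (m+2), A (m+2) (1+j)
          = lam (m+2) (1+j) *
            ((p (m+1)).eval (x (m+2) (1+j)) * (p (m+1)).eval (x (m+2) (1+j))) := by
        intro j hj
        have := Finset.mem_range.1 hj
        rw [hA2 (1+j) (by omega) (by omega), ← pow_two]
      rw [Finset.sum_congr rfl e, D2 (m+1) (m+1) (by omega) (by omega), if_pos rfl]
  -- (3) column sums
  · intro j h1 h2
    rw [aux_icc]
    rw [Finset.sum_range_succ]
    simp only [show 1 + (m+1) = m + 2 from by omega]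
    have e : ∀ i ∈ Finset.range (m+1), A (1+i) j
        = lam (m+2) j * (lam (m+1) (1+i) *
          (∑ k ∈ Finset.range (m+1), (p k).eval (x (m+2) j) * (p k).eval (x (m+1) (1+i)))^2) := by
      intro i hi0
      have hi0' := Finset.mem_range.1 hi0
      have flip : ∑ k ∈ Finset.range (m+1), (p k).eval (x (m+2) j) * (p k).eval (x (m+1) (1+i))
          = ∑ k ∈ Finset.range (m+1), (p k).eval (x (m+1) (1+i)) * (p k).eval (x (m+2) j) :=
        Finset.sum_congr rfl fun k _ => mul_comm _ _
      rw [flip, keyA (1+i) j (by omega) (by omega) h1 h2]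
      ring
    rw [Finset.sum_congr rfl e, ← Finset.mul_sum]
    rw [aux_sumG (le_refl (m+1)) (fun i => lam (m+1) (1+i))
      (fun k i => (p k).eval (x (m+1) (1+i))) D1 (fun k => (p k).eval (x (m+2) j))]
    rw [hA2 j h1 h2]
    rw [← mul_add]
    rw [← Finset.sum_range_succ (fun k => ((p k).eval (x (m+2) j))^2) (m+1)]
    exact lampos (m+1) j
  -- (4) moment identity for rows 1..m+1
  · intro i h1 h2
    rw [aux_icc]
    have e : ∀ j ∈ Finset.range (m+2), A i (1+j) * x (m+2) (1+j)
        = lam (m+1) i * ((lam (m+2) (1+j) * x (m+2) (1+j)) *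
          (∑ k ∈ Finset.range (m+1), (p k).eval (x (m+1) i) * (p k).eval (x (m+2) (1+j)))^2) := by
      intro j hj
      have := Finset.mem_range.1 hj
      rw [keyA i (1+j) h1 h2 (by omega) (by omega)]
      ring
    rw [Finset.sum_congr rfl e, ← Finset.mul_sum]
    rw [aux_sumGy (by omega : m+1 < m+2) (fun j => lam (m+2) (1+j)) (fun j => x (m+2) (1+j))
      (fun k j => (p k).eval (x (m+2) (1+j))) D2
      (fun k => a (k+1)) (fun k => b k) (fun k => if k = 0 then 0 else a k)
      ?hu (fun k => (p k).eval (x (m+1) i)) (x (m+1) i)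
      (hxroot (m+1) i h1 h2) ?hc]
    case hu =>
      intro k hk j
      match k with
      | 0 =>
        rw [if_pos rfl]
        have h0 := aux_rec0 hrec0 (x (m+2) (1+j))
        linear_combination h0
      | Nat.succ k' =>
        rw [if_neg (Nat.succ_ne_zero k')]
        exact aux_rec hrec k' (x (m+2) (1+j))
    case hc =>
      intro k hk
      match k with
      | 0 =>
        rw [if_pos rfl]
        have h0 := aux_rec0 hrec0 (x (m+1) i)
        linear_combination h0
      | Nat.succ k' =>
        rw [if_neg (Nat.succ_ne_zero k')]
        exact aux_rec hrec k' (x (m+1) i)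
    have hl := lampos m i
    linear_combination (x (m+1) i) * hl.symm
  -- (5) the b identity
  · rw [aux_icc]
    have e : ∀ j ∈ Finset.range (m+2), A (m+2) (1+j) * x (m+2) (1+j)
        = b (m+1) * (lam (m+2) (1+j) *
            ((p (m+1)).eval (x (m+2) (1+j)) * (p (m+1)).eval (x (m+2) (1+j))))
          + a (m+1) * (lam (m+2) (1+j) *
            ((p m).eval (x (m+2) (1+j)) * (p (m+1)).eval (x (m+2) (1+j)))) := by
      intro j hj
      have hj' := Finset.mem_range.1 hj
      rw [hA2 (1+j) (by omega) (by omega)]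
      have hr := aux_rec hrec m (x (m+2) (1+j))
      rw [hxroot (m+2) (1+j) (by omega) (by omega)] at hr
      linear_combination (lam (m+2) (1+j) * (p (m+1)).eval (x (m+2) (1+j))) * hr
    rw [Finset.sum_congr rfl e, Finset.sum_add_distrib, ← Finset.mul_sum, ← Finset.mul_sum]
    rw [D2 (m+1) (m+1) (by omega) (by omega), D2 m (m+1) (by omega) (by omega)]
    simp
end

section
/- Fix an integer n ≥ 2 and let f : ℝ → ℝ be convex on the interval [a,b]. Then Σ_{i=1}^{n-1} f(x_{i,n-1}) + f(b_{n-1}) ≤ Σ_{j=1}^{n} f(x_{j,n}). (Here all the zeros x_{i,n-1}, x_{j,n} lie in (a,b) and b_{n-1} lies in [a,b].) -/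
open MeasureTheory Polynomial Finset

/-! Auxiliary lemmas -/

noncomputable def lslope (f : ℝ → ℝ) (lo : ℝ) (t : ℝ) : ℝ :=
  sSup ((fun w => (f t - f w) / (t - w)) '' Set.Ico lo t)

lemma lslope_bdd {lo hi : ℝ} {f : ℝ → ℝ} (hf : ConvexOn ℝ (Set.Icc lo hi) f)
    {t : ℝ} (ht : t ∈ Set.Ioo lo hi) :
    BddAbove ((fun w => (f t - f w) / (t - w)) '' Set.Ico lo t) := by
  refine ⟨(f hi - f t) / (hi - t), ?_⟩
  rintro s ⟨w, hw, rfl⟩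
  exact hf.slope_mono_adjacent ⟨hw.1, (hw.2.trans ht.2).le⟩
    (Set.right_mem_Icc.2 ((ht.1.trans ht.2).le)) hw.2 ht.2

lemma lslope_le_slope {lo hi : ℝ} {f : ℝ → ℝ} (hf : ConvexOn ℝ (Set.Icc lo hi) f)
    {t q : ℝ} (ht : t ∈ Set.Ioo lo hi) (hq : q ∈ Set.Icc lo hi) (htq : t < q) :
    lslope f lo t ≤ (f q - f t) / (q - t) := by
  refine csSup_le ⟨_, ⟨lo, ⟨le_refl _, ht.1⟩, rfl⟩⟩ ?_
  rintro s ⟨w, hw, rfl⟩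
  exact hf.slope_mono_adjacent ⟨hw.1, (hw.2.trans ht.2).le⟩ hq hw.2 htq

lemma slope_le_lslope {lo hi : ℝ} {f : ℝ → ℝ} (hf : ConvexOn ℝ (Set.Icc lo hi) f)
    {t w : ℝ} (ht : t ∈ Set.Ioo lo hi) (hw : w ∈ Set.Ico lo t) :
    (f t - f w) / (t - w) ≤ lslope f lo t :=
  le_csSup (lslope_bdd hf ht) ⟨w, hw, rfl⟩

lemma lslope_mono {lo hi : ℝ} {f : ℝ → ℝ} (hf : ConvexOn ℝ (Set.Icc lo hi) f)
    {s t : ℝ} (hs : s ∈ Set.Ioo lo hi) (ht : t ∈ Set.Ioo lo hi) (hst : s ≤ t) :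
    lslope f lo s ≤ lslope f lo t := by
  refine csSup_le ⟨_, ⟨lo, ⟨le_refl _, hs.1⟩, rfl⟩⟩ ?_
  rintro z ⟨w, hw, rfl⟩
  have h1 : (f s - f w) / (s - w) ≤ (f t - f w) / (t - w) := by
    rcases eq_or_lt_of_le hst with rfl | hst'
    · exact le_refl _
    · exact hf.secant_mono_aux2 ⟨hw.1, (hw.2.trans hs.2).le⟩
        ⟨(ht.1).le, ht.2.le⟩ hw.2 hst'
  exact le_trans h1 (slope_le_lslope hf ht ⟨hw.1, lt_of_lt_of_le hw.2 hst⟩)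

lemma lslope_subgrad {lo hi : ℝ} {f : ℝ → ℝ} (hf : ConvexOn ℝ (Set.Icc lo hi) f)
    {t z : ℝ} (ht : t ∈ Set.Ioo lo hi) (hz : z ∈ Set.Ioo lo hi) :
    f t + lslope f lo t * (z - t) ≤ f z := by
  rcases lt_trichotomy z t with h | rfl | h
  · have h1 := slope_le_lslope hf ht ⟨hz.1.le, h⟩
    rw [div_le_iff₀ (by linarith)] at h1
    nlinarith
  · simp
  · have h1 := lslope_le_slope hf ht ⟨hz.1.le, hz.2.le⟩ h
    rw [le_div_iff₀ (by linarith)] at h1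
    nlinarith

lemma abel_nonneg (G d : ℕ → ℝ) (n : ℕ)
    (hG : ∀ i, i + 1 < n → G i ≤ G (i + 1))
    (hQ : ∀ k, k < n → ∑ j ∈ Finset.range (k + 1), d j ≤ 0)
    (hT : ∑ j ∈ Finset.range n, d j = 0) :
    0 ≤ ∑ j ∈ Finset.range n, G j * d j := by
  have key := Finset.sum_range_by_parts G d n
  simp only [smul_eq_mul, hT, mul_zero, zero_sub] at key
  rw [key, neg_nonneg]
  apply Finset.sum_nonpos
  intro i hi
  rw [Finset.mem_range] at hi
  have h1 : i + 1 < n := by omega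
  exact mul_nonpos_of_nonneg_of_nonpos (by linarith [hG i h1]) (hQ i (by omega))

lemma karamata {lo hi : ℝ} {f : ℝ → ℝ} (hf : ConvexOn ℝ (Set.Icc lo hi) f)
    (n : ℕ) (u v : ℕ → ℝ)
    (hu : ∀ i, i < n → u i ∈ Set.Ioo lo hi) (hv : ∀ i, i < n → v i ∈ Set.Ioo lo hi)
    (humono : ∀ i, i + 1 < n → u i ≤ u (i + 1))
    (hQ : ∀ k, k < n → ∑ j ∈ Finset.range (k + 1), (v j - u j) ≤ 0)
    (hT : ∑ j ∈ Finset.range n, (v j - u j) = 0) :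
    ∑ j ∈ Finset.range n, f (u j) ≤ ∑ j ∈ Finset.range n, f (v j) := by
  set G : ℕ → ℝ := fun j => lslope f lo (u j) with hGdef
  have habel : 0 ≤ ∑ j ∈ Finset.range n, G j * (v j - u j) :=
    abel_nonneg _ _ n
      (fun i hi => lslope_mono hf (hu i (by omega)) (hu (i + 1) hi) (humono i hi)) hQ hT
  have hsub : ∀ j ∈ Finset.range n, f (u j) + G j * (v j - u j) ≤ f (v j) := by
    intro j hj
    rw [Finset.mem_range] at hj
    exact lslope_subgrad hf (hu j hj) (hv j hj)
  have h2 := Finset.sum_le_sum hsub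
  rw [Finset.sum_add_distrib] at h2
  linarith

lemma strict_mono_of_adj (r : ℕ → ℝ) (M : ℕ)
    (h : ∀ j, 1 ≤ j → j + 1 ≤ M → r j < r (j + 1)) :
    ∀ i j, 1 ≤ i → i < j → j ≤ M → r i < r j := by
  intro i j h1 hij hjM
  induction j with
  | zero => omega
  | succ jj ih =>
    rcases Nat.lt_or_ge i jj with hlt | hge
    · exact lt_trans (ih (by omega) (by omega)) (h jj (by omega) (by omega))
    · have : i = jj := by omega
      subst this
      exact h i h1 hjM

lemma sum_roots_formula (q : Polynomial ℝ) (M : ℕ) (hM : 1 ≤ M) (hdeg : q.degree = M)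
    (r : ℕ → ℝ) (hroot : ∀ j, 1 ≤ j → j ≤ M → q.eval (r j) = 0)
    (hmono : ∀ i j, 1 ≤ i → i < j → j ≤ M → r i < r j) :
    q.leadingCoeff * ∑ j ∈ Finset.Icc 1 M, r j = -(q.coeff (M - 1)) := by
  have hq0 : q ≠ 0 := fun h => by simp [h] at hdeg
  have hnat : q.natDegree = M := natDegree_eq_of_degree_eq_some hdeg
  have hlc : q.leadingCoeff ≠ 0 := leadingCoeff_ne_zero.mpr hq0
  have hinj : Set.InjOn r (Finset.Icc 1 M : Set ℕ) := by
    intro i hi j hj hij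
    simp only [Finset.coe_Icc, Set.mem_Icc] at hi hj
    by_contra hne
    rcases Nat.lt_or_ge i j with h | h
    · exact absurd hij (ne_of_lt (hmono i j hi.1 h hj.2))
    · have : j < i := by omega
      exact absurd hij.symm (ne_of_lt (hmono j i hj.1 this hi.2))
  set S : Finset ℝ := (Finset.Icc 1 M).image r with hS
  have hScard : S.card = M := by
    rw [hS, Finset.card_image_of_injOn hinj, Nat.card_Icc]; omega
  have hSsub : S ⊆ q.roots.toFinset := by
    intro z hz
    rw [hS, Finset.mem_image] at hz
    obtain ⟨j, hj, rfl⟩ := hz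
    rw [Finset.mem_Icc] at hj
    rw [Multiset.mem_toFinset, mem_roots hq0]
    exact hroot j hj.1 hj.2
  have hle1 : q.roots.toFinset.card ≤ Multiset.card q.roots := q.roots.toFinset_card_le
  have hle2 : Multiset.card q.roots ≤ M := hnat ▸ q.card_roots'
  have hcard : Multiset.card q.roots = M := by
    have := Finset.card_le_card hSsub
    omega
  have htf : q.roots.toFinset = S := by
    symm
    apply Finset.eq_of_subset_of_card_le hSsub
    rw [hScard]
    have := Finset.card_le_card hSsub
    omega
  have hnodup : q.roots.Nodup := by
    rw [← Multiset.toFinset_card_eq_card_iff_nodup, htf, hScard, hcard]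
  have hsum : q.roots.sum = ∑ j ∈ Finset.Icc 1 M, r j := by
    have h1 : S.val = q.roots := by
      rw [← htf]
      rw [Multiset.toFinset_val]
      exact Multiset.dedup_eq_self.mpr hnodup
    rw [← h1]
    have h2 : S.val.sum = ∑ z ∈ S, z := by
      rw [Finset.sum]
      simp
    rw [h2, hS, Finset.sum_image (fun i hi j hj h => hinj hi hj h)]
  set qm : Polynomial ℝ := q * Polynomial.C (q.leadingCoeff)⁻¹ with hqm
  have hmonic : qm.Monic := monic_mul_leadingCoeff_inv hq0
  have hroots_qm : qm.roots = q.roots := by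
    rw [hqm, mul_comm, roots_C_mul _ (inv_ne_zero hlc)]
  have hnd : qm.natDegree = M := by
    rw [hqm, natDegree_mul_C (inv_ne_zero hlc), hnat]
  have hsplit : qm.Splits := by
    rw [splits_iff_card_roots, hroots_qm, hnd, hcard]
  have hkey := hsplit.nextCoeff_eq_neg_sum_roots_of_monic hmonic
  rw [hroots_qm, hsum] at hkey
  have hnext : qm.nextCoeff = q.coeff (M - 1) * (q.leadingCoeff)⁻¹ := by
    rw [nextCoeff_of_natDegree_pos (by omega), hnd, hqm, coeff_mul_C]
  rw [hnext] at hkey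
  field_simp at hkey
  linarith

lemma merge_exists (K : ℕ) (y : ℕ → ℝ) (c : ℝ)
    (hymono : ∀ i j, 1 ≤ i → i < j → j ≤ K → y i < y j) :
    ∃ m : ℕ, ∃ u : ℕ → ℝ, m ≤ K ∧
      (∀ j, 1 ≤ j → j ≤ m → u j = y j) ∧ u (m + 1) = c ∧
      (∀ j, m + 2 ≤ j → j ≤ K + 1 → u j = y (j - 1)) ∧
      (∀ j, 1 ≤ j → j + 1 ≤ K + 1 → u j ≤ u (j + 1)) := by
  classical
  set s := (Finset.Icc 1 K).filter (fun i => y i < c) with hs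
  set m := s.card with hm
  have hyweak : ∀ i j, 1 ≤ i → i ≤ j → j ≤ K → y i ≤ y j := by
    intro i j h1 hij hj
    rcases eq_or_lt_of_le hij with rfl | h
    · exact le_refl _
    · exact (hymono i j h1 h hj).le
  have hmK : m ≤ K := by
    have := Finset.card_le_card (Finset.filter_subset (fun i => y i < c) (Finset.Icc 1 K))
    simpa [Nat.card_Icc] using this
  have hii : ∀ i, 1 ≤ i → i ≤ K → m < i → c ≤ y i := by
    intro i h1 hK hmi
    by_contra hcon
    push_neg at hcon
    have hsub : Finset.Icc 1 i ⊆ s := by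
      intro j hj
      rw [Finset.mem_Icc] at hj
      rw [hs, Finset.mem_filter, Finset.mem_Icc]
      exact ⟨⟨hj.1, le_trans hj.2 hK⟩, lt_of_le_of_lt (hyweak j i hj.1 hj.2 hK) hcon⟩
    have := Finset.card_le_card hsub
    rw [Nat.card_Icc] at this
    omega
  have hi : ∀ i, 1 ≤ i → i ≤ m → y i < c := by
    intro i h1 him
    by_contra hcon
    push_neg at hcon
    have hsub : s ⊆ Finset.Ico 1 i := by
      intro j hj
      rw [hs, Finset.mem_filter, Finset.mem_Icc] at hj
      rw [Finset.mem_Ico]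
      refine ⟨hj.1.1, ?_⟩
      by_contra hji
      push_neg at hji
      exact absurd (lt_of_le_of_lt (hcon.trans (hyweak i j h1 hji hj.1.2)) hj.2)
        (lt_irrefl _)
    have := Finset.card_le_card hsub
    rw [Nat.card_Ico] at this
    omega
  refine ⟨m, fun j => if j ≤ m then y j else if j = m + 1 then c else y (j - 1),
    hmK, ?_, ?_, ?_, ?_⟩
  · intro j h1 hjm; simp [hjm]
  · simp
  · intro j hj1 hj2
    have h1 : ¬ (j ≤ m) := by omega
    have h2 : j ≠ m + 1 := by omega
    simp [h1, h2]
  · intro j h1 hj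
    by_cases c1 : j + 1 ≤ m
    · simp only [if_pos (show j ≤ m by omega), if_pos c1]
      exact (hymono j (j + 1) h1 (by omega) (by omega)).le
    by_cases c2 : j = m
    · simp only [if_pos (le_of_eq c2), if_neg (show ¬ j + 1 ≤ m by omega),
        if_pos (show j + 1 = m + 1 by omega)]
      exact (hi j h1 (le_of_eq c2)).le
    by_cases c3 : j = m + 1
    · simp only [if_neg (show ¬ j ≤ m by omega), if_pos c3,
        if_neg (show ¬ j + 1 ≤ m by omega), if_neg (show j + 1 ≠ m + 1 by omega),
        Nat.add_sub_cancel]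
      exact hii j (by omega) (by omega) (by omega)
    · simp only [if_neg (show ¬ j ≤ m by omega), if_neg (show j ≠ m + 1 by omega),
        if_neg (show ¬ j + 1 ≤ m by omega), if_neg (show j + 1 ≠ m + 1 by omega),
        Nat.add_sub_cancel]
      exact (hymono (j - 1) j (by omega) (by omega) (by omega)).le

lemma Icc1_eq (t : ℕ) : Finset.Icc 1 t = Finset.Ioc 0 t := by
  ext z
  simp only [Finset.mem_Icc, Finset.mem_Ioc]
  omega

lemma sum_shift (F : ℕ → ℝ) (a b : ℕ) :
    ∑ j ∈ Finset.Ioc (a + 1) (b + 1), F j = ∑ i ∈ Finset.Ioc a b, F (i + 1) := by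
  rw [← Finset.map_add_right_Ioc a b 1, Finset.sum_map]
  rfl

lemma range_to_Ioc (F : ℕ → ℝ) (N : ℕ) :
    ∑ j ∈ Finset.range N, F (j + 1) = ∑ j ∈ Finset.Ioc 0 N, F j := by
  induction N with
  | zero => simp
  | succ n ih =>
    rw [Finset.sum_range_succ, ih, Finset.sum_Ioc_succ_top (by omega)]

theorem stmt_1
    (μ : Measure ℝ) [IsProbabilityMeasure μ]
    (lo hi : ℝ)
    (hsupp : μ (Set.Icc lo hi)ᶜ = 0)
    (hinf : ∀ s : Finset ℝ, μ (↑s : Set ℝ)ᶜ ≠ 0)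
    (p : ℕ → Polynomial ℝ)
    (hdeg : ∀ m : ℕ, (p m).degree = m)
    (hlead : ∀ m : ℕ, 0 < (p m).leadingCoeff)
    (horth : ∀ m l : ℕ, ∫ t, (p m).eval t * (p l).eval t ∂μ = if m = l then 1 else 0)
    (a b : ℕ → ℝ)
    (hapos : ∀ m : ℕ, 1 ≤ m → 0 < a m)
    (hrec0 : Polynomial.X * p 0 = Polynomial.C (a 1) * p 1 + Polynomial.C (b 0) * p 0)
    (hrec : ∀ m : ℕ, Polynomial.X * p (m + 1) =
      Polynomial.C (a (m + 2)) * p (m + 2) + Polynomial.C (b (m + 1)) * p (m + 1) +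
        Polynomial.C (a (m + 1)) * p m)
    (x : ℕ → ℕ → ℝ)
    (hxroot : ∀ m j : ℕ, 1 ≤ j → j ≤ m → (p m).eval (x m j) = 0)
    (hxmono : ∀ m j : ℕ, 1 ≤ j → j + 1 ≤ m → x m j < x m (j + 1))
    (hxint : ∀ m j : ℕ, 1 ≤ j → j + 1 ≤ m → x m j < x (m - 1) j ∧ x (m - 1) j < x m (j + 1))
    (n : ℕ) (hn : 2 ≤ n)
    (f : ℝ → ℝ) (hf : ConvexOn ℝ (Set.Icc lo hi) f)
    (hx_in : ∀ j : ℕ, 1 ≤ j → j ≤ n → x n j ∈ Set.Ioo lo hi)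
    (hx_in' : ∀ i : ℕ, 1 ≤ i → i ≤ n - 1 → x (n - 1) i ∈ Set.Ioo lo hi)
    (hb_in : b (n - 1) ∈ Set.Icc lo hi) :
    (∑ i ∈ Finset.Icc 1 (n - 1), f (x (n - 1) i)) + f (b (n - 1)) ≤
      ∑ j ∈ Finset.Icc 1 n, f (x n j) := by
  clear hsupp hinf horth hrec0 hb_in
  obtain ⟨k, rfl⟩ : ∃ k, n = k + 2 := ⟨n - 2, by omega⟩
  have hred : k + 2 - 1 = k + 1 := rfl
  simp only [hred] at hx_in' ⊢
  -- basic degree facts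
  have hnat : ∀ m : ℕ, (p m).natDegree = m := fun m => natDegree_eq_of_degree_eq_some (hdeg m)
  have hz : ∀ m j : ℕ, m < j → (p m).coeff j = 0 := by
    intro m j h
    apply coeff_eq_zero_of_degree_lt
    rw [hdeg]
    exact_mod_cast h
  have hlcc : ∀ m : ℕ, (p m).coeff m = (p m).leadingCoeff := by
    intro m
    rw [Polynomial.leadingCoeff, hnat m]
  -- strict monotonicity of zeros
  have hXmono := strict_mono_of_adj (x (k + 2)) (k + 2) (fun j hj1 hj2 => hxmono (k + 2) j hj1 hj2)
  have hymono := strict_mono_of_adj (x (k + 1)) (k + 1) (fun j hj1 hj2 => hxmono (k + 1) j hj1 hj2)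
  -- sums of roots
  have hXsum := sum_roots_formula (p (k + 2)) (k + 2) (by omega) (hdeg (k + 2)) (x (k + 2))
    (fun j hj1 hj2 => hxroot (k + 2) j hj1 hj2) hXmono
  have hysum := sum_roots_formula (p (k + 1)) (k + 1) (by omega) (hdeg (k + 1)) (x (k + 1))
    (fun j hj1 hj2 => hxroot (k + 1) j hj1 hj2) hymono
  rw [show k + 2 - 1 = k + 1 from rfl] at hXsum
  rw [show k + 1 - 1 = k from rfl] at hysum
  rw [Icc1_eq] at hXsum hysum
  set Sx := ∑ j ∈ Finset.Ioc 0 (k + 2), x (k + 2) j with hSxdef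
  set Sy := ∑ i ∈ Finset.Ioc 0 (k + 1), x (k + 1) i with hSydef
  -- coefficient identities from the recurrence
  have e1 : (p (k + 1)).coeff (k + 1) = a (k + 2) * (p (k + 2)).coeff (k + 2)
      + b (k + 1) * (p (k + 1)).coeff (k + 2) + a (k + 1) * (p k).coeff (k + 2) := by
    have h := congrArg (fun q => Polynomial.coeff q (k + 1 + 1)) (hrec k)
    simp only [Polynomial.coeff_add, Polynomial.coeff_C_mul, Polynomial.coeff_X_mul] at h
    exact h
  have e2 : (p (k + 1)).coeff k = a (k + 2) * (p (k + 2)).coeff (k + 1)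
      + b (k + 1) * (p (k + 1)).coeff (k + 1) + a (k + 1) * (p k).coeff (k + 1) := by
    have h := congrArg (fun q => Polynomial.coeff q (k + 1)) (hrec k)
    simp only [Polynomial.coeff_add, Polynomial.coeff_C_mul, Polynomial.coeff_X_mul] at h
    exact h
  rw [hz (k + 1) (k + 2) (by omega), hz k (k + 2) (by omega), mul_zero, mul_zero,
    add_zero, add_zero, hlcc, hlcc] at e1
  rw [hz k (k + 1) (by omega), mul_zero, add_zero, hlcc] at e2
  -- e1 : lc (p (k+1)) = a (k+2) * lc (p (k+2))
  -- e2 : coeff (p (k+1)) k = a (k+2) * coeff (p (k+2)) (k+1) + b (k+1) * lc (p (k+1))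
  have hg1 : 0 < (p (k + 1)).leadingCoeff := hlead (k + 1)
  have hg2 : 0 < (p (k + 2)).leadingCoeff := hlead (k + 2)
  have hA : 0 < a (k + 2) := hapos (k + 2) (by omega)
  -- the trace identity
  have htrace : Sx = Sy + b (k + 1) := by
    have h5 : (p (k + 1)).leadingCoeff * (Sy - Sx + b (k + 1)) = 0 := by
      linear_combination hysum - a (k + 2) * hXsum - e2 - Sx * e1
    rcases mul_eq_zero.mp h5 with h | h
    · linarith
    · linarith
  -- interlacing
  have hint : ∀ i, 1 ≤ i → i ≤ k + 1 →
      x (k + 2) i < x (k + 1) i ∧ x (k + 1) i < x (k + 2) (i + 1) := by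
    intro i h1 h2
    exact hxint (k + 2) i h1 (by omega)
  -- bounds for c := b (k+1)
  have hc1 : x (k + 2) 1 < b (k + 1) := by
    have hsplit : (∑ j ∈ Finset.Ioc 0 1, x (k + 2) j) + ∑ j ∈ Finset.Ioc 1 (k + 2), x (k + 2) j
        = Sx := Finset.sum_Ioc_consecutive _ (by omega) (by omega)
    have hone : ∑ j ∈ Finset.Ioc 0 1, x (k + 2) j = x (k + 2) 1 := by
      rw [show (1 : ℕ) = 0 + 1 from rfl, Nat.Ioc_succ_singleton, Finset.sum_singleton]
    have hshift : ∑ j ∈ Finset.Ioc (0 + 1) (k + 1 + 1), x (k + 2) j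
        = ∑ i ∈ Finset.Ioc 0 (k + 1), x (k + 2) (i + 1) := sum_shift _ _ _
    have hlt : ∑ i ∈ Finset.Ioc 0 (k + 1), x (k + 1) i
        < ∑ i ∈ Finset.Ioc 0 (k + 1), x (k + 2) (i + 1) := by
      apply Finset.sum_lt_sum_of_nonempty ⟨1, by simp⟩
      intro i hi
      rw [Finset.mem_Ioc] at hi
      exact (hint i (by omega) hi.2).2
    simp only [show (0 : ℕ) + 1 = 1 from rfl] at hshift
    rw [hone, hshift] at hsplit
    have : Sy < Sx - x (k + 2) 1 := by linarith
    linarith [htrace]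
  have hc2 : b (k + 1) < x (k + 2) (k + 2) := by
    have hsplit : (∑ j ∈ Finset.Ioc 0 (k + 1), x (k + 2) j)
        + ∑ j ∈ Finset.Ioc (k + 1) (k + 2), x (k + 2) j = Sx :=
      Finset.sum_Ioc_consecutive _ (by omega) (by omega)
    have hone : ∑ j ∈ Finset.Ioc (k + 1) (k + 2), x (k + 2) j = x (k + 2) (k + 2) := by
      rw [show k + 2 = (k + 1) + 1 from rfl, Nat.Ioc_succ_singleton, Finset.sum_singleton]
    have hlt : ∑ i ∈ Finset.Ioc 0 (k + 1), x (k + 2) i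
        < ∑ i ∈ Finset.Ioc 0 (k + 1), x (k + 1) i := by
      apply Finset.sum_lt_sum_of_nonempty ⟨1, by simp⟩
      intro i hi
      rw [Finset.mem_Ioc] at hi
      exact (hint i (by omega) hi.2).1
    rw [hone] at hsplit
    have : Sx - x (k + 2) (k + 2) < Sy := by linarith
    linarith [htrace]
  have hcIoo : b (k + 1) ∈ Set.Ioo lo hi :=
    ⟨lt_trans (hx_in 1 (by omega) (by omega)).1 hc1,
     lt_trans hc2 (hx_in (k + 2) (by omega) (by omega)).2⟩
  -- merge
  obtain ⟨m, u, hmK, hua, hub, huc, humono⟩ :=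
    merge_exists (k + 1) (x (k + 1)) (b (k + 1)) hymono
  have hmem : ∀ j, 1 ≤ j → j ≤ k + 2 → u j ∈ Set.Ioo lo hi := by
    intro j h1 h2
    by_cases hj : j ≤ m
    · rw [hua j h1 hj]
      exact hx_in' j h1 (by omega)
    by_cases hj' : j = m + 1
    · rw [hj', hub]
      exact hcIoo
    · rw [huc j (by omega) h2]
      exact hx_in' (j - 1) (by omega) (by omega)
  -- the key sum decomposition
  have husum : ∀ F : ℝ → ℝ, ∑ j ∈ Finset.Ioc 0 (k + 2), F (u j)
      = (∑ i ∈ Finset.Ioc 0 (k + 1), F (x (k + 1) i)) + F (b (k + 1)) := by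
    intro F
    have split1 : (∑ j ∈ Finset.Ioc 0 m, F (u j)) + ∑ j ∈ Finset.Ioc m (k + 2), F (u j)
        = ∑ j ∈ Finset.Ioc 0 (k + 2), F (u j) :=
      Finset.sum_Ioc_consecutive _ (by omega) (by omega)
    have split2 : (∑ j ∈ Finset.Ioc m (m + 1), F (u j))
        + ∑ j ∈ Finset.Ioc (m + 1) (k + 2), F (u j)
        = ∑ j ∈ Finset.Ioc m (k + 2), F (u j) :=
      Finset.sum_Ioc_consecutive _ (by omega) (by omega)
    have s1 : ∑ j ∈ Finset.Ioc 0 m, F (u j) = ∑ j ∈ Finset.Ioc 0 m, F (x (k + 1) j) := by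
      apply Finset.sum_congr rfl
      intro j hj
      rw [Finset.mem_Ioc] at hj
      rw [hua j hj.1 hj.2]
    have s2 : ∑ j ∈ Finset.Ioc m (m + 1), F (u j) = F (b (k + 1)) := by
      rw [Nat.Ioc_succ_singleton, Finset.sum_singleton, hub]
    have s3 : ∑ j ∈ Finset.Ioc (m + 1) (k + 2), F (u j)
        = ∑ i ∈ Finset.Ioc m (k + 1), F (x (k + 1) i) := by
      rw [show k + 2 = (k + 1) + 1 from rfl, sum_shift]
      apply Finset.sum_congr rfl
      intro i hi
      rw [Finset.mem_Ioc] at hi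
      rw [huc (i + 1) (by omega) (by omega)]
      simp
    have split3 : (∑ i ∈ Finset.Ioc 0 m, F (x (k + 1) i))
        + ∑ i ∈ Finset.Ioc m (k + 1), F (x (k + 1) i)
        = ∑ i ∈ Finset.Ioc 0 (k + 1), F (x (k + 1) i) :=
      Finset.sum_Ioc_consecutive _ (by omega) (by omega)
    linarith
  have htotu : ∑ j ∈ Finset.Ioc 0 (k + 2), u j = Sx := by
    have := husum (fun z => z)
    rw [this, ← htrace]
  -- prefix sums
  have hpre : ∀ K, K ≤ k + 2 →
      ∑ j ∈ Finset.Ioc 0 K, x (k + 2) j ≤ ∑ j ∈ Finset.Ioc 0 K, u j := by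
    intro K hK
    by_cases hc : K ≤ m
    · apply Finset.sum_le_sum
      intro j hj
      rw [Finset.mem_Ioc] at hj
      rw [hua j hj.1 (le_trans hj.2 hc)]
      exact (hint j hj.1 (by omega)).1.le
    · push_neg at hc
      obtain ⟨K', rfl⟩ : ∃ K', K = K' + 1 := ⟨K - 1, by omega⟩
      have t1 : (∑ j ∈ Finset.Ioc 0 (K' + 1), u j)
          + ∑ j ∈ Finset.Ioc (K' + 1) (k + 2), u j = Sx := by
        rw [← htotu]
        exact Finset.sum_Ioc_consecutive _ (by omega) (by omega)
      have t2 : (∑ j ∈ Finset.Ioc 0 (K' + 1), x (k + 2) j)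
          + ∑ j ∈ Finset.Ioc (K' + 1) (k + 2), x (k + 2) j = Sx :=
        Finset.sum_Ioc_consecutive _ (by omega) (by omega)
      have t4 : ∑ j ∈ Finset.Ioc (K' + 1) (k + 2), u j
          = ∑ i ∈ Finset.Ioc K' (k + 1), x (k + 1) i := by
        rw [show k + 2 = (k + 1) + 1 from rfl, sum_shift]
        apply Finset.sum_congr rfl
        intro i hi
        rw [Finset.mem_Ioc] at hi
        rw [huc (i + 1) (by omega) (by omega)]
        simp
      have t5 : ∑ j ∈ Finset.Ioc (K' + 1) (k + 2), x (k + 2) j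
          = ∑ i ∈ Finset.Ioc K' (k + 1), x (k + 2) (i + 1) := by
        rw [show k + 2 = (k + 1) + 1 from rfl, sum_shift]
      have t6 : ∑ i ∈ Finset.Ioc K' (k + 1), x (k + 1) i
          ≤ ∑ i ∈ Finset.Ioc K' (k + 1), x (k + 2) (i + 1) := by
        apply Finset.sum_le_sum
        intro i hi
        rw [Finset.mem_Ioc] at hi
        exact (hint i (by omega) hi.2).2.le
      linarith
  -- apply Karamata
  have hkar := karamata hf (k + 2) (fun j => u (j + 1)) (fun j => x (k + 2) (j + 1))
    (fun i hi => hmem (i + 1) (by omega) (by omega))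
    (fun i hi => hx_in (i + 1) (by omega) (by omega))
    (fun i hi => humono (i + 1) (by omega) (by omega))
    (by
      intro K hK
      have := hpre (K + 1) (by omega)
      have hconv := range_to_Ioc (fun j => x (k + 2) j - u j) (K + 1)
      rw [hconv, Finset.sum_sub_distrib]
      linarith)
    (by
      have hconv := range_to_Ioc (fun j => x (k + 2) j - u j) (k + 2)
      rw [hconv, Finset.sum_sub_distrib, htotu]
      simp [← hSxdef])
  have c1 := range_to_Ioc (fun j => f (u j)) (k + 2)
  have c2 := range_to_Ioc (fun j => f (x (k + 2) j)) (k + 2)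
  rw [c1, c2, husum f] at hkar
  rw [Icc1_eq, Icc1_eq]
  exact hkar
end

section
/- Fix an integer n ≥ 2. The vector v = (x_{1,n-1}, …, x_{n-1,n-1}, b_{n-1}) ∈ ℝⁿ is majorized by the vector w = (x_{1,n}, …, x_{n,n}) ∈ ℝⁿ: if v̂ and ŵ denote the components of v and w arranged in decreasing order, then Σ_{i=1}^{m} v̂_i ≤ Σ_{i=1}^{m} ŵ_i for every 1 ≤ m ≤ n−1, and Σ_{i=1}^{n} v̂_i = Σ_{i=1}^{n} ŵ_i. -/
open MeasureTheory Polynomial Finset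

namespace StmtAux2

lemma le_emb {k : ℕ} (f : Fin k → ℕ) (hf : StrictMono f) : ∀ (i : ℕ) (h : i < k), i ≤ f ⟨i, h⟩ := by
  intro i
  induction i with
  | zero => intro h; exact Nat.zero_le _
  | succ i ih =>
    intro h
    have h' : i < k := Nat.lt_of_succ_lt h
    have h1 := ih h'
    have hlt : f ⟨i, h'⟩ < f ⟨i + 1, h⟩ := hf (by simp [Fin.lt_def])
    omega

lemma emb_le {k M : ℕ} (f : Fin k → ℕ) (hf : StrictMono f) (hM : ∀ j, f j < M) :
    ∀ j : Fin k, f j ≤ M - k + (j : ℕ) := by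
  intro j
  have hgmono : StrictMono (fun j : Fin k => M - 1 - f j.rev) := by
    intro i j hij
    have h1 : f j.rev < f i.rev := hf (by simpa [Fin.rev_lt_rev] using hij)
    have h2 := hM i.rev
    simp only
    omega
  have h3 := le_emb _ hgmono j.rev j.rev.2
  simp only [Fin.eta, Fin.rev_rev] at h3
  have h4 := hM j
  have h5 : (j.rev : ℕ) = k - (j + 1) := Fin.val_rev j
  have h6 := j.2
  omega

lemma sum_orderEmbOfFin {α : Type*} [LinearOrder α] {k : ℕ} (A : Finset α) (h : A.card = k)
    (f : α → ℝ) : ∑ a ∈ A, f a = ∑ j : Fin k, f (A.orderEmbOfFin h j) := by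
  rw [← Finset.sum_attach A f, Finset.attach_eq_univ,
    ← Equiv.sum_comp (A.orderIsoOfFin h).toEquiv (fun x : A => f x)]
  apply Finset.sum_congr rfl
  intro j _
  simp [Finset.coe_orderIsoOfFin_apply]

lemma smono_aux (u : ℕ → ℝ) (K : ℕ) (h : ∀ j, 1 ≤ j → j + 1 ≤ K → u j < u (j + 1)) :
    ∀ i j, 1 ≤ i → i < j → j ≤ K → u i < u j := by
  intro i j h1 hij hjK
  induction j with
  | zero => omega
  | succ jj ih =>
    have hj : u jj < u (jj + 1) := h jj (by omega) (by omega)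
    rcases Nat.lt_or_ge i jj with hlt | hge
    · exact lt_trans (ih hlt (by omega)) hj
    · have : i = jj := by omega
      rw [this]; exact hj

lemma mono_aux (u : ℕ → ℝ) (K : ℕ) (h : ∀ j, 1 ≤ j → j + 1 ≤ K → u j < u (j + 1)) :
    ∀ i j, 1 ≤ i → i ≤ j → j ≤ K → u i ≤ u j := by
  intro i j h1 hij hjK
  rcases Nat.eq_or_lt_of_le hij with he | hlt
  · rw [he]
  · exact le_of_lt (smono_aux u K h i j h1 hlt hjK)

lemma coeff_of_roots (q : Polynomial ℝ) (m : ℕ) (hm : 1 ≤ m) (hdeg : q.degree = (m : ℕ))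
    (r : ℕ → ℝ) (hroot : ∀ j, 1 ≤ j → j ≤ m → q.eval (r j) = 0)
    (hmono : ∀ j, 1 ≤ j → j + 1 ≤ m → r j < r (j + 1)) :
    q.coeff (m - 1) = q.leadingCoeff * (-(∑ j ∈ Finset.range m, r (j + 1))) := by
  set s : Fin m → ℝ := fun j => r ((j : ℕ) + 1) with hs
  have hsinj : Function.Injective s := by
    intro i j hij
    by_contra hne
    have hne' : (i : ℕ) ≠ (j : ℕ) := fun h => hne (Fin.ext h)
    rcases Nat.lt_or_ge (i : ℕ) (j : ℕ) with h | h
    · exact absurd hij (ne_of_lt (smono_aux r m hmono _ _ (by omega) (by omega)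
        (by omega : (j : ℕ) + 1 ≤ m)))
    · exact absurd hij.symm (ne_of_lt (smono_aux r m hmono _ _ (by omega) (by omega)
        (by omega : (i : ℕ) + 1 ≤ m)))
  set P : Polynomial ℝ := ∏ j : Fin m, (X - C (s j)) with hP
  have hPmonic : P.Monic := monic_prod_of_monic _ _ (fun i _ => monic_X_sub_C _)
  have hPdeg : P.natDegree = m := by
    rw [hP, natDegree_prod_of_monic _ _ (fun i _ => monic_X_sub_C _)]
    simp [natDegree_X_sub_C]
  have hdvd : P ∣ q := Fintype.prod_dvd_of_coprime (pairwise_coprime_X_sub_C hsinj)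
    (fun i => dvd_iff_isRoot.mpr (hroot ((i : ℕ) + 1) (by omega) (by omega)))
  obtain ⟨c, hc⟩ := hdvd
  have hqnd : q.natDegree = m := natDegree_eq_of_degree_eq_some hdeg
  have hq0 : q ≠ 0 := by
    intro h; rw [h, degree_zero] at hdeg; exact absurd hdeg.symm (by simp)
  have hc0 : c ≠ 0 := by rintro rfl; rw [mul_zero] at hc; exact hq0 hc
  have hcdeg : c.natDegree = 0 := by
    have h2 := natDegree_mul hPmonic.ne_zero hc0
    rw [← hc, hqnd, hPdeg] at h2; omega
  have hlead : q.leadingCoeff = c.coeff 0 := by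
    rw [hc, leadingCoeff_mul, hPmonic.leadingCoeff, one_mul, leadingCoeff, hcdeg]
  have hcC : c = C (c.coeff 0) := eq_C_of_natDegree_le_zero (le_of_eq hcdeg)
  have hPcoeff : P.coeff (m - 1) = -(∑ j ∈ Finset.range m, r (j + 1)) := by
    have hcard : (univ : Finset (Fin m)).card = m := by simp
    have h3 := prod_X_sub_C_coeff_card_pred (univ : Finset (Fin m)) s (by simp; omega)
    rw [hcard] at h3
    rw [← hP] at h3
    rw [h3, Fin.sum_univ_eq_sum_range (fun j => r (j + 1))]
  rw [hlead]
  conv_lhs => rw [hc, hcC]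
  rw [coeff_mul_C, hPcoeff]
  ring

end StmtAux2

open StmtAux2

theorem stmt_2
    (μ : Measure ℝ) [IsProbabilityMeasure μ]
    (lo hi : ℝ)
    (hsupp : μ (Set.Icc lo hi)ᶜ = 0)
    (hinf : ∀ s : Finset ℝ, μ (↑s : Set ℝ)ᶜ ≠ 0)
    (p : ℕ → Polynomial ℝ)
    (hdeg : ∀ m : ℕ, (p m).degree = m)
    (hlead : ∀ m : ℕ, 0 < (p m).leadingCoeff)
    (horth : ∀ m l : ℕ, ∫ t, (p m).eval t * (p l).eval t ∂μ = if m = l then 1 else 0)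
    (a b : ℕ → ℝ)
    (hapos : ∀ m : ℕ, 1 ≤ m → 0 < a m)
    (hrec0 : Polynomial.X * p 0 = Polynomial.C (a 1) * p 1 + Polynomial.C (b 0) * p 0)
    (hrec : ∀ m : ℕ, Polynomial.X * p (m + 1) =
      Polynomial.C (a (m + 2)) * p (m + 2) + Polynomial.C (b (m + 1)) * p (m + 1) +
        Polynomial.C (a (m + 1)) * p m)
    (x : ℕ → ℕ → ℝ)
    (hxroot : ∀ m j : ℕ, 1 ≤ j → j ≤ m → (p m).eval (x m j) = 0)
    (hxmono : ∀ m j : ℕ, 1 ≤ j → j + 1 ≤ m → x m j < x m (j + 1))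
    (hxint : ∀ m j : ℕ, 1 ≤ j → j + 1 ≤ m → x m j < x (m - 1) j ∧ x (m - 1) j < x m (j + 1))
    (n : ℕ) (hn : 2 ≤ n)
    (v w : Fin n → ℝ)
    (hv : ∀ i : Fin n, (i : ℕ) + 1 ≤ n - 1 → v i = x (n - 1) ((i : ℕ) + 1))
    (hv' : ∀ i : Fin n, (i : ℕ) + 1 = n → v i = b (n - 1))
    (hw : ∀ i : Fin n, w i = x n ((i : ℕ) + 1))
    (σ τ : Equiv.Perm (Fin n))
    (hσ : Antitone (fun i => v (σ i))) (hτ : Antitone (fun i => w (τ i))) :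
    (∀ m : ℕ, 1 ≤ m → m ≤ n - 1 →
      ∑ i ∈ Finset.univ.filter (fun i : Fin n => (i : ℕ) < m), v (σ i) ≤
        ∑ i ∈ Finset.univ.filter (fun i : Fin n => (i : ℕ) < m), w (τ i)) ∧
    ∑ i : Fin n, v i = ∑ i : Fin n, w i := by
  -- notation
  set S1 : ℝ := ∑ j ∈ Finset.range (n - 1), x (n - 1) (j + 1) with hS1
  set S2 : ℝ := ∑ j ∈ Finset.range n, x n (j + 1) with hS2
  set L1 : ℝ := (p (n - 1)).leadingCoeff with hL1def
  set L2 : ℝ := (p n).leadingCoeff with hL2def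
  have hnd1 : (p (n - 1)).natDegree = n - 1 := natDegree_eq_of_degree_eq_some (hdeg (n - 1))
  have hnd2 : (p n).natDegree = n := natDegree_eq_of_degree_eq_some (hdeg n)
  have hc1 : (p (n - 1)).coeff (n - 2) = L1 * (-S1) := by
    have := coeff_of_roots (p (n - 1)) (n - 1) (by omega) (hdeg (n - 1)) (x (n - 1))
      (fun j h1 h2 => hxroot (n - 1) j h1 h2) (fun j h1 h2 => hxmono (n - 1) j h1 h2)
    rwa [show n - 1 - 1 = n - 2 by omega] at this
  have hc2 : (p n).coeff (n - 1) = L2 * (-S2) := by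
    exact coeff_of_roots (p n) n (by omega) (hdeg n) (x n)
      (fun j h1 h2 => hxroot n j h1 h2) (fun j h1 h2 => hxmono n j h1 h2)
  have hr := hrec (n - 2)
  rw [show n - 2 + 1 = n - 1 by omega, show n - 2 + 2 = n by omega] at hr
  have hXn : (X * p (n - 1)).coeff n = (p (n - 1)).coeff (n - 1) := by
    have h := coeff_X_mul (p (n - 1)) (n - 1)
    rwa [show (n - 1) + 1 = n by omega] at h
  have hXn1 : (X * p (n - 1)).coeff (n - 1) = (p (n - 1)).coeff (n - 2) := by
    have h := coeff_X_mul (p (n - 1)) (n - 2)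
    rwa [show (n - 2) + 1 = n - 1 by omega] at h
  have hz1 : (p (n - 1)).coeff n = 0 := by
    apply coeff_eq_zero_of_degree_lt
    rw [hdeg (n - 1)]
    have h : n - 1 < n := by omega
    exact_mod_cast h
  have hz2 : (p (n - 2)).coeff n = 0 := by
    apply coeff_eq_zero_of_degree_lt
    rw [hdeg (n - 2)]
    have h : n - 2 < n := by omega
    exact_mod_cast h
  have hz3 : (p (n - 2)).coeff (n - 1) = 0 := by
    apply coeff_eq_zero_of_degree_lt
    rw [hdeg (n - 2)]
    have h : n - 2 < n - 1 := by omega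
    exact_mod_cast h
  have htop : (p (n - 1)).coeff (n - 1) = L1 := by
    rw [hL1def, ← (p (n - 1)).coeff_natDegree, hnd1]
  have htop2 : (p n).coeff n = L2 := by
    rw [hL2def, ← (p n).coeff_natDegree, hnd2]
  have hA : L1 = a n * L2 := by
    have := congrArg (fun q : Polynomial ℝ => q.coeff n) hr
    simp only [coeff_add, coeff_C_mul] at this
    rw [hXn, htop, htop2, hz1, hz2] at this
    linarith [this]
  have hB : L1 * (-S1) = a n * (L2 * (-S2)) + b (n - 1) * L1 := by
    have := congrArg (fun q : Polynomial ℝ => q.coeff (n - 1)) hr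
    simp only [coeff_add, coeff_C_mul] at this
    rw [hXn1, hc1, hc2, htop, hz3] at this
    linarith [this]
  have hL1pos : (0 : ℝ) < L1 := hlead (n - 1)
  have key : b (n - 1) = S2 - S1 := by
    have hprod : (b (n - 1) - (S2 - S1)) * L1 = 0 := by linear_combination (-1) * hB + (-S2) * hA
    rcases mul_eq_zero.mp hprod with h | h
    · linarith
    · exact absurd h (ne_of_gt hL1pos)
  -- vN : ℕ version of v
  set vN : ℕ → ℝ := fun j => if j + 1 ≤ n - 1 then x (n - 1) (j + 1) else b (n - 1) with hvNdef
  have hvN : ∀ i : Fin n, v i = vN i.val := by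
    intro i
    by_cases h : i.val + 1 ≤ n - 1
    · simp only [hvNdef, if_pos h]; exact hv i h
    · have h2 : i.val + 1 = n := by have := i.2; omega
      simp only [hvNdef, if_neg h]; exact hv' i h2
  -- equality part
  have hweq : ∑ i : Fin n, w i = S2 := by
    rw [hS2, ← Fin.sum_univ_eq_sum_range (fun j => x n (j + 1)) n]
    exact Finset.sum_congr rfl (fun i _ => hw i)
  have hveq : ∑ i : Fin n, v i = S1 + b (n - 1) := by
    rw [show (∑ i : Fin n, v i) = ∑ i : Fin n, vN i.val from
      Finset.sum_congr rfl (fun i _ => hvN i)]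
    rw [Fin.sum_univ_eq_sum_range vN n]
    have hr2 : ∑ j ∈ Finset.range n, vN j = ∑ j ∈ Finset.range ((n - 1) + 1), vN j := by
      rw [show (n - 1) + 1 = n by omega]
    rw [hr2, Finset.sum_range_succ]
    have h1 : vN (n - 1) = b (n - 1) := by
      simp only [hvNdef, if_neg (by omega : ¬ (n - 1 + 1 ≤ n - 1))]
    have h2 : ∑ j ∈ Finset.range (n - 1), vN j = S1 := by
      apply Finset.sum_congr rfl
      intro j hj
      have hj' := Finset.mem_range.mp hj
      simp only [hvNdef, if_pos (by omega : j + 1 ≤ n - 1)]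
    rw [h1, h2]
  constructor
  · -- inequality part
    intro m hm1 hm2
    set F : Finset (Fin n) := Finset.univ.filter (fun i : Fin n => (i : ℕ) < m) with hFdef
    set G : Finset (Fin n) := Finset.univ.filter (fun i : Fin n => n - m ≤ (i : ℕ)) with hGdef
    have hFim : F.image Fin.val = Finset.range m := by
      ext c
      simp only [Finset.mem_image, Finset.mem_range, hFdef, Finset.mem_filter, Finset.mem_univ,
        true_and]
      constructor
      · rintro ⟨i, hi, rfl⟩; exact hi
      · intro hc; exact ⟨⟨c, by omega⟩, hc, rfl⟩
    have hGim : G.image Fin.val = Finset.Ico (n - m) n := by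
      ext c
      simp only [Finset.mem_image, Finset.mem_Ico, hGdef, Finset.mem_filter, Finset.mem_univ,
        true_and]
      constructor
      · rintro ⟨i, hi, rfl⟩; exact ⟨hi, i.2⟩
      · rintro ⟨h1, h2⟩; exact ⟨⟨c, h2⟩, h1, rfl⟩
    have hFcard : F.card = m := by
      have h1 := Finset.card_image_of_injective F Fin.val_injective
      rw [hFim, Finset.card_range] at h1
      omega
    have hGcard : G.card = m := by
      have h1 := Finset.card_image_of_injective G Fin.val_injective
      rw [hGim, Nat.card_Ico] at h1
      omega
    -- sum over G of w equals block sum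
    have hGsum : ∑ i ∈ G, w i = ∑ c ∈ Finset.Ico (n - m) n, x n (c + 1) := by
      rw [← hGim, Finset.sum_image (fun i _ j _ h => Fin.val_injective h)]
      exact Finset.sum_congr rfl (fun i _ => hw i)
    have hIco : ∑ c ∈ Finset.Ico (n - m) n, x n (c + 1) = ∑ j : Fin m, x n (n - m + j + 1) := by
      rw [Finset.sum_Ico_eq_sum_range, show n - (n - m) = m by omega,
        ← Fin.sum_univ_eq_sum_range (fun j => x n (n - m + j + 1)) m]
    -- step (b): RHS ≥ sum over G of w
    have hstepb : ∑ i ∈ G, w i ≤ ∑ i ∈ F, w (τ i) := by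
      set gN : ℕ → ℝ := fun c => if h : c < n then w (τ ⟨c, h⟩) else 0 with hgNdef
      set U : Finset (Fin n) := G.image τ.symm with hUdef
      have hUcard : U.card = m := by
        rw [hUdef, Finset.card_image_of_injective _ (Equiv.injective _), hGcard]
      set UN : Finset ℕ := U.image Fin.val with hUNdef
      have hUNcard : UN.card = m := by
        rw [hUNdef, Finset.card_image_of_injective _ Fin.val_injective, hUcard]
      have h1 : ∑ i ∈ G, w i = ∑ i ∈ U, w (τ i) := by
        rw [hUdef, Finset.sum_image (fun i _ j _ h => Equiv.injective _ h)]
        exact Finset.sum_congr rfl (fun i _ => by rw [Equiv.apply_symm_apply])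
      have h2 : ∑ i ∈ U, w (τ i) = ∑ c ∈ UN, gN c := by
        rw [hUNdef, Finset.sum_image (fun i _ j _ h => Fin.val_injective h)]
        exact Finset.sum_congr rfl (fun i _ => by simp [hgNdef, i.2])
      have hUNsub : ∀ c ∈ UN, c < n := by
        intro c hc
        rw [hUNdef] at hc
        obtain ⟨i, _, hi⟩ := Finset.mem_image.mp hc
        rw [← hi]; exact i.2
      have h3 : ∑ c ∈ UN, gN c = ∑ j : Fin m, gN (UN.orderEmbOfFin hUNcard j) :=
        sum_orderEmbOfFin UN hUNcard gN
      have h4 : ∀ j : Fin m, gN (UN.orderEmbOfFin hUNcard j) ≤ gN j.val := by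
        intro j
        have hmem := Finset.orderEmbOfFin_mem UN hUNcard j
        have hlt : UN.orderEmbOfFin hUNcard j < n := hUNsub _ hmem
        have hjlt : j.val < n := by have := j.2; omega
        have hle : j.val ≤ UN.orderEmbOfFin hUNcard j :=
          le_emb _ (UN.orderEmbOfFin hUNcard).strictMono j.val j.2
        rw [hgNdef]
        simp only [dif_pos hlt, dif_pos hjlt]
        exact hτ (by rw [Fin.le_def]; exact hle)
      have h5 : ∑ j : Fin m, gN j.val = ∑ i ∈ F, w (τ i) := by
        rw [Fin.sum_univ_eq_sum_range (fun c => gN c) m, ← hFim,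
          Finset.sum_image (fun i _ j _ h => Fin.val_injective h)]
        apply Finset.sum_congr rfl
        intro i hi
        have : i.val < n := i.2
        simp [hgNdef, this]
      calc ∑ i ∈ G, w i = ∑ c ∈ UN, gN c := by rw [h1, h2]
        _ = ∑ j : Fin m, gN (UN.orderEmbOfFin hUNcard j) := h3
        _ ≤ ∑ j : Fin m, gN j.val := Finset.sum_le_sum (fun j _ => h4 j)
        _ = ∑ i ∈ F, w (τ i) := h5
    -- step (a): LHS as sum over a nat finset
    set T : Finset ℕ := (F.image σ).image Fin.val with hTdef
    have hTcard : T.card = m := by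
      rw [hTdef, Finset.card_image_of_injective _ Fin.val_injective,
        Finset.card_image_of_injective _ (Equiv.injective _), hFcard]
    have hTsub : ∀ c ∈ T, c < n := by
      intro c hc
      obtain ⟨i, _, hi⟩ := Finset.mem_image.mp hc
      rw [← hi]; exact i.2
    have hstepa : ∑ i ∈ F, v (σ i) = ∑ c ∈ T, vN c := by
      rw [hTdef, Finset.sum_image (fun i _ j _ h => Fin.val_injective h),
        Finset.sum_image (fun i _ j _ h => Equiv.injective _ h)]
      exact Finset.sum_congr rfl (fun i _ => hvN (σ i))
    -- core inequality
    have hcore : ∑ c ∈ T, vN c ≤ ∑ c ∈ Finset.Ico (n - m) n, x n (c + 1) := by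
      by_cases hlast : (n - 1) ∈ T
      · -- case: b (n-1) appears
        have hsplitT : ∑ c ∈ T, vN c = vN (n - 1) + ∑ c ∈ T.erase (n - 1), vN c :=
          (Finset.add_sum_erase T vN hlast).symm
        have hvlast : vN (n - 1) = b (n - 1) := by
          simp only [hvNdef, if_neg (by omega : ¬ (n - 1 + 1 ≤ n - 1))]
        set E : Finset ℕ := T.erase (n - 1) with hEdef
        have hEcard : E.card = m - 1 := by
          rw [hEdef, Finset.card_erase_of_mem hlast, hTcard]
        have hEsub : E ⊆ Finset.range (n - 1) := by
          intro c hc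
          have h1 := Finset.mem_of_mem_erase hc
          have h2 := Finset.ne_of_mem_erase hc
          have h3 := hTsub c h1
          exact Finset.mem_range.mpr (by omega)
        have hEsum : ∑ c ∈ E, vN c = ∑ c ∈ E, x (n - 1) (c + 1) := by
          apply Finset.sum_congr rfl
          intro c hc
          have := Finset.mem_range.mp (hEsub hc)
          simp only [hvNdef, if_pos (by omega : c + 1 ≤ n - 1)]
        set Cc : Finset ℕ := Finset.range (n - 1) \ E with hCcdef
        have hCcard : Cc.card = n - m := by
          rw [hCcdef, Finset.card_sdiff_of_subset hEsub, Finset.card_range, hEcard]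
          omega
        have hsdiff : ∑ c ∈ Cc, x (n - 1) (c + 1) + ∑ c ∈ E, x (n - 1) (c + 1) = S1 := by
          rw [hCcdef, Finset.sum_sdiff hEsub]
        have hCsub : ∀ c ∈ Cc, c < n - 1 := by
          intro c hc
          rw [hCcdef] at hc
          exact Finset.mem_range.mp (Finset.mem_sdiff.mp hc).1
        have hCbound : ∑ c ∈ Finset.range (n - m), x n (c + 1) ≤ ∑ c ∈ Cc, x (n - 1) (c + 1) := by
          rw [sum_orderEmbOfFin Cc hCcard (fun c => x (n - 1) (c + 1)),
            ← Fin.sum_univ_eq_sum_range (fun c => x n (c + 1)) (n - m)]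
          apply Finset.sum_le_sum
          intro j _
          have hmem := Finset.orderEmbOfFin_mem Cc hCcard j
          have hub : Cc.orderEmbOfFin hCcard j < n - 1 := hCsub _ hmem
          have hlb : j.val ≤ Cc.orderEmbOfFin hCcard j :=
            le_emb _ (Cc.orderEmbOfFin hCcard).strictMono j.val j.2
          have hjb := j.2
          have h1 : x n (j.val + 1) < x (n - 1) (j.val + 1) :=
            (hxint n (j.val + 1) (by omega) (by omega)).1
          have h2 : x (n - 1) (j.val + 1) ≤ x (n - 1) (Cc.orderEmbOfFin hCcard j + 1) :=
            mono_aux (x (n - 1)) (n - 1) (fun j h1 h2 => hxmono (n - 1) j h1 h2)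
              (j.val + 1) (Cc.orderEmbOfFin hCcard j + 1) (by omega) (by omega) (by omega)
          linarith
        have hS2split : S2 = ∑ c ∈ Finset.range (n - m), x n (c + 1) +
            ∑ c ∈ Finset.Ico (n - m) n, x n (c + 1) := by
          have hcons := Finset.sum_Ico_consecutive (fun c => x n (c + 1))
            (Nat.zero_le (n - m)) (show n - m ≤ n by omega)
          rw [hS2, Finset.range_eq_Ico, ← hcons, Finset.range_eq_Ico]
        rw [hsplitT, hvlast, hEsum, key]
        have hE2 : ∑ c ∈ E, x (n - 1) (c + 1) = S1 - ∑ c ∈ Cc, x (n - 1) (c + 1) := by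
          linarith
        rw [hE2]
        linarith
      · -- case: only zeros of p (n-1)
        have hTsub' : ∀ c ∈ T, c < n - 1 := by
          intro c hc
          have h1 := hTsub c hc
          have h2 : c ≠ n - 1 := fun h => hlast (h ▸ hc)
          omega
        have hTsum : ∑ c ∈ T, vN c = ∑ c ∈ T, x (n - 1) (c + 1) := by
          apply Finset.sum_congr rfl
          intro c hc
          have := hTsub' c hc
          simp only [hvNdef, if_pos (by omega : c + 1 ≤ n - 1)]
        rw [hTsum, hIco, sum_orderEmbOfFin T hTcard (fun c => x (n - 1) (c + 1))]
        apply Finset.sum_le_sum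
        intro j _
        have hmem := Finset.orderEmbOfFin_mem T hTcard j
        have hub1 : T.orderEmbOfFin hTcard j < n - 1 := hTsub' _ hmem
        have hub2 : T.orderEmbOfFin hTcard j ≤ (n - 1) - m + j.val :=
          emb_le _ (T.orderEmbOfFin hTcard).strictMono
            (fun i => hTsub' _ (Finset.orderEmbOfFin_mem T hTcard i)) j
        have hjb := j.2
        have h1 : x (n - 1) (T.orderEmbOfFin hTcard j + 1) <
            x n (T.orderEmbOfFin hTcard j + 2) :=
          (hxint n (T.orderEmbOfFin hTcard j + 1) (by omega) (by omega)).2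
        have h2 : x n (T.orderEmbOfFin hTcard j + 2) ≤ x n (n - m + j.val + 1) :=
          mono_aux (x n) n (fun j h1 h2 => hxmono n j h1 h2)
            (T.orderEmbOfFin hTcard j + 2) (n - m + j.val + 1) (by omega) (by omega) (by omega)
        linarith
    calc ∑ i ∈ F, v (σ i) = ∑ c ∈ T, vN c := hstepa
      _ ≤ ∑ c ∈ Finset.Ico (n - m) n, x n (c + 1) := hcore
      _ = ∑ i ∈ G, w i := hGsum.symm
      _ ≤ ∑ i ∈ F, w (τ i) := hstepb
  · rw [hveq, hweq, key]; ring
end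

section
/- Fix n ≥ 2 and 1 ≤ j ≤ n. Then a_n² λ_{j,n} p_{n-1}(x_{j,n})² · Σ_{i=1}^{n-1} λ_{i,n-1} p_n(x_{i,n-1})²/(x_{j,n} − x_{i,n-1})² = 1 − λ_{j,n} p_{n-1}(x_{j,n})². -/
open MeasureTheory Polynomial Finset

theorem stmt_7
    (μ : Measure ℝ) [IsProbabilityMeasure μ]
    (lo hi : ℝ)
    (hsupp : μ (Set.Icc lo hi)ᶜ = 0)
    (hinf : ∀ s : Finset ℝ, μ (↑s : Set ℝ)ᶜ ≠ 0)
    (p : ℕ → Polynomial ℝ)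
    (hdeg : ∀ m : ℕ, (p m).degree = m)
    (hlead : ∀ m : ℕ, 0 < (p m).leadingCoeff)
    (horth : ∀ m l : ℕ, ∫ t, (p m).eval t * (p l).eval t ∂μ = if m = l then 1 else 0)
    (a b : ℕ → ℝ)
    (hapos : ∀ m : ℕ, 1 ≤ m → 0 < a m)
    (hrec0 : Polynomial.X * p 0 = Polynomial.C (a 1) * p 1 + Polynomial.C (b 0) * p 0)
    (hrec : ∀ m : ℕ, Polynomial.X * p (m + 1) =
      Polynomial.C (a (m + 2)) * p (m + 2) + Polynomial.C (b (m + 1)) * p (m + 1) +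
        Polynomial.C (a (m + 1)) * p m)
    (x : ℕ → ℕ → ℝ)
    (hxroot : ∀ m j : ℕ, 1 ≤ j → j ≤ m → (p m).eval (x m j) = 0)
    (hxmono : ∀ m j : ℕ, 1 ≤ j → j + 1 ≤ m → x m j < x m (j + 1))
    (hxint : ∀ m j : ℕ, 1 ≤ j → j + 1 ≤ m → x m j < x (m - 1) j ∧ x (m - 1) j < x m (j + 1))
    (lam : ℕ → ℕ → ℝ)
    (hlam : ∀ m j : ℕ, lam m j = (∑ i ∈ Finset.range m, ((p i).eval (x m j)) ^ 2)⁻¹)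
    (n : ℕ) (hn : 2 ≤ n) (j : ℕ) (hj1 : 1 ≤ j) (hj2 : j ≤ n) :
    a n ^ 2 * lam n j * ((p (n - 1)).eval (x n j)) ^ 2 *
      (∑ i ∈ Finset.Icc 1 (n - 1),
        lam (n - 1) i * ((p n).eval (x (n - 1) i)) ^ 2 / (x n j - x (n - 1) i) ^ 2) =
      1 - lam n j * ((p (n - 1)).eval (x n j)) ^ 2 := by
  -- p 0 is a positive constant c
  obtain ⟨c, hc, hp0⟩ : ∃ c : ℝ, 0 < c ∧ p 0 = Polynomial.C c := by
    have h0 : (p 0).natDegree = 0 := Polynomial.natDegree_eq_zero_iff_degree_le_zero.2 (by rw [hdeg 0]; norm_num)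
    refine ⟨(p 0).coeff 0, ?_, (Polynomial.eq_C_of_natDegree_eq_zero h0)⟩
    have := hlead 0
    rwa [Polynomial.leadingCoeff, h0] at this
  -- pointwise recurrences
  have hrec0E : ∀ t : ℝ, t * c = a 1 * (p 1).eval t + b 0 * c := by
    intro t
    have := congrArg (Polynomial.eval t) hrec0
    have h2 := this
    simp only [hp0, Polynomial.eval_mul, Polynomial.eval_X, Polynomial.eval_C,
      Polynomial.eval_add] at h2
    linear_combination h2
  have hrecE : ∀ (m : ℕ) (t : ℝ), t * (p (m+1)).eval t =
      a (m+2) * (p (m+2)).eval t + b (m+1) * (p (m+1)).eval t + a (m+1) * (p m).eval t := by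
    intro m t
    have := congrArg (Polynomial.eval t) (hrec m)
    simpa using this
  -- derivative recurrences
  have hrec0D : ∀ t : ℝ, c = a 1 * (p 1).derivative.eval t := by
    intro t
    have := congrArg (fun q => (Polynomial.derivative q).eval t) hrec0
    simpa [hp0] using this
  have hrecD : ∀ (m : ℕ) (t : ℝ), (p (m+1)).eval t + t * (p (m+1)).derivative.eval t =
      a (m+2) * (p (m+2)).derivative.eval t + b (m+1) * (p (m+1)).derivative.eval t +
        a (m+1) * (p m).derivative.eval t := by
    intro m t
    have h := congrArg (fun q => (Polynomial.derivative q).eval t) (hrec m)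
    simp only [Polynomial.derivative_mul, Polynomial.derivative_X, Polynomial.derivative_C,
      Polynomial.derivative_add, Polynomial.derivative_C_mul,
      Polynomial.eval_add, Polynomial.eval_mul, Polynomial.eval_C, Polynomial.eval_X,
      Polynomial.eval_one, one_mul, zero_mul, zero_add, add_zero] at h
    linear_combination h
  -- Christoffel-Darboux
  have hCD : ∀ (s t : ℝ) (m : ℕ), (s - t) * ∑ k ∈ range (m+1), (p k).eval s * (p k).eval t =
      a (m+1) * ((p (m+1)).eval s * (p m).eval t - (p m).eval s * (p (m+1)).eval t) := by
    intro s t m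
    induction m with
    | zero =>
      simp only [zero_add, range_one, sum_singleton, hp0, Polynomial.eval_C]
      linear_combination c * hrec0E s - c * hrec0E t
    | succ m ih =>
      rw [Finset.sum_range_succ, mul_add]
      linear_combination ih + (p (m+1)).eval t * hrecE m s - (p (m+1)).eval s * hrecE m t
  -- confluent Christoffel-Darboux
  have hCDc : ∀ (s : ℝ) (m : ℕ), ∑ k ∈ range (m+1), (p k).eval s ^ 2 =
      a (m+1) * ((p (m+1)).derivative.eval s * (p m).eval s -
        (p m).derivative.eval s * (p (m+1)).eval s) := by
    intro s m
    induction m with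
    | zero =>
      simp only [zero_add, range_one, sum_singleton, hp0, Polynomial.eval_C, Polynomial.derivative_C,
        Polynomial.eval_zero]
      linear_combination c * hrec0D s
    | succ m ih =>
      rw [Finset.sum_range_succ]
      linear_combination ih + (p (m+1)).eval s * hrecD m s - (p (m+1)).derivative.eval s * hrecE m s
  -- positivity of the kernel sums
  have hpos : ∀ (s : ℝ) (m : ℕ), 1 ≤ m → 0 < ∑ k ∈ range m, (p k).eval s ^ 2 := by
    intro s m hm
    apply Finset.sum_pos' (fun i _ => sq_nonneg _)
    exact ⟨0, Finset.mem_range.2 hm, by rw [hp0]; simpa using pow_pos hc 2⟩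
  have hlampos : ∀ (m i : ℕ), 1 ≤ m → 0 < lam m i := by
    intro m i hm
    rw [hlam]
    exact inv_pos.2 (hpos _ m hm)
  have hlamval : ∀ (m i : ℕ), 1 ≤ m →
      lam m i * ∑ k ∈ range m, (p k).eval (x m i) ^ 2 = 1 := by
    intro m i hm
    rw [hlam]
    exact inv_mul_cancel₀ (ne_of_gt (hpos _ m hm))
  -- setup
  obtain ⟨m, rfl⟩ : ∃ m, n = m + 2 := ⟨n - 2, by omega⟩
  have hsub : m + 2 - 1 = m + 1 := rfl
  rw [hsub]
  set X := x (m+2) j with hX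
  set P := (p (m+1)).eval X with hP
  set y : ℕ → ℝ := fun i => x (m+1) i with hy
  -- P ≠ 0
  have hPne : P ≠ 0 := by
    intro h
    have h1 := hCDc X (m+1)
    rw [hxroot (m+2) j hj1 hj2, ← hP, h] at h1
    have := hpos X (m+2) (by omega)
    rw [h1] at this
    simp at this
  have haP : a (m+2) ^ 2 * P ^ 2 ≠ 0 := by
    have := hapos (m+2) (by omega)
    positivity
  -- X differs from all nodes y i
  have hXy : ∀ i, 1 ≤ i → i ≤ m + 1 → X - y i ≠ 0 := by
    intro i h1 h2 h
    apply hPne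
    have : X = y i := by linarith [sub_eq_zero.mp h]
    rw [hP, this]
    exact hxroot (m+1) i h1 h2
  -- kernel values
  have hKval : ∀ i, 1 ≤ i → i ≤ m + 1 →
      (X - y i) * (∑ k ∈ range (m+1), (p k).eval X * (p k).eval (y i)) =
        -(a (m+2) * (P * (p (m+2)).eval (y i))) := by
    intro i h1 h2
    have h3 := hCD X (y i) (m+1)
    rw [Finset.sum_range_succ, hxroot (m+2) j hj1 hj2, hxroot (m+1) i h1 h2] at h3
    simp only [mul_zero, zero_mul, zero_sub, add_zero] at h3
    have h5 : P = (p (m+1)).eval X := rfl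
    rw [h5]
    linear_combination h3
  -- distinctness of the x (m+1) nodes
  have hdistinct : ∀ i i' : ℕ, 1 ≤ i → i < i' → i' ≤ m + 1 → x (m+1) i < x (m+1) i' := by
    intro i i' h1 h2 h3
    induction i' with
    | zero => omega
    | succ k ih =>
      rcases Nat.lt_or_ge i k with h | h
      · exact lt_trans (ih h (by omega)) (hxmono (m+1) k (by omega) (by omega))
      · have : i = k := by omega
        subst this
        exact hxmono (m+1) i h1 (by omega)
  have hyne : ∀ i i' : ℕ, 1 ≤ i → 1 ≤ i' → i ≤ m+1 → i' ≤ m+1 → i ≠ i' → y i ≠ y i' := by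
    intro i i' h1 h2 h3 h4 h5
    rcases Nat.lt_or_ge i i' with h | h
    · exact ne_of_lt (hdistinct i i' h1 h h4)
    · exact (ne_of_lt (hdistinct i' i h2 (by omega) h3)).symm
  have hcross : ∀ i i' : ℕ, 1 ≤ i → 1 ≤ i' → i ≤ m+1 → i' ≤ m+1 → i ≠ i' →
      ∑ k ∈ range (m+1), (p k).eval (y i) * (p k).eval (y i') = 0 := by
    intro i i' h1 h2 h3 h4 h5
    have h6 := hCD (y i) (y i') m
    rw [hxroot (m+1) i h1 h3, hxroot (m+1) i' h2 h4] at h6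
    simp only [mul_zero, zero_mul, sub_zero, sub_self] at h6
    have h7 : y i - y i' ≠ 0 := sub_ne_zero.2 (hyne i i' h1 h2 h3 h4 h5)
    exact (mul_eq_zero.mp h6).resolve_left h7
  -- matrix argument for discrete orthogonality
  set M : Matrix (Fin (m+1)) (Fin (m+1)) ℝ :=
    fun i k => Real.sqrt (lam (m+1) (1 + (i : ℕ))) * (p (k : ℕ)).eval (y (1 + (i : ℕ))) with hM
  have hMMT : M * M.transpose = 1 := by
    ext i i'
    simp only [Matrix.mul_apply, Matrix.transpose_apply, Matrix.one_apply]
    simp only [hM]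
    rcases eq_or_ne i i' with h | h
    · subst h
      rw [if_pos rfl]
      have hs := Real.mul_self_sqrt (le_of_lt (hlampos (m+1) (1 + (i : ℕ)) (by omega)))
      have e1 : ∀ k : Fin (m+1),
          Real.sqrt (lam (m+1) (1 + (i : ℕ))) * (p (k : ℕ)).eval (y (1 + (i : ℕ))) *
            (Real.sqrt (lam (m+1) (1 + (i : ℕ))) * (p (k : ℕ)).eval (y (1 + (i : ℕ))))
          = lam (m+1) (1 + (i : ℕ)) * ((p (k : ℕ)).eval (y (1 + (i : ℕ))))^2 := by
        intro k
        linear_combination ((p (k : ℕ)).eval (y (1 + (i : ℕ))))^2 * hs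
      rw [Finset.sum_congr rfl (fun k _ => e1 k), ← Finset.mul_sum,
        Fin.sum_univ_eq_sum_range (fun k => ((p k).eval (y (1 + (i : ℕ))))^2)]
      exact hlamval (m+1) (1 + (i : ℕ)) (by omega)
    · rw [if_neg h]
      have e2 : ∑ k ∈ range (m+1), (p k).eval (y (1 + (i : ℕ))) * (p k).eval (y (1 + (i' : ℕ))) = 0 := by
        refine hcross (1 + (i : ℕ)) (1 + (i' : ℕ)) (by omega) (by omega)
          (by have := i.isLt; omega) (by have := i'.isLt; omega) ?_
        intro hh
        exact h (Fin.ext (by omega))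
      have e3 : ∀ k : Fin (m+1),
          Real.sqrt (lam (m+1) (1 + (i : ℕ))) * (p (k : ℕ)).eval (y (1 + (i : ℕ))) *
            (Real.sqrt (lam (m+1) (1 + (i' : ℕ))) * (p (k : ℕ)).eval (y (1 + (i' : ℕ))))
          = (Real.sqrt (lam (m+1) (1 + (i : ℕ))) * Real.sqrt (lam (m+1) (1 + (i' : ℕ)))) *
              ((p (k : ℕ)).eval (y (1 + (i : ℕ))) * (p (k : ℕ)).eval (y (1 + (i' : ℕ)))) := by
        intro k; ring
      rw [Finset.sum_congr rfl (fun k _ => e3 k), ← Finset.mul_sum,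
        Fin.sum_univ_eq_sum_range (fun k => (p k).eval (y (1 + (i : ℕ))) * (p k).eval (y (1 + (i' : ℕ)))),
        e2, mul_zero]
  have hMTM : M.transpose * M = 1 := mul_eq_one_comm.mp hMMT
  -- discrete orthogonality
  have horthd : ∀ k l : ℕ, k < m + 1 → l < m + 1 →
      ∑ i ∈ Finset.Icc 1 (m+1), lam (m+1) i * ((p k).eval (y i) * (p l).eval (y i)) =
        if k = l then 1 else 0 := by
    intro k l hk hl
    have h := congrFun (congrFun hMTM ⟨k, hk⟩) ⟨l, hl⟩
    simp only [Matrix.mul_apply, Matrix.transpose_apply, Matrix.one_apply] at h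
    simp only [hM] at h
    have e4 : ∀ i : Fin (m+1),
        Real.sqrt (lam (m+1) (1 + (i : ℕ))) * (p k).eval (y (1 + (i : ℕ))) *
          (Real.sqrt (lam (m+1) (1 + (i : ℕ))) * (p l).eval (y (1 + (i : ℕ))))
        = lam (m+1) (1 + (i : ℕ)) * ((p k).eval (y (1 + (i : ℕ))) * (p l).eval (y (1 + (i : ℕ)))) := by
      intro i
      have hs := Real.mul_self_sqrt (le_of_lt (hlampos (m+1) (1 + (i : ℕ)) (by omega)))
      linear_combination ((p k).eval (y (1 + (i : ℕ))) * (p l).eval (y (1 + (i : ℕ)))) * hs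
    rw [Finset.sum_congr rfl (fun i _ => e4 i)] at h
    rw [Fin.sum_univ_eq_sum_range
      (fun i => lam (m+1) (1 + i) * ((p k).eval (y (1 + i)) * (p l).eval (y (1 + i))))] at h
    have hic : ∑ i ∈ Finset.Icc 1 (m+1), lam (m+1) i * ((p k).eval (y i) * (p l).eval (y i)) =
        ∑ i ∈ range (m+1), lam (m+1) (1 + i) * ((p k).eval (y (1 + i)) * (p l).eval (y (1 + i))) := by
      rw [← Finset.Ico_add_one_right_eq_Icc, Finset.sum_Ico_eq_sum_range]
      norm_num
    rw [hic, h]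
    by_cases hkl : k = l
    · subst hkl; simp
    · rw [if_neg hkl, if_neg (fun hh => hkl (by simpa using congrArg Fin.val hh))]
  -- rewrite each term of the main sum
  have hterm : ∀ i ∈ Finset.Icc 1 (m+1),
      lam (m+1) i * ((p (m+2)).eval (y i))^2 / (X - y i)^2 =
        lam (m+1) i * (∑ k ∈ range (m+1), (p k).eval X * (p k).eval (y i))^2 /
          (a (m+2)^2 * P^2) := by
    intro i hi
    rw [Finset.mem_Icc] at hi
    have h1 := hi.1
    have h2 := hi.2
    have hd := hXy i h1 h2
    have hKv := hKval i h1 h2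
    set Ki := ∑ k ∈ range (m+1), (p k).eval X * (p k).eval (y i) with hKi
    have hsq : (X - y i)^2 * Ki^2 = a (m+2)^2 * P^2 * ((p (m+2)).eval (y i))^2 := by
      linear_combination ((X - y i) * Ki - a (m+2) * (P * (p (m+2)).eval (y i))) * hKv
    rw [div_eq_div_iff (pow_ne_zero 2 hd) haP]
    linear_combination (-(lam (m+1) i)) * hsq
  rw [Finset.sum_congr rfl hterm]
  -- key sum identity
  have key : ∑ i ∈ Finset.Icc 1 (m+1),
      lam (m+1) i * (∑ k ∈ range (m+1), (p k).eval X * (p k).eval (y i))^2 =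
      ∑ k ∈ range (m+1), (p k).eval X ^ 2 := by
    have e5 : ∀ i, lam (m+1) i * (∑ k ∈ range (m+1), (p k).eval X * (p k).eval (y i))^2 =
        ∑ k ∈ range (m+1), ∑ l ∈ range (m+1),
          (p k).eval X * (p l).eval X * (lam (m+1) i * ((p k).eval (y i) * (p l).eval (y i))) := by
      intro i
      rw [sq, Finset.sum_mul_sum, Finset.mul_sum]
      refine Finset.sum_congr rfl fun k _ => ?_
      rw [Finset.mul_sum]
      refine Finset.sum_congr rfl fun l _ => ?_
      ring
    rw [Finset.sum_congr rfl (fun i _ => e5 i), Finset.sum_comm]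
    have e6 : ∀ k ∈ range (m+1), (∑ i ∈ Finset.Icc 1 (m+1), ∑ l ∈ range (m+1),
        (p k).eval X * (p l).eval X * (lam (m+1) i * ((p k).eval (y i) * (p l).eval (y i)))) =
        (p k).eval X ^ 2 := by
      intro k hk
      rw [Finset.sum_comm]
      have e7 : ∀ l ∈ range (m+1), (∑ i ∈ Finset.Icc 1 (m+1),
          (p k).eval X * (p l).eval X * (lam (m+1) i * ((p k).eval (y i) * (p l).eval (y i)))) =
          (p k).eval X * (p l).eval X * (if k = l then 1 else 0) := by
        intro l hl
        rw [← Finset.mul_sum, horthd k l (Finset.mem_range.mp hk) (Finset.mem_range.mp hl)]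
      rw [Finset.sum_congr rfl e7]
      simp only [mul_ite, mul_one, mul_zero, Finset.sum_ite_eq, hk, if_true]
      ring
    rw [Finset.sum_congr rfl e6]
  -- finish
  have hsum1 := hlamval (m+2) j (by omega)
  rw [Finset.sum_range_succ] at hsum1
  have hXx : x (m+2) j = X := rfl
  rw [hXx] at hsum1
  have hPP : (p (m+1)).eval X = P := rfl
  rw [hPP] at hsum1
  have hdiv : ∑ i ∈ Finset.Icc 1 (m+1),
      lam (m+1) i * (∑ k ∈ range (m+1), (p k).eval X * (p k).eval (y i))^2 /
        (a (m+2)^2 * P^2) =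
      (∑ k ∈ range (m+1), (p k).eval X ^ 2) / (a (m+2)^2 * P^2) := by
    rw [← Finset.sum_div, key]
  rw [hdiv]
  rw [mul_div_assoc', div_eq_iff haP]
  linear_combination (a (m+2))^2 * P^2 * hsum1
end

section
/- Fix an integer n ≥ 2. Define the n×n matrix B by B_{i,j} = a_1² λ_{j,n} λ^{(1)}_{i,n-1} / (y_{i,n-1} − x_{j,n})² for 1 ≤ i ≤ n−1 and 1 ≤ j ≤ n, and B_{n,j} = λ_{j,n} for 1 ≤ j ≤ n. Then B is doubly stochastic, y_{i,n-1} = Σ_{j=1}^{n} B_{i,j} x_{j,n} for every 1 ≤ i ≤ n−1, and b_0 = Σ_{j=1}^{n} B_{n,j} x_{j,n}. -/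
open MeasureTheory Polynomial Finset

private lemma DD_key (c : ℝ) (P : ℝ[X]) :
    P = C (P.eval c) + (X - C c) * (P /ₘ (X - C c)) := by
  conv_lhs => rw [← Polynomial.modByMonic_add_div P (X - C c)]
  rw [Polynomial.modByMonic_X_sub_C_eq_C_eval]

private lemma DD_cancel {c : ℝ} {A B : ℝ[X]} (h : (X - C c) * A = (X - C c) * B) : A = B :=
  mul_left_cancel₀ (Polynomial.X_sub_C_ne_zero c) h

private lemma DD_Xmul (c : ℝ) (P : ℝ[X]) :
    (X * P) /ₘ (X - C c) = X * (P /ₘ (X - C c)) + C (P.eval c) := by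
  apply DD_cancel (c := c)
  have h1 := DD_key c (X * P)
  have h2 := DD_key c P
  simp only [eval_mul, eval_X, map_mul] at h1
  linear_combination -h1 + X * h2

private lemma DD_one (c : ℝ) : (1 : ℝ[X]) /ₘ (X - C c) = 0 := by
  apply DD_cancel (c := c)
  have h1 := DD_key c (1 : ℝ[X])
  simp only [eval_one, map_one] at h1
  linear_combination -h1

private lemma DD_add (c : ℝ) (P Q : ℝ[X]) :
    (P + Q) /ₘ (X - C c) = P /ₘ (X - C c) + Q /ₘ (X - C c) := by
  apply DD_cancel (c := c)
  have h1 := DD_key c (P + Q)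
  have h2 := DD_key c P
  have h3 := DD_key c Q
  simp only [eval_add, map_add] at h1
  linear_combination -h1 + h2 + h3

private lemma DD_Cmul (c r : ℝ) (P : ℝ[X]) :
    (C r * P) /ₘ (X - C c) = C r * (P /ₘ (X - C c)) := by
  apply DD_cancel (c := c)
  have h1 := DD_key c (C r * P)
  have h2 := DD_key c P
  simp only [eval_mul, eval_C, map_mul] at h1
  linear_combination -h1 + C r * h2

private lemma DD_deriv (c : ℝ) (P : ℝ[X]) :
    derivative P = P /ₘ (X - C c) + (X - C c) * derivative (P /ₘ (X - C c)) := by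
  conv_lhs => rw [DD_key c P]
  simp only [derivative_add, derivative_C, derivative_mul, derivative_sub, derivative_X,
    zero_add, sub_zero, one_mul]

private lemma DD_deriv_eval (c : ℝ) (P : ℝ[X]) :
    (derivative P).eval c = (P /ₘ (X - C c)).eval c := by
  rw [DD_deriv c P]; simp

private lemma chain_lt (f : ℕ → ℝ) (m : ℕ) (h : ∀ j, 1 ≤ j → j + 1 ≤ m → f j < f (j + 1)) :
    ∀ j k, 1 ≤ j → j < k → k ≤ m → f j < f k := by
  intro j k hj hjk hkm
  induction k with
  | zero => omega
  | succ k ih =>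
    rcases Nat.lt_or_ge j k with h' | h'
    · exact (ih h' (by omega)).trans (h k (by omega) (by omega))
    · have hjk' : j = k := by omega
      subst hjk'
      exact h j hj hkm

set_option maxHeartbeats 1000000 in
theorem stmt_8
    (μ : Measure ℝ) [IsProbabilityMeasure μ]
    (lo hi : ℝ)
    (hsupp : μ (Set.Icc lo hi)ᶜ = 0)
    (hinf : ∀ s : Finset ℝ, μ (↑s : Set ℝ)ᶜ ≠ 0)
    (p : ℕ → Polynomial ℝ)
    (hdeg : ∀ m : ℕ, (p m).degree = m)
    (hlead : ∀ m : ℕ, 0 < (p m).leadingCoeff)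
    (horth : ∀ m l : ℕ, ∫ t, (p m).eval t * (p l).eval t ∂μ = if m = l then 1 else 0)
    (a b : ℕ → ℝ)
    (hapos : ∀ m : ℕ, 1 ≤ m → 0 < a m)
    (hrec0 : Polynomial.X * p 0 = Polynomial.C (a 1) * p 1 + Polynomial.C (b 0) * p 0)
    (hrec : ∀ m : ℕ, Polynomial.X * p (m + 1) =
      Polynomial.C (a (m + 2)) * p (m + 2) + Polynomial.C (b (m + 1)) * p (m + 1) +
        Polynomial.C (a (m + 1)) * p m)
    (x : ℕ → ℕ → ℝ)
    (hxroot : ∀ m j : ℕ, 1 ≤ j → j ≤ m → (p m).eval (x m j) = 0)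
    (hxmono : ∀ m j : ℕ, 1 ≤ j → j + 1 ≤ m → x m j < x m (j + 1))
    (lam : ℕ → ℕ → ℝ)
    (hlam : ∀ m j : ℕ, lam m j = (∑ i ∈ Finset.range m, ((p i).eval (x m j)) ^ 2)⁻¹)
    (q : ℕ → Polynomial ℝ)
    (hq0 : q 0 = 1)
    (hqrec0 : Polynomial.X * q 0 = Polynomial.C (a 2) * q 1 + Polynomial.C (b 1) * q 0)
    (hqrec : ∀ m : ℕ, Polynomial.X * q (m + 1) =
      Polynomial.C (a (m + 3)) * q (m + 2) + Polynomial.C (b (m + 2)) * q (m + 1) +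
        Polynomial.C (a (m + 2)) * q m)
    (y : ℕ → ℕ → ℝ)
    (hyroot : ∀ m j : ℕ, 1 ≤ j → j ≤ m → (q m).eval (y m j) = 0)
    (hymono : ∀ m j : ℕ, 1 ≤ j → j + 1 ≤ m → y m j < y m (j + 1))
    (hxy : ∀ m j : ℕ, 1 ≤ j → j ≤ m → x (m + 1) j < y m j ∧ y m j < x (m + 1) (j + 1))
    (lam1 : ℕ → ℕ → ℝ)
    (hlam1 : ∀ m i : ℕ, 1 ≤ i → i ≤ m → lam1 m i =
      (a (m + 1) * ((Polynomial.derivative (q m)).eval (y m i)) * ((q (m - 1)).eval (y m i)))⁻¹)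
    (n : ℕ) (hn : 2 ≤ n)
    (B : ℕ → ℕ → ℝ)
    (hB1 : ∀ i j : ℕ, 1 ≤ i → i ≤ n - 1 → 1 ≤ j → j ≤ n →
      B i j = a 1 ^ 2 * lam n j * lam1 (n - 1) i / (y (n - 1) i - x n j) ^ 2)
    (hB2 : ∀ j : ℕ, 1 ≤ j → j ≤ n → B n j = lam n j) :
    (∀ i j : ℕ, 1 ≤ i → i ≤ n → 1 ≤ j → j ≤ n → 0 ≤ B i j) ∧
    (∀ i : ℕ, 1 ≤ i → i ≤ n → ∑ j ∈ Finset.Icc 1 n, B i j = 1) ∧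
    (∀ j : ℕ, 1 ≤ j → j ≤ n → ∑ i ∈ Finset.Icc 1 n, B i j = 1) ∧
    (∀ i : ℕ, 1 ≤ i → i ≤ n - 1 → y (n - 1) i = ∑ j ∈ Finset.Icc 1 n, B i j * x n j) ∧
    b 0 = ∑ j ∈ Finset.Icc 1 n, B n j * x n j := by
  have ha1 : 0 < a 1 := hapos 1 le_rfl
  have hNn : (0:ℕ) < n := by omega
  have hndeg : ∀ m : ℕ, (p m).natDegree = m := fun m => natDegree_eq_of_degree_eq_some (hdeg m)
  have hpne : ∀ m : ℕ, p m ≠ 0 := by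
    intro m hm
    have := hdeg m
    rw [hm, degree_zero] at this
    exact (by simp : (⊥ : WithBot ℕ) ≠ (m : WithBot ℕ)) this
  have hp0 : p 0 = 1 := by
    have hc : p 0 = C ((p 0).coeff 0) := Polynomial.eq_C_of_degree_le_zero (le_of_eq (by simpa using hdeg 0))
    set c := (p 0).coeff 0 with hcdef
    have hint := horth 0 0
    rw [hc] at hint
    simp only [eval_C, if_pos rfl] at hint
    rw [MeasureTheory.integral_const] at hint
    simp only [measure_univ, ENNReal.toReal_one, probReal_univ, one_smul, smul_eq_mul] at hint
    have hcpos : 0 < c := by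
      have h := hlead 0
      rwa [hc, Polynomial.leadingCoeff_C] at h
    norm_num at hint
    have hc1 : c = 1 := by nlinarith
    rw [hc, hc1, map_one]
  have hp1 : C (a 1) * p 1 = X - C (b 0) := by
    have h := hrec0
    rw [hp0] at h
    linear_combination -h
  have hxlt : ∀ j k, 1 ≤ j → j < k → k ≤ n → x n j < x n k :=
    chain_lt (x n) n (fun j h1 h2 => hxmono n j h1 h2)
  have hxne : ∀ j ∈ Finset.Icc 1 n, ∀ k ∈ Finset.Icc 1 n, j ≠ k → x n j ≠ x n k := by
    intro j hj k hk hjk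
    simp only [mem_Icc] at hj hk
    rcases Nat.lt_or_ge j k with h | h
    · exact ne_of_lt (hxlt j k hj.1 h hk.2)
    · exact (ne_of_lt (hxlt k j hk.1 (by omega) hj.2)).symm
  have hxy' : ∀ i ∈ Finset.Icc 1 (n-1), x n i < y (n-1) i ∧ y (n-1) i < x n (i+1) := by
    intro i hi
    simp only [mem_Icc] at hi
    have h := hxy (n-1) i hi.1 hi.2
    rwa [Nat.sub_add_cancel (by omega)] at h
  have hylt : ∀ j k, 1 ≤ j → j < k → k ≤ n - 1 → y (n-1) j < y (n-1) k :=
    chain_lt (y (n-1)) (n-1) (fun j h1 h2 => hymono (n-1) j h1 h2)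
  have hyne : ∀ i ∈ Finset.Icc 1 (n-1), ∀ k ∈ Finset.Icc 1 (n-1), i ≠ k → y (n-1) i ≠ y (n-1) k := by
    intro j hj k hk hjk
    simp only [mem_Icc] at hj hk
    rcases Nat.lt_or_ge j k with h | h
    · exact ne_of_lt (hylt j k hj.1 h hk.2)
    · exact (ne_of_lt (hylt k j hk.1 (by omega) hj.2)).symm
  have hyx : ∀ i ∈ Finset.Icc 1 (n-1), ∀ j ∈ Finset.Icc 1 n, y (n-1) i ≠ x n j := by
    intro i hi j hj
    simp only [mem_Icc] at hi hj
    rcases Nat.lt_or_ge i j with h | h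
    · -- j ≥ i+1 : y i < x (i+1) ≤ x j
      have h1 : y (n-1) i < x n (i+1) := (hxy' i (by simp [mem_Icc]; omega)).2
      rcases Nat.lt_or_ge (i+1) j with h2 | h2
      · exact ne_of_lt (h1.trans (hxlt (i+1) j (by omega) h2 hj.2))
      · have : j = i + 1 := by omega
        subst this; exact ne_of_lt h1
    · -- j ≤ i : x j ≤ x i < y i
      have h1 : x n i < y (n-1) i := (hxy' i (by simp [mem_Icc]; omega)).1
      rcases Nat.lt_or_ge j i with h2 | h2
      · exact (ne_of_lt ((hxlt j i hj.1 h2 (by omega)).trans h1)).symm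
      · have : j = i := by omega
        subst this; exact (ne_of_lt h1).symm
  have hCD : ∀ m : ℕ, ∀ u v : ℝ,
      (u - v) * ∑ i ∈ Finset.range (m+1), (p i).eval u * (p i).eval v
        = a (m+1) * ((p (m+1)).eval u * (p m).eval v - (p m).eval u * (p (m+1)).eval v) := by
    intro m
    induction m with
    | zero =>
      intro u v
      have hu := congrArg (eval u) hp1
      have hv := congrArg (eval v) hp1
      simp only [eval_mul, eval_sub, eval_X, eval_C] at hu hv
      norm_num [Finset.sum_range_one, hp0]
      linear_combination hv - hu
    | succ m ih =>
      intro u v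
      have hu := congrArg (eval u) (hrec m)
      have hv := congrArg (eval v) (hrec m)
      simp only [eval_mul, eval_add, eval_X, eval_C] at hu hv
      rw [Finset.sum_range_succ, mul_add]
      rw [ih u v]
      linear_combination (p (m+1)).eval v * hu - (p (m+1)).eval u * hv
  have hKzero : ∀ j ∈ Finset.Icc 1 n, ∀ k ∈ Finset.Icc 1 n, j ≠ k →
      ∑ i ∈ Finset.range n, (p i).eval (x n j) * (p i).eval (x n k) = 0 := by
    intro j hj k hk hjk
    simp only [mem_Icc] at hj hk
    have h := hCD (n-1) (x n j) (x n k)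
    rw [Nat.sub_add_cancel (by omega : 1 ≤ n)] at h
    rw [hxroot n j hj.1 hj.2, hxroot n k hk.1 hk.2] at h
    simp only [zero_mul, mul_zero, sub_zero, zero_sub, mul_neg, neg_zero] at h
    have hne : x n j - x n k ≠ 0 := sub_ne_zero.mpr (hxne j (by simp [mem_Icc]; omega) k (by simp [mem_Icc]; omega) hjk)
    exact (mul_eq_zero.mp h).resolve_left hne
  have hKspos : ∀ j : ℕ, 0 < ∑ i ∈ Finset.range n, ((p i).eval (x n j)) ^ 2 := by
    intro j
    apply Finset.sum_pos' (fun i _ => sq_nonneg _)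
    exact ⟨0, Finset.mem_range.mpr hNn, by rw [hp0]; norm_num⟩
  have hlampos : ∀ j ∈ Finset.Icc 1 n, 0 < lam n j := by
    intro j _
    rw [hlam]
    exact inv_pos.mpr (hKspos j)
  have hKdiag : ∀ j ∈ Finset.Icc 1 n,
      lam n j * ∑ i ∈ Finset.range n, (p i).eval (x n j) * (p i).eval (x n j) = 1 := by
    intro j _
    rw [hlam]
    have h : ∑ i ∈ Finset.range n, (p i).eval (x n j) * (p i).eval (x n j)
        = ∑ i ∈ Finset.range n, ((p i).eval (x n j)) ^ 2 := by
      apply Finset.sum_congr rfl; intro i _; ring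
    rw [h]
    exact inv_mul_cancel₀ (ne_of_gt (hKspos j))
  have hDO : ∀ i : ℕ, i < n →
      ∑ j ∈ Finset.Icc 1 n, lam n j * (p i).eval (x n j) = if i = 0 then 1 else 0 := by
    have hIcc_range : ∀ g : ℕ → ℝ, ∑ j ∈ Finset.Icc 1 n, g j = ∑ j' : Fin n, g (j'.val + 1) := by
      intro g
      rw [← Finset.Ico_add_one_right_eq_Icc, Finset.sum_Ico_eq_sum_range, Fin.sum_univ_eq_sum_range (fun j' => g (j' + 1)) n]
      norm_num
      exact Finset.sum_congr rfl (fun i _ => by rw [Nat.add_comm])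
    intro i hi
    classical
    set M : Matrix (Fin n) (Fin n) ℝ := fun j k => (p k.val).eval (x n (j.val + 1)) with hM
    set N : Matrix (Fin n) (Fin n) ℝ := fun k j => (p k.val).eval (x n (j.val + 1)) * lam n (j.val + 1) with hN
    have hmem : ∀ j : Fin n, j.val + 1 ∈ Finset.Icc 1 n := by
      intro j
      simp only [Finset.mem_Icc]
      omega
    have hMN : M * N = 1 := by
      ext j k
      rw [Matrix.mul_apply, Matrix.one_apply]
      have hconv : ∑ i' : Fin n, M j i' * N i' k
          = lam n (k.val + 1) * ∑ i' ∈ Finset.range n,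
              (p i').eval (x n (j.val + 1)) * (p i').eval (x n (k.val + 1)) := by
        rw [Finset.mul_sum, ← Fin.sum_univ_eq_sum_range (fun i' =>
          lam n (k.val+1) * ((p i').eval (x n (j.val + 1)) * (p i').eval (x n (k.val + 1)))) n]
        exact Finset.sum_congr rfl (fun i' _ => by simp only [hM, hN]; ring)
      rw [hconv]
      by_cases hjk : j = k
      · subst hjk
        rw [if_pos rfl]
        exact hKdiag (j.val + 1) (hmem j)
      · rw [hKzero (j.val+1) (hmem j) (k.val+1) (hmem k)
          (by simp only [ne_eq, Fin.ext_iff] at hjk ⊢; omega)]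
        rw [if_neg hjk, mul_zero]
    have hNM := mul_eq_one_comm.mp hMN
    have h := congrFun (congrFun hNM ⟨i, hi⟩) ⟨0, hNn⟩
    rw [Matrix.mul_apply, Matrix.one_apply] at h
    have hL : ∑ j' : Fin n, N ⟨i, hi⟩ j' * M j' ⟨0, hNn⟩
        = ∑ j' : Fin n, lam n (j'.val + 1) * (p i).eval (x n (j'.val + 1)) := by
      apply Finset.sum_congr rfl
      intro j' _
      simp only [hM, hN, hp0, eval_one]
      ring
    rw [hL] at h
    rw [hIcc_range (fun j => lam n j * (p i).eval (x n j)), h]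
    simp [Fin.ext_iff]
  have hsumlam : ∑ j ∈ Finset.Icc 1 n, lam n j = 1 := by
    have h := hDO 0 hNn
    simpa [hp0] using h
  have hsumlamx : ∑ j ∈ Finset.Icc 1 n, lam n j * x n j = b 0 := by
    have h1 : ∀ j ∈ Finset.Icc 1 n, lam n j * x n j
        = b 0 * lam n j + a 1 * (lam n j * (p 1).eval (x n j)) := by
      intro j _
      have hx := congrArg (eval (x n j)) hp1
      simp only [eval_mul, eval_sub, eval_X, eval_C] at hx
      linear_combination (-(lam n j)) * hx
    rw [Finset.sum_congr rfl h1, Finset.sum_add_distrib, ← Finset.mul_sum, ← Finset.mul_sum,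
      hsumlam, hDO 1 (by omega)]
    norm_num
  have hLp : ∀ m : ℕ, 1 ≤ m → m ≤ n - 1 →
      ∑ j ∈ Finset.Icc 1 n, lam n j * (p m).eval (x n j) = 0 := by
    intro m h1 h2
    have h := hDO m (by omega)
    rwa [if_neg (by omega)] at h
  have hD1 : ∀ c : ℝ, p 1 /ₘ (X - C c) = C (a 1)⁻¹ := by
    intro c
    apply DD_cancel (c := c)
    apply mul_left_cancel₀ (show (C (a 1) : ℝ[X]) ≠ 0 from
      fun h => (ne_of_gt ha1) (by simpa using congrArg (eval 0) h))
    have hkey := DD_key c (p 1)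
    have hev := congrArg (eval c) hp1
    simp only [eval_mul, eval_sub, eval_X, eval_C] at hev
    have hCC : (C (a 1) : ℝ[X]) * C (a 1)⁻¹ = 1 := by
      rw [← map_mul, mul_inv_cancel₀ (ne_of_gt ha1), map_one]
    calc C (a 1) * ((X - C c) * (p 1 /ₘ (X - C c)))
        = C (a 1) * p 1 - C (a 1) * C ((p 1).eval c) := by linear_combination (-(C (a 1))) * hkey
      _ = (X - C (b 0)) - C (a 1 * (p 1).eval c) := by rw [hp1, ← map_mul]
      _ = (X - C (b 0)) - C (c - b 0) := by rw [hev]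
      _ = X - C c := by rw [map_sub]; ring
      _ = C (a 1) * ((X - C c) * C (a 1)⁻¹) := by
          rw [show C (a 1) * ((X - C c) * C (a 1)⁻¹) = C (a 1) * C (a 1)⁻¹ * (X - C c) from by ring,
            hCC, one_mul]
  have hfun : ∀ P : ℝ[X], ∑ j ∈ Finset.Icc 1 n, C (lam n j) * ((X * P) /ₘ (X - C (x n j)))
      = X * ∑ j ∈ Finset.Icc 1 n, C (lam n j) * (P /ₘ (X - C (x n j)))
        + C (∑ j ∈ Finset.Icc 1 n, lam n j * P.eval (x n j)) := by
    intro P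
    have h1 : ∀ j ∈ Finset.Icc 1 n, C (lam n j) * ((X * P) /ₘ (X - C (x n j)))
        = X * (C (lam n j) * (P /ₘ (X - C (x n j)))) + C (lam n j * P.eval (x n j)) := by
      intro j _
      rw [DD_Xmul, map_mul]
      ring
    rw [Finset.sum_congr rfl h1, Finset.sum_add_distrib, ← Finset.mul_sum, ← map_sum]
  have hsumDD : ∀ k : ℕ, ∑ j ∈ Finset.Icc 1 n, C (lam n j) * ((X * p (k+1)) /ₘ (X - C (x n j)))
      = C (a (k+2)) * (∑ j ∈ Finset.Icc 1 n, C (lam n j) * (p (k+2) /ₘ (X - C (x n j))))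
      + C (b (k+1)) * (∑ j ∈ Finset.Icc 1 n, C (lam n j) * (p (k+1) /ₘ (X - C (x n j))))
      + C (a (k+1)) * (∑ j ∈ Finset.Icc 1 n, C (lam n j) * (p k /ₘ (X - C (x n j)))) := by
    intro k
    rw [Finset.mul_sum, Finset.mul_sum, Finset.mul_sum, ← Finset.sum_add_distrib,
      ← Finset.sum_add_distrib]
    apply Finset.sum_congr rfl
    intro j _
    rw [hrec k, DD_add, DD_add, DD_Cmul, DD_Cmul, DD_Cmul]
    ring
  have hCne : ∀ r : ℝ, r ≠ 0 → (C r : ℝ[X]) ≠ 0 := by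
    intro r hr h
    exact hr (by simpa using congrArg (eval 0) h)
  have hq1all : ∀ m : ℕ, m ≤ n - 1 →
      q m = C (a 1) * ∑ j ∈ Finset.Icc 1 n, C (lam n j) * (p (m+1) /ₘ (X - C (x n j))) := by
    intro m
    induction m using Nat.strong_induction_on with
    | _ m ih =>
      match m with
      | 0 =>
        intro _
        have hsum : ∑ j ∈ Finset.Icc 1 n, C (lam n j) * (p (0+1) /ₘ (X - C (x n j)))
            = C ((a 1)⁻¹) := by
          rw [Finset.sum_congr rfl (fun j _ => by rw [hD1 (x n j)])]
          rw [← Finset.sum_mul, ← map_sum, hsumlam, map_one, one_mul]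
        rw [hsum, hq0, ← map_mul, mul_inv_cancel₀ (ne_of_gt ha1), map_one]
      | 1 =>
        intro h1
        have hf := hfun (p 1)
        have hs := hsumDD 0
        rw [hf, hLp 1 le_rfl h1] at hs
        have hF1 : ∑ j ∈ Finset.Icc 1 n, C (lam n j) * (p 1 /ₘ (X - C (x n j)))
            = C ((a 1)⁻¹) := by
          rw [Finset.sum_congr rfl (fun j _ => by rw [hD1 (x n j)])]
          rw [← Finset.sum_mul, ← map_sum, hsumlam, map_one, one_mul]
        have hF0 : ∑ j ∈ Finset.Icc 1 n, C (lam n j) * (p 0 /ₘ (X - C (x n j))) = 0 := by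
          apply Finset.sum_eq_zero
          intro j _
          rw [hp0, DD_one, mul_zero]
        rw [hF1, hF0] at hs
        -- hs : X * C (a 1)⁻¹ + C 0 = C (a 2) * F2 + C (b 1) * C (a 1)⁻¹ + C (a 1) * 0
        apply mul_left_cancel₀ (hCne (a 2) (ne_of_gt (hapos 2 (by omega))))
        have hq1 : C (a 2) * q 1 = X - C (b 1) := by
          have h := hqrec0
          rw [hq0] at h
          linear_combination -h
        rw [hq1]
        have hCC : (C (a 1) : ℝ[X]) * C (a 1)⁻¹ = 1 := by
          rw [← map_mul, mul_inv_cancel₀ (ne_of_gt ha1), map_one]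
        calc X - C (b 1)
            = C (a 1) * (X * C (a 1)⁻¹ + C 0 - C (b 1) * C (a 1)⁻¹) := by
              rw [map_zero]
              linear_combination (C (b 1) - X) * hCC
          _ = C (a 1) * (C (a 2) * ∑ j ∈ Finset.Icc 1 n, C (lam n j) * (p 2 /ₘ (X - C (x n j)))) := by
              rw [hs]; ring
          _ = C (a 2) * (C (a 1) * ∑ j ∈ Finset.Icc 1 n, C (lam n j) * (p (1+1) /ₘ (X - C (x n j)))) := by
              ring
      | (k+2) =>
        intro h2
        have ih1 := ih (k+1) (by omega) (by omega)
        rw [show k+1+1 = k+2 from by omega] at ih1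
        have ih0 := ih k (by omega) (by omega)
        have hf := hfun (p (k+2))
        have hs := hsumDD (k+1)
        rw [hf, hLp (k+2) (by omega) (by omega)] at hs
        rw [show k+1+2 = k+3 from by omega, show k+1+1 = k+2 from by omega] at hs
        rw [show k+2+1 = k+3 from by omega]
        simp only [map_zero] at hs
        apply mul_left_cancel₀ (hCne (a (k+3)) (ne_of_gt (hapos (k+3) (by omega))))
        have hqr := hqrec k
        -- X * q (k+1) = C a_{k+3} q (k+2) + C b_{k+2} q (k+1) + C a_{k+2} q k
        calc C (a (k+3)) * q (k+2)
            = X * q (k+1) - C (b (k+2)) * q (k+1) - C (a (k+2)) * q k := by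
              linear_combination -hqr
          _ = C (a (k+3)) * (C (a 1) * ∑ j ∈ Finset.Icc 1 n, C (lam n j) * (p (k+3) /ₘ (X - C (x n j)))) := by
              rw [ih1, ih0]
              linear_combination C (a 1) * hs
  have hqid : q (n-1) = C (a 1) * ∑ j ∈ Finset.Icc 1 n, C (lam n j) * (p n /ₘ (X - C (x n j))) := by
    have h := hq1all (n-1) le_rfl
    rwa [Nat.sub_add_cancel (by omega : 1 ≤ n)] at h
  have hcardJ : (Finset.Icc 1 n).card = n := by
    rw [Nat.card_Icc]
    omega
  have hinjx : Set.InjOn (x n) (Finset.Icc 1 n) := by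
    intro j hj k hk hjk
    by_contra hne
    exact hxne j (by simpa using hj) k (by simpa using hk) hne hjk
  have hcardim : ((Finset.Icc 1 n).image (x n)).card = n := by
    rw [Finset.card_image_of_injOn hinjx, hcardJ]
  have hGmono : ∀ j ∈ Finset.Icc 1 n, (X - C (x n j)).Monic := fun j _ => monic_X_sub_C _
  have hGdeg : (∏ j ∈ Finset.Icc 1 n, (X - C (x n j))).natDegree = n := by
    rw [Polynomial.natDegree_prod_of_monic _ _ hGmono]
    simp only [natDegree_X_sub_C]
    rw [Finset.sum_const, smul_eq_mul, mul_one, hcardJ]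
  have hfact : p n = C ((p n).coeff n) * ∏ j ∈ Finset.Icc 1 n, (X - C (x n j)) := by
    have hGmonic : (∏ j ∈ Finset.Icc 1 n, (X - C (x n j))).Monic :=
      monic_prod_of_monic _ _ hGmono
    set d := p n - C ((p n).coeff n) * ∏ j ∈ Finset.Icc 1 n, (X - C (x n j)) with hd
    have hdeval : ∀ z ∈ (Finset.Icc 1 n).image (x n), d.eval z = 0 := by
      intro z hz
      obtain ⟨k, hk, rfl⟩ := Finset.mem_image.mp hz
      have hk' := Finset.mem_Icc.mp hk
      simp only [hd, eval_sub, eval_mul, eval_C]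
      rw [hxroot n k hk'.1 hk'.2, eval_prod, Finset.prod_eq_zero hk (by simp)]
      ring
    have hdcoeff : d.coeff n = 0 := by
      simp only [hd, coeff_sub, coeff_C_mul]
      have h1 := hGmonic.coeff_natDegree
      rw [hGdeg] at h1
      rw [h1]
      ring
    have hdle : d.natDegree ≤ n := by
      apply le_trans (Polynomial.natDegree_sub_le _ _)
      apply max_le (le_of_eq (hndeg n))
      apply le_trans (Polynomial.natDegree_mul_le)
      simp [hGdeg]
    have hdz : d = 0 := by
      by_cases h0 : d = 0
      · exact h0
      apply Polynomial.eq_zero_of_natDegree_lt_card_of_eval_eq_zero' d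
        ((Finset.Icc 1 n).image (x n)) hdeval
      rw [hcardim]
      rcases lt_or_eq_of_le hdle with h | h
      · exact h
      · exfalso
        have : d.leadingCoeff ≠ 0 := leadingCoeff_ne_zero.mpr h0
        rw [Polynomial.leadingCoeff, h, hdcoeff] at this
        exact this rfl
    exact sub_eq_zero.mp hdz
  have hlcne : (p n).coeff n ≠ 0 := by
    have h := hlead n
    rw [Polynomial.leadingCoeff, hndeg n] at h
    exact ne_of_gt h
  have hDdecomp : ∀ j ∈ Finset.Icc 1 n, p n = (X - C (x n j)) * (p n /ₘ (X - C (x n j))) := by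
    intro j hj
    have hj' := Finset.mem_Icc.mp hj
    have h := DD_key (x n j) (p n)
    rwa [hxroot n j hj'.1 hj'.2, map_zero, zero_add] at h
  have hDfact : ∀ j ∈ Finset.Icc 1 n,
      p n /ₘ (X - C (x n j)) = C ((p n).coeff n) * ∏ k ∈ (Finset.Icc 1 n).erase j, (X - C (x n k)) := by
    intro j hj
    apply DD_cancel (c := x n j)
    rw [← hDdecomp j hj]
    conv_lhs => rw [hfact, ← Finset.mul_prod_erase _ _ hj]
    ring
  have hDx : ∀ j ∈ Finset.Icc 1 n,
      (p n /ₘ (X - C (x n j))).eval (x n j) = (derivative (p n)).eval (x n j) :=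
    fun j _ => (DD_deriv_eval (x n j) (p n)).symm
  have hpd_ne : ∀ j ∈ Finset.Icc 1 n, (derivative (p n)).eval (x n j) ≠ 0 := by
    intro j hj
    rw [← hDx j hj, hDfact j hj, eval_mul, eval_C, eval_prod]
    apply mul_ne_zero hlcne
    rw [Finset.prod_ne_zero_iff]
    intro k hk
    simp only [eval_sub, eval_X, eval_C]
    exact sub_ne_zero.mpr (hxne j hj k (Finset.mem_of_mem_erase hk)
      (fun h => (Finset.ne_of_mem_erase hk) h.symm))
  have hpny : ∀ i ∈ Finset.Icc 1 (n-1), (p n).eval (y (n-1) i) ≠ 0 := by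
    intro i hi
    rw [hfact, eval_mul, eval_C, eval_prod]
    apply mul_ne_zero hlcne
    rw [Finset.prod_ne_zero_iff]
    intro k hk
    simp only [eval_sub, eval_X, eval_C]
    exact sub_ne_zero.mpr (hyx i hi k hk)
  have hDev : ∀ j ∈ Finset.Icc 1 n, ∀ z : ℝ, z ≠ x n j →
      (p n /ₘ (X - C (x n j))).eval z = (p n).eval z / (z - x n j) := by
    intro j hj z hz
    simp only [mem_Icc] at hj
    have h := DD_key (x n j) (p n)
    have h2 : (p n).eval z = (p n).eval (x n j) + (z - x n j) * (p n /ₘ (X - C (x n j))).eval z := by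
      conv_lhs => rw [h]
      simp
    rw [hxroot n j hj.1 hj.2] at h2
    field_simp [sub_ne_zero.mpr hz] at h2 ⊢
    linarith [h2]
  have hqnx : ∀ j ∈ Finset.Icc 1 n,
      (q (n-1)).eval (x n j) = a 1 * lam n j * (derivative (p n)).eval (x n j) := by
    intro j hj
    have h := congrArg (eval (x n j)) hqid
    rw [eval_mul, eval_C, eval_finset_sum] at h
    rw [h, Finset.sum_eq_single_of_mem j hj]
    · rw [eval_mul, eval_C, hDx j hj]
      ring
    · intro k hk hkj
      rw [eval_mul, eval_C]
      have h0 : (p n /ₘ (X - C (x n k))).eval (x n j) = 0 := by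
        have hh := congrArg (eval (x n j)) (hDdecomp k hk)
        have hj' := Finset.mem_Icc.mp hj
        rw [hxroot n j hj'.1 hj'.2, eval_mul, eval_sub, eval_X, eval_C] at hh
        have hne : x n j - x n k ≠ 0 := sub_ne_zero.mpr (hxne j hj k hk (fun h => hkj h.symm))
        rcases mul_eq_zero.mp hh.symm with h' | h'
        · exact absurd h' hne
        · exact h'
      rw [h0, mul_zero]
  have hsum0 : ∀ i ∈ Finset.Icc 1 (n-1), ∑ j ∈ Finset.Icc 1 n, lam n j / (y (n-1) i - x n j) = 0 := by
    intro i hi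
    have hi' := Finset.mem_Icc.mp hi
    have hq0' : (q (n-1)).eval (y (n-1) i) = 0 := hyroot (n-1) i hi'.1 hi'.2
    have h := congrArg (eval (y (n-1) i)) hqid
    rw [hq0', eval_mul, eval_C, eval_finset_sum] at h
    have hconv : ∑ j ∈ Finset.Icc 1 n, (C (lam n j) * (p n /ₘ (X - C (x n j)))).eval (y (n-1) i)
        = (p n).eval (y (n-1) i) * ∑ j ∈ Finset.Icc 1 n, lam n j / (y (n-1) i - x n j) := by
      rw [Finset.mul_sum]
      apply Finset.sum_congr rfl
      intro j hj
      rw [eval_mul, eval_C, hDev j hj _ (hyx i hi j hj)]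
      ring
    rw [hconv] at h
    rcases mul_eq_zero.mp h.symm with h' | h'
    · exact absurd h' (ne_of_gt ha1)
    rcases mul_eq_zero.mp h' with h'' | h''
    · exact absurd h'' (hpny i hi)
    · exact h''
  have hSpos : ∀ i ∈ Finset.Icc 1 (n-1),
      0 < ∑ j ∈ Finset.Icc 1 n, lam n j / (y (n-1) i - x n j)^2 := by
    intro i hi
    apply Finset.sum_pos
    · intro j hj
      apply div_pos (hlampos j hj)
      exact pow_two_pos_of_ne_zero (sub_ne_zero.mpr (hyx i hi j hj))
    · exact ⟨1, Finset.mem_Icc.mpr ⟨le_rfl, by omega⟩⟩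
  have hqd : ∀ i ∈ Finset.Icc 1 (n-1), (derivative (q (n-1))).eval (y (n-1) i)
      = -(a 1) * (p n).eval (y (n-1) i) * ∑ j ∈ Finset.Icc 1 n, lam n j / (y (n-1) i - x n j)^2 := by
    intro i hi
    have hd := congrArg derivative hqid
    rw [Polynomial.derivative_C_mul, Polynomial.derivative_sum] at hd
    have he := congrArg (eval (y (n-1) i)) hd
    rw [eval_mul, eval_C, eval_finset_sum] at he
    have hterm : ∀ j ∈ Finset.Icc 1 n,
        (derivative (C (lam n j) * (p n /ₘ (X - C (x n j))))).eval (y (n-1) i)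
        = (derivative (p n)).eval (y (n-1) i) * (lam n j / (y (n-1) i - x n j))
          - (p n).eval (y (n-1) i) * (lam n j / (y (n-1) i - x n j)^2) := by
      intro j hj
      rw [Polynomial.derivative_C_mul, eval_mul, eval_C]
      have hne : y (n-1) i - x n j ≠ 0 := sub_ne_zero.mpr (hyx i hi j hj)
      have hder := congrArg (eval (y (n-1) i)) (DD_deriv (x n j) (p n))
      rw [eval_add, eval_mul, eval_sub, eval_X, eval_C,
        hDev j hj _ (hyx i hi j hj)] at hder
      rw [show (derivative (p n)).eval (y (n-1) i) * (lam n j / (y (n-1) i - x n j))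
            - (p n).eval (y (n-1) i) * (lam n j / (y (n-1) i - x n j)^2)
          = ((derivative (p n)).eval (y (n-1) i) * (lam n j * (y (n-1) i - x n j))
            - (p n).eval (y (n-1) i) * lam n j) / (y (n-1) i - x n j)^2 from by
        field_simp]
      rw [eq_div_iff (pow_ne_zero 2 hne)]
      field_simp at hder
      linear_combination (-(lam n j)) * hder
    rw [Finset.sum_congr rfl hterm, Finset.sum_sub_distrib, ← Finset.mul_sum, ← Finset.mul_sum,
      hsum0 i hi, mul_zero, zero_sub] at he
    rw [he]
    ring
  have hWr : ∀ m : ℕ, C (a (m+2)) * (p (m+2) * q m - p (m+1) * q (m+1)) = -(C (a 1)) := by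
    intro m
    induction m with
    | zero =>
      have h := hrec 0
      rw [hp0] at h
      have hq := hqrec0
      rw [hq0] at hq
      rw [hq0]
      linear_combination p 1 * hq - h
    | succ k ih =>
      have h := hrec (k+1)
      have hq := hqrec k
      rw [show k+1+2 = k+3 from by omega, show k+1+1 = k+2 from by omega] at h ⊢
      linear_combination ih + p (k+2) * hq - q (k+1) * h
  have hWy : ∀ i ∈ Finset.Icc 1 (n-1),
      a n * ((p n).eval (y (n-1) i) * (q (n-2)).eval (y (n-1) i)) = -(a 1) := by
    intro i hi
    have hi' := Finset.mem_Icc.mp hi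
    have h := hWr (n-2)
    rw [show n-2+2 = n from by omega, show n-2+1 = n-1 from by omega] at h
    have he := congrArg (eval (y (n-1) i)) h
    simp only [eval_mul, eval_sub, eval_neg, eval_C] at he
    rw [hyroot (n-1) i hi'.1 hi'.2] at he
    linear_combination he
  have hlam1v : ∀ i ∈ Finset.Icc 1 (n-1),
      lam1 (n-1) i = ((a 1)^2 * ∑ j ∈ Finset.Icc 1 n, lam n j / (y (n-1) i - x n j)^2)⁻¹ := by
    intro i hi
    have hi' := Finset.mem_Icc.mp hi
    have h := hlam1 (n-1) i hi'.1 hi'.2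
    rw [show n-1+1 = n from by omega, show n-1-1 = n-2 from by omega] at h
    rw [h, hqd i hi]
    congr 1
    have hw := hWy i hi
    linear_combination (-(a 1) * ∑ j ∈ Finset.Icc 1 n, lam n j / (y (n-1) i - x n j)^2) * hw
  have hBval : ∀ i ∈ Finset.Icc 1 (n-1), ∀ j ∈ Finset.Icc 1 n,
      B i j = lam n j / (y (n-1) i - x n j)^2 / (∑ k ∈ Finset.Icc 1 n, lam n k / (y (n-1) i - x n k)^2) := by
    intro i hi j hj
    have hi' := Finset.mem_Icc.mp hi
    have hj' := Finset.mem_Icc.mp hj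
    rw [hB1 i j hi'.1 hi'.2 hj'.1 hj'.2, hlam1v i hi]
    have hS := hSpos i hi
    have hy2 : (y (n-1) i - x n j)^2 ≠ 0 := pow_ne_zero 2 (sub_ne_zero.mpr (hyx i hi j hj))
    field_simp [ne_of_gt ha1, ne_of_gt hS]
  have hqcoeff : (q (n-1)).coeff (n-1) = a 1 * (p n).coeff n := by
    rw [hqid, coeff_C_mul, finset_sum_coeff]
    have hterm : ∀ j ∈ Finset.Icc 1 n,
        (C (lam n j) * (p n /ₘ (X - C (x n j)))).coeff (n-1) = lam n j * (p n).coeff n := by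
      intro j hj
      rw [coeff_C_mul, hDfact j hj, coeff_C_mul]
      have hm : (∏ k ∈ (Finset.Icc 1 n).erase j, (X - C (x n k))).Monic :=
        monic_prod_of_monic _ _ (fun k _ => monic_X_sub_C _)
      have hdeg' : (∏ k ∈ (Finset.Icc 1 n).erase j, (X - C (x n k))).natDegree = n-1 := by
        rw [Polynomial.natDegree_prod_of_monic _ _ (fun k _ => monic_X_sub_C _)]
        simp only [natDegree_X_sub_C]
        rw [Finset.sum_const, smul_eq_mul, mul_one, Finset.card_erase_of_mem hj, hcardJ]
      have h1 := hm.coeff_natDegree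
      rw [hdeg'] at h1
      rw [h1, mul_one]
    rw [Finset.sum_congr rfl hterm, ← Finset.sum_mul, hsumlam, one_mul]
  have hDdegle : ∀ j ∈ Finset.Icc 1 n, (p n /ₘ (X - C (x n j))).natDegree ≤ n-1 := by
    intro j hj
    rw [hDfact j hj]
    apply le_trans natDegree_mul_le
    rw [natDegree_C, zero_add]
    rw [Polynomial.natDegree_prod_of_monic _ _ (fun k _ => monic_X_sub_C _)]
    simp only [natDegree_X_sub_C]
    rw [Finset.sum_const, smul_eq_mul, mul_one, Finset.card_erase_of_mem hj, hcardJ]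
  have hqc_ne : (q (n-1)).coeff (n-1) ≠ 0 := by
    rw [hqcoeff]
    exact mul_ne_zero (ne_of_gt ha1) hlcne
  have hqdegle : (q (n-1)).natDegree ≤ n-1 := by
    rw [hqid]
    apply le_trans natDegree_mul_le
    rw [natDegree_C, zero_add]
    apply Polynomial.natDegree_sum_le_of_forall_le
    intro j hj
    apply le_trans natDegree_mul_le
    rw [natDegree_C, zero_add]
    exact hDdegle j hj
  have hqdeg : (q (n-1)).natDegree = n-1 := le_antisymm hqdegle (le_natDegree_of_ne_zero hqc_ne)
  have hqne0 : q (n-1) ≠ 0 := by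
    intro h
    apply hqc_ne
    rw [h, coeff_zero]
  have hQdecomp : ∀ i ∈ Finset.Icc 1 (n-1),
      q (n-1) = (X - C (y (n-1) i)) * (q (n-1) /ₘ (X - C (y (n-1) i))) := by
    intro i hi
    have hi' := Finset.mem_Icc.mp hi
    have h := DD_key (y (n-1) i) (q (n-1))
    rwa [hyroot (n-1) i hi'.1 hi'.2, map_zero, zero_add] at h
  have hQne0 : ∀ i ∈ Finset.Icc 1 (n-1), q (n-1) /ₘ (X - C (y (n-1) i)) ≠ 0 := by
    intro i hi h
    apply hqne0
    rw [hQdecomp i hi, h, mul_zero]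
  have hQdeg : ∀ i ∈ Finset.Icc 1 (n-1), (q (n-1) /ₘ (X - C (y (n-1) i))).natDegree = n-2 := by
    intro i hi
    have h := congrArg natDegree (hQdecomp i hi)
    rw [hqdeg, Polynomial.natDegree_mul (X_sub_C_ne_zero _) (hQne0 i hi), natDegree_X_sub_C] at h
    omega
  have hQev : ∀ i ∈ Finset.Icc 1 (n-1), ∀ z : ℝ, z ≠ y (n-1) i →
      (q (n-1) /ₘ (X - C (y (n-1) i))).eval z = (q (n-1)).eval z / (z - y (n-1) i) := by
    intro i hi z hz
    have h := congrArg (eval z) (hQdecomp i hi)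
    rw [eval_mul, eval_sub, eval_X, eval_C] at h
    field_simp [sub_ne_zero.mpr hz]
    linarith [h]
  have hqdne : ∀ i ∈ Finset.Icc 1 (n-1), (derivative (q (n-1))).eval (y (n-1) i) ≠ 0 := by
    intro i hi
    rw [hqd i hi]
    exact mul_ne_zero (mul_ne_zero (neg_ne_zero.mpr (ne_of_gt ha1)) (hpny i hi))
      (ne_of_gt (hSpos i hi))
  have hQdev : ∀ i ∈ Finset.Icc 1 (n-1), (q (n-1) /ₘ (X - C (y (n-1) i))).eval (y (n-1) i)
      = (derivative (q (n-1))).eval (y (n-1) i) :=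
    fun i _ => (DD_deriv_eval _ _).symm
  set β : ℝ := ((C (a 1) * p n - X * q (n-1)).coeff (n-1)) / ((q (n-1)).coeff (n-1)) with hβ
  set r : ℕ → ℝ :=
    fun i => a 1 * (p n).eval (y (n-1) i) / (derivative (q (n-1))).eval (y (n-1) i) with hr
  clear_value β r
  have hrS : ∀ i ∈ Finset.Icc 1 (n-1),
      r i = -(∑ j ∈ Finset.Icc 1 n, lam n j / (y (n-1) i - x n j)^2)⁻¹ := by
    intro i hi
    simp only [hr]
    rw [hqd i hi]
    have hP := hpny i hi
    have hS := ne_of_gt (hSpos i hi)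
    field_simp
  have hcardI : (Finset.Icc 1 (n-1)).card = n-1 := by
    rw [Nat.card_Icc]
    omega
  have hinjy : Set.InjOn (y (n-1)) (Finset.Icc 1 (n-1)) := by
    intro j hj k hk hjk
    by_contra hne
    exact hyne j (by simpa using hj) k (by simpa using hk) hne hjk
  have hR : C (a 1) * p n = (X + C β) * q (n-1)
      + ∑ i ∈ Finset.Icc 1 (n-1), C (r i) * (q (n-1) /ₘ (X - C (y (n-1) i))) := by
    set R := C (a 1) * p n - (X + C β) * q (n-1)
      - ∑ i ∈ Finset.Icc 1 (n-1), C (r i) * (q (n-1) /ₘ (X - C (y (n-1) i))) with hRdef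
    have hRcoeff : ∀ m : ℕ, n-2 < m → R.coeff m = 0 := by
      intro m hm
      rw [hRdef, add_mul]
      simp only [coeff_sub, coeff_add, coeff_C_mul]
      rw [finset_sum_coeff]
      have hsQ : ∑ i ∈ Finset.Icc 1 (n-1),
          (C (r i) * (q (n-1) /ₘ (X - C (y (n-1) i)))).coeff m = 0 := by
        apply Finset.sum_eq_zero
        intro i hi
        rw [coeff_C_mul]
        rw [coeff_eq_zero_of_natDegree_lt (by rw [hQdeg i hi]; omega), mul_zero]
      rw [hsQ]
      rcases (show m = n-1 ∨ m = n ∨ n < m from by omega) with hc | hc | hc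
      · subst m
        rw [show n-1 = (n-2)+1 from by omega, coeff_X_mul, show (n-2)+1 = n-1 from by omega]
        have hβq : β * (q (n-1)).coeff (n-1) = (C (a 1) * p n - X * q (n-1)).coeff (n-1) := by
          rw [hβ, div_mul_cancel₀ _ hqc_ne]
        rw [coeff_sub, coeff_C_mul, show n-1 = (n-2)+1 from by omega, coeff_X_mul,
          show (n-2)+1 = n-1 from by omega] at hβq
        linarith [hβq]
      · subst m
        rw [show n = (n-1)+1 from by omega, coeff_X_mul, show (n-1)+1 = n from by omega]
        rw [hqcoeff]
        rw [coeff_eq_zero_of_natDegree_lt (show (q (n-1)).natDegree < n from by rw [hqdeg]; omega)]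
        ring
      · rw [show m = (m-1)+1 from by omega, coeff_X_mul]
        rw [coeff_eq_zero_of_natDegree_lt (show (q (n-1)).natDegree < m - 1 from by rw [hqdeg]; omega)]
        rw [coeff_eq_zero_of_natDegree_lt (show (q (n-1)).natDegree < (m-1)+1 from by rw [hqdeg]; omega)]
        rw [coeff_eq_zero_of_natDegree_lt (show (p n).natDegree < (m-1)+1 from by rw [hndeg n]; omega)]
        ring
    have hReval : ∀ k ∈ Finset.Icc 1 (n-1), R.eval (y (n-1) k) = 0 := by
      intro k hk
      have hk' := Finset.mem_Icc.mp hk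
      rw [hRdef]
      simp only [eval_sub, eval_add, eval_mul, eval_X, eval_C, eval_finset_sum]
      rw [hyroot (n-1) k hk'.1 hk'.2]
      rw [Finset.sum_eq_single_of_mem k hk]
      · rw [hQdev k hk]
        simp only [hr]
        rw [div_mul_cancel₀ _ (hqdne k hk)]
        ring
      · intro i hi hik
        have h0 : (q (n-1) /ₘ (X - C (y (n-1) i))).eval (y (n-1) k) = 0 := by
          rw [hQev i hi _ (hyne k hk i hi (fun h => hik h.symm)), hyroot (n-1) k hk'.1 hk'.2, zero_div]
        rw [h0, mul_zero]
    have hR0 : R = 0 := by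
      apply Polynomial.eq_zero_of_natDegree_lt_card_of_eval_eq_zero' R
        ((Finset.Icc 1 (n-1)).image (y (n-1)))
      · intro z hz
        obtain ⟨k, hk, rfl⟩ := Finset.mem_image.mp hz
        exact hReval k hk
      · rw [Finset.card_image_of_injOn hinjy, hcardI]
        have h := Polynomial.natDegree_le_iff_coeff_eq_zero.mpr hRcoeff
        omega
    rw [hRdef] at hR0
    linear_combination hR0
  have hcol : ∀ j ∈ Finset.Icc 1 n, lam n j + ∑ i ∈ Finset.Icc 1 (n-1), B i j = 1 := by
    intro j hj
    have hj' := Finset.mem_Icc.mp hj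
    have hqx := hqnx j hj
    have hqxne : (q (n-1)).eval (x n j) ≠ 0 := by
      rw [hqx]
      exact mul_ne_zero (mul_ne_zero (ne_of_gt ha1) (ne_of_gt (hlampos j hj))) (hpd_ne j hj)
    have hxyne : ∀ i ∈ Finset.Icc 1 (n-1), x n j - y (n-1) i ≠ 0 :=
      fun i hi => sub_ne_zero.mpr (fun h => (hyx i hi j hj) h.symm)
    have hRev := congrArg (eval (x n j)) hR
    simp only [eval_mul, eval_add, eval_X, eval_C, eval_finset_sum] at hRev
    rw [hxroot n j hj'.1 hj'.2] at hRev
    have hsum1 : ∑ i ∈ Finset.Icc 1 (n-1),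
        r i * (q (n-1) /ₘ (X - C (y (n-1) i))).eval (x n j)
        = (q (n-1)).eval (x n j) * ∑ i ∈ Finset.Icc 1 (n-1), r i / (x n j - y (n-1) i) := by
      rw [Finset.mul_sum]
      apply Finset.sum_congr rfl
      intro i hi
      rw [hQev i hi _ (fun h => (hyx i hi j hj) h.symm)]
      ring
    rw [hsum1] at hRev
    have hT : (x n j + β) + ∑ i ∈ Finset.Icc 1 (n-1), r i / (x n j - y (n-1) i) = 0 := by
      have h2 : (q (n-1)).eval (x n j)
          * ((x n j + β) + ∑ i ∈ Finset.Icc 1 (n-1), r i / (x n j - y (n-1) i)) = 0 := by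
        linear_combination -hRev
      rcases mul_eq_zero.mp h2 with h' | h'
      · exact absurd h' hqxne
      · exact h'
    have hd := congrArg derivative hR
    simp only [derivative_add, derivative_mul, derivative_C, derivative_X,
      Polynomial.derivative_sum, zero_mul, zero_add, add_zero, one_mul] at hd
    have hde := congrArg (eval (x n j)) hd
    simp only [eval_mul, eval_add, eval_X, eval_C, eval_finset_sum] at hde
    have hsum2 : ∑ i ∈ Finset.Icc 1 (n-1),
        r i * (derivative (q (n-1) /ₘ (X - C (y (n-1) i)))).eval (x n j)
        = (derivative (q (n-1))).eval (x n j)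
            * (∑ i ∈ Finset.Icc 1 (n-1), r i / (x n j - y (n-1) i))
          - (q (n-1)).eval (x n j)
            * (∑ i ∈ Finset.Icc 1 (n-1), r i / (x n j - y (n-1) i)^2) := by
      rw [Finset.mul_sum, Finset.mul_sum, ← Finset.sum_sub_distrib]
      apply Finset.sum_congr rfl
      intro i hi
      have hne : x n j - y (n-1) i ≠ 0 := hxyne i hi
      have hder := congrArg (eval (x n j)) (DD_deriv (y (n-1) i) (q (n-1)))
      rw [eval_add, eval_mul, eval_sub, eval_X, eval_C,
        hQev i hi _ (fun h => (hyx i hi j hj) h.symm)] at hder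
      rw [show (derivative (q (n-1))).eval (x n j) * (r i / (x n j - y (n-1) i))
            - (q (n-1)).eval (x n j) * (r i / (x n j - y (n-1) i)^2)
          = ((derivative (q (n-1))).eval (x n j) * (r i * (x n j - y (n-1) i))
            - (q (n-1)).eval (x n j) * r i) / (x n j - y (n-1) i)^2 from by
        field_simp]
      rw [eq_div_iff (pow_ne_zero 2 (hxyne i hi))]
      field_simp at hder
      linear_combination (-(r i)) * hder
    rw [hsum2] at hde
    have hkey : a 1 * (derivative (p n)).eval (x n j)
        = (q (n-1)).eval (x n j)
          * (1 - ∑ i ∈ Finset.Icc 1 (n-1), r i / (x n j - y (n-1) i)^2) := by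
      linear_combination hde + (derivative (q (n-1))).eval (x n j) * hT
    rw [hqx] at hkey
    have hpdj := hpd_ne j hj
    have h1 : 1 = lam n j * (1 - ∑ i ∈ Finset.Icc 1 (n-1), r i / (x n j - y (n-1) i)^2) := by
      apply mul_left_cancel₀ (mul_ne_zero (ne_of_gt ha1) hpdj)
      calc a 1 * (derivative (p n)).eval (x n j) * 1
          = a 1 * (derivative (p n)).eval (x n j) := by ring
        _ = a 1 * lam n j * (derivative (p n)).eval (x n j)
            * (1 - ∑ i ∈ Finset.Icc 1 (n-1), r i / (x n j - y (n-1) i)^2) := hkey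
        _ = a 1 * (derivative (p n)).eval (x n j)
            * (lam n j * (1 - ∑ i ∈ Finset.Icc 1 (n-1), r i / (x n j - y (n-1) i)^2)) := by ring
    have hBij : ∀ i ∈ Finset.Icc 1 (n-1),
        B i j = (-(lam n j)) * (r i / (x n j - y (n-1) i)^2) := by
      intro i hi
      rw [hBval i hi j hj, hrS i hi,
        show (y (n-1) i - x n j)^2 = (x n j - y (n-1) i)^2 from by ring]
      ring
    rw [Finset.sum_congr rfl hBij, ← Finset.mul_sum]
    linear_combination -h1
  have hrowI : ∀ i ∈ Finset.Icc 1 (n-1), ∑ j ∈ Finset.Icc 1 n, B i j = 1 := by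
    intro i hi
    rw [Finset.sum_congr rfl (fun j hj => hBval i hi j hj), ← Finset.sum_div]
    exact div_self (ne_of_gt (hSpos i hi))
  have hIccsplit : ∀ f : ℕ → ℝ,
      ∑ i ∈ Finset.Icc 1 n, f i = (∑ i ∈ Finset.Icc 1 (n-1), f i) + f n := by
    intro f
    have h2 := Finset.sum_Icc_succ_top (show 1 ≤ n - 1 + 1 from by omega) f
    rw [show n - 1 + 1 = n from by omega] at h2
    exact h2
  refine ⟨?_, ?_, ?_, ?_, ?_⟩
  · intro i j h1i hin h1j hjn
    have hj : j ∈ Finset.Icc 1 n := Finset.mem_Icc.mpr ⟨h1j, hjn⟩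
    rcases Nat.lt_or_ge i n with hi | hi
    · have hiI : i ∈ Finset.Icc 1 (n-1) := Finset.mem_Icc.mpr ⟨h1i, by omega⟩
      rw [hBval i hiI j hj]
      apply le_of_lt
      apply div_pos (div_pos (hlampos j hj)
        (pow_two_pos_of_ne_zero (sub_ne_zero.mpr (hyx i hiI j hj)))) (hSpos i hiI)
    · have hieq : i = n := by omega
      subst hieq
      rw [hB2 j h1j hjn]
      exact le_of_lt (hlampos j hj)
  · intro i h1i hin
    rcases Nat.lt_or_ge i n with hi | hi
    · exact hrowI i (Finset.mem_Icc.mpr ⟨h1i, by omega⟩)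
    · have hieq : i = n := by omega
      subst hieq
      rw [Finset.sum_congr rfl
        (fun j hj => hB2 j (Finset.mem_Icc.mp hj).1 (Finset.mem_Icc.mp hj).2)]
      exact hsumlam
  · intro j h1j hjn
    have hj : j ∈ Finset.Icc 1 n := Finset.mem_Icc.mpr ⟨h1j, hjn⟩
    rw [hIccsplit (fun i => B i j)]
    have hc := hcol j hj
    rw [hB2 j h1j hjn]
    linarith
  · intro i h1i hin1
    have hiI : i ∈ Finset.Icc 1 (n-1) := Finset.mem_Icc.mpr ⟨h1i, hin1⟩
    have hterm : ∀ j ∈ Finset.Icc 1 n, B i j * x n j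
        = y (n-1) i * B i j - (lam n j / (y (n-1) i - x n j))
            / (∑ k ∈ Finset.Icc 1 n, lam n k / (y (n-1) i - x n k)^2) := by
      intro j hj
      rw [hBval i hiI j hj]
      have hd : y (n-1) i - x n j ≠ 0 := sub_ne_zero.mpr (hyx i hiI j hj)
      have hS := ne_of_gt (hSpos i hiI)
      field_simp
      ring
    rw [Finset.sum_congr rfl hterm, Finset.sum_sub_distrib, ← Finset.mul_sum,
      ← Finset.sum_div, hsum0 i hiI, zero_div, sub_zero, hrowI i hiI, mul_one]
  · rw [Finset.sum_congr rfl (fun j hj => by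
      rw [hB2 j (Finset.mem_Icc.mp hj).1 (Finset.mem_Icc.mp hj).2])]
    exact hsumlamx.symm
end

section
/- Fix an integer n ≥ 2 and let f : ℝ → ℝ be convex on the interval [a,b]. Then Σ_{i=1}^{n-1} f(y_{i,n-1}) + f(b_0) ≤ Σ_{j=1}^{n} f(x_{j,n}). (Here all the points y_{i,n-1}, x_{j,n} lie in (a,b) and b_0 lies in [a,b].) -/
open MeasureTheory Polynomial Finset

/-- Two-point convexity: if `s, t ∈ [u,v]` and `s + t = u + v` then
`f s + f t ≤ f u + f v` for `f` convex on `[lo,hi] ∋ u, v`. -/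
lemma stmt_9_conv2 {lo hi : ℝ} {f : ℝ → ℝ} (hf : ConvexOn ℝ (Set.Icc lo hi) f)
    {u v s t : ℝ} (hu : u ∈ Set.Icc lo hi) (hv : v ∈ Set.Icc lo hi)
    (hs : s ∈ Set.Icc u v) (ht : t ∈ Set.Icc u v) (hst : s + t = u + v) :
    f s + f t ≤ f u + f v := by
  rcases eq_or_lt_of_le (hs.1.trans hs.2) with h | h
  · have hsu : s = u := le_antisymm (by rw [h]; exact hs.2) hs.1
    have htu : t = u := le_antisymm (by rw [h]; exact ht.2) ht.1
    rw [hsu, htu, ← h]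
  · have hvu : 0 < v - u := sub_pos.mpr h
    set θ : ℝ := (v - s) / (v - u) with hθdef
    have hc : θ * (v - u) = v - s := div_mul_cancel₀ _ hvu.ne'
    have hθ0 : 0 ≤ θ := div_nonneg (sub_nonneg.mpr hs.2) hvu.le
    have hθ1 : θ ≤ 1 := by
      rw [div_le_one hvu]; linarith [hs.1]
    have h1 : θ * u + (1 - θ) * v = s := by linear_combination (-1 : ℝ) * hc
    have h2 : (1 - θ) * u + θ * v = t := by linear_combination hc - hst
    have key1 := hf.2 hu hv (show (0:ℝ) ≤ θ from hθ0)
      (show (0:ℝ) ≤ 1 - θ by linarith) (show θ + (1 - θ) = 1 by ring)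
    have key2 := hf.2 hu hv (show (0:ℝ) ≤ 1 - θ by linarith)
      (show (0:ℝ) ≤ θ from hθ0) (show (1 - θ) + θ = 1 by ring)
    simp only [smul_eq_mul] at key1 key2
    rw [h1] at key1
    rw [h2] at key2
    linarith

lemma stmt_9_shiftsum (g : ℕ → ℝ) (m : ℕ) :
    g 1 + ∑ i ∈ Finset.Icc 1 m, g (i + 1) = ∑ j ∈ Finset.Icc 1 (m + 1), g j := by
  induction m with
  | zero => simp
  | succ m ih =>
    rw [Finset.sum_Icc_succ_top (by omega : 1 ≤ m + 1) (fun i => g (i + 1)),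
      Finset.sum_Icc_succ_top (by omega : 1 ≤ m + 1 + 1) g]
    linarith

/-- Key combinatorial lemma: interlacing plus equal sums implies the convex
sum inequality. -/
lemma stmt_9_keylem {lo hi : ℝ} {f : ℝ → ℝ} (hf : ConvexOn ℝ (Set.Icc lo hi) f) :
    ∀ n : ℕ, ∀ x y : ℕ → ℝ, ∀ c : ℝ,
      (∀ j, 1 ≤ j → j ≤ n + 1 → x j ∈ Set.Icc lo hi) →
      c ∈ Set.Icc lo hi →
      (∀ i, 1 ≤ i → i ≤ n → x i ≤ y i ∧ y i ≤ x (i + 1)) →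
      x 1 ≤ c →
      c = (∑ j ∈ Finset.Icc 1 (n + 1), x j) - ∑ i ∈ Finset.Icc 1 n, y i →
      (∑ i ∈ Finset.Icc 1 n, f (y i)) + f c ≤ ∑ j ∈ Finset.Icc 1 (n + 1), f (x j) := by
  intro n
  induction n with
  | zero =>
    intro x y c hx hc hint hlow hsum
    have h0 : (Finset.Icc 1 0 : Finset ℕ) = ∅ := by decide
    rw [h0] at hsum ⊢
    simp only [Finset.sum_empty, Finset.Icc_self, Finset.sum_singleton, sub_zero] at hsum ⊢
    rw [hsum]
    simp
  | succ n ih =>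
    intro x y c hx hc hint hlow hsum
    have hyn := hint (n + 1) (by omega) le_rfl
    have hx1 : x (n + 1) ∈ Set.Icc lo hi := hx (n + 1) (by omega) (by omega)
    have hx2 : x (n + 2) ∈ Set.Icc lo hi := hx (n + 2) (by omega) le_rfl
    set c' : ℝ := x (n + 1) + x (n + 2) - y (n + 1) with hc'def
    have hc'1 : x (n + 1) ≤ c' := by rw [hc'def]; linarith [hyn.2]
    have hc'2 : c' ≤ x (n + 2) := by rw [hc'def]; linarith [hyn.1]
    have hc'mem : c' ∈ Set.Icc lo hi := ⟨le_trans hx1.1 hc'1, le_trans hc'2 hx2.2⟩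
    set x' : ℕ → ℝ := Function.update x (n + 1) c' with hx'def
    have hx'eq : ∀ j, j ≠ n + 1 → x' j = x j := fun j hj => Function.update_of_ne hj _ _
    have hx'n : x' (n + 1) = c' := Function.update_self _ _ _
    have hsum1 : ∑ j ∈ Finset.Icc 1 (n + 1), x' j = (∑ j ∈ Finset.Icc 1 n, x j) + c' := by
      rw [Finset.sum_Icc_succ_top (by omega : 1 ≤ n + 1) x', hx'n]
      congr 1
      refine Finset.sum_congr rfl fun j hj => ?_
      rw [Finset.mem_Icc] at hj
      exact hx'eq j (by omega)
    have hsumx : ∑ j ∈ Finset.Icc 1 (n + 2), x j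
        = (∑ j ∈ Finset.Icc 1 n, x j) + x (n + 1) + x (n + 2) := by
      rw [Finset.sum_Icc_succ_top (by omega : 1 ≤ n + 2) x,
        Finset.sum_Icc_succ_top (by omega : 1 ≤ n + 1) x]
    have hsumy : ∑ i ∈ Finset.Icc 1 (n + 1), y i
        = (∑ i ∈ Finset.Icc 1 n, y i) + y (n + 1) :=
      Finset.sum_Icc_succ_top (by omega : 1 ≤ n + 1) y
    have hx' : ∀ j, 1 ≤ j → j ≤ n + 1 → x' j ∈ Set.Icc lo hi := by
      intro j h1 h2
      by_cases hj : j = n + 1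
      · rw [hj, hx'n]; exact hc'mem
      · rw [hx'eq j hj]; exact hx j h1 (by omega)
    have hint' : ∀ i, 1 ≤ i → i ≤ n → x' i ≤ y i ∧ y i ≤ x' (i + 1) := by
      intro i h1 h2
      have h := hint i h1 (by omega)
      constructor
      · rw [hx'eq i (by omega)]; exact h.1
      · by_cases hi : i + 1 = n + 1
        · have : i = n := by omega
          subst this
          rw [hi, hx'n]
          exact le_trans h.2 hc'1
        · rw [hx'eq _ hi]; exact h.2
    have hsum' : c = (∑ j ∈ Finset.Icc 1 (n + 1), x' j) - ∑ i ∈ Finset.Icc 1 n, y i := by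
      rw [hsum1, hsum, hsumx, hsumy, hc'def]; ring
    have hlow' : x' 1 ≤ c := by
      rcases Nat.eq_zero_or_pos n with rfl | hpos
      · have hcc : c = c' := by
          rw [hsum']
          have h0 : (Finset.Icc 1 0 : Finset ℕ) = ∅ := by decide
          rw [h0]
          simp [hx'n]
        rw [hcc]
        exact le_of_eq (hx'n)
      · rw [hx'eq 1 (by omega)]; exact hlow
    have ihapp := ih x' y c hx' hc hint' hlow' hsum'
    have hconv : f (y (n + 1)) + f c' ≤ f (x (n + 1)) + f (x (n + 2)) :=
      stmt_9_conv2 hf hx1 hx2 ⟨hyn.1, hyn.2⟩ ⟨hc'1, hc'2⟩ (by rw [hc'def]; ring)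
    have hfsum1 : ∑ j ∈ Finset.Icc 1 (n + 1), f (x' j)
        = (∑ j ∈ Finset.Icc 1 n, f (x j)) + f c' := by
      rw [Finset.sum_Icc_succ_top (by omega : 1 ≤ n + 1) (fun j => f (x' j)), hx'n]
      congr 1
      refine Finset.sum_congr rfl fun j hj => ?_
      rw [Finset.mem_Icc] at hj
      rw [hx'eq j (by omega)]
    rw [hfsum1] at ihapp
    rw [Finset.sum_Icc_succ_top (by omega : 1 ≤ n + 1) (fun i => f (y i)),
      Finset.sum_Icc_succ_top (by omega : 1 ≤ n + 2) (fun j => f (x j)),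
      Finset.sum_Icc_succ_top (by omega : 1 ≤ n + 1) (fun j => f (x j))]
    linarith

/-- Leading/next-to-leading coefficient facts for a sequence of polynomials
satisfying a three-term recurrence. -/
lemma stmt_9_polyaux (A B : ℕ → ℝ) (hA : ∀ m, A (m + 1) ≠ 0) (P : ℕ → Polynomial ℝ)
    (h0 : (P 0).coeff 0 ≠ 0) (h0' : ∀ k, 0 < k → (P 0).coeff k = 0)
    (hr0 : Polynomial.X * P 0 = Polynomial.C (A 1) * P 1 + Polynomial.C (B 0) * P 0)
    (hr : ∀ m, Polynomial.X * P (m + 1) = Polynomial.C (A (m + 2)) * P (m + 2) +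
        Polynomial.C (B (m + 1)) * P (m + 1) + Polynomial.C (A (m + 1)) * P m) :
    ∀ m, ((P m).coeff m ≠ 0 ∧ (∀ k, m < k → (P m).coeff k = 0)) ∧
      ((P (m + 1)).coeff (m + 1) ≠ 0 ∧ (∀ k, m + 1 < k → (P (m + 1)).coeff k = 0)) ∧
      (P (m + 1)).coeff m
        = -(∑ k ∈ Finset.range (m + 1), B k) * (P (m + 1)).coeff (m + 1) := by
  have hco0 : ∀ k, (P 0).coeff k
      = A 1 * (P 1).coeff (k + 1) + B 0 * (P 0).coeff (k + 1) := by
    intro k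
    have h := congrArg (fun r => Polynomial.coeff r (k + 1)) hr0
    simpa [Polynomial.coeff_X_mul, Polynomial.coeff_C_mul] using h
  have hz0 : 0 = A 1 * (P 1).coeff 0 + B 0 * (P 0).coeff 0 := by
    have h := congrArg (fun r => Polynomial.coeff r 0) hr0
    simpa [Polynomial.mul_coeff_zero, Polynomial.coeff_C_mul] using h
  have hco : ∀ m k, (P (m + 1)).coeff k
      = A (m + 2) * (P (m + 2)).coeff (k + 1) + B (m + 1) * (P (m + 1)).coeff (k + 1)
        + A (m + 1) * (P m).coeff (k + 1) := by
    intro m k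
    have h := congrArg (fun r => Polynomial.coeff r (k + 1)) (hr m)
    simpa [Polynomial.coeff_X_mul, Polynomial.coeff_C_mul] using h
  intro m
  induction m with
  | zero =>
    have hvan1 : ∀ k, 1 < k → (P 1).coeff k = 0 := by
      intro k hk
      obtain ⟨j, rfl⟩ : ∃ j, k = j + 1 := ⟨k - 1, by omega⟩
      have h := hco0 j
      rw [h0' j (by omega), h0' (j + 1) (by omega), mul_zero, add_zero] at h
      exact (mul_eq_zero.mp h.symm).resolve_left (hA 0)
    have hlead1 : (P 0).coeff 0 = A 1 * (P 1).coeff 1 := by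
      have h := hco0 0
      rwa [h0' 1 (by omega), mul_zero, add_zero] at h
    have hne1 : (P 1).coeff 1 ≠ 0 := by
      intro hz
      rw [hz, mul_zero] at hlead1
      exact h0 hlead1
    refine ⟨⟨h0, h0'⟩, ⟨hne1, hvan1⟩, ?_⟩
    rw [Finset.sum_range_one]
    apply mul_left_cancel₀ (hA 0)
    have : A 1 * (P 1).coeff 0 = -(B 0) * (P 0).coeff 0 := by linarith [hz0]
    rw [this, hlead1]
    ring
  | succ m ih =>
    obtain ⟨⟨hnem, hvanm⟩, ⟨hne1, hvan1⟩, hrel⟩ := ih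
    have hvan2 : ∀ k, m + 2 < k → (P (m + 2)).coeff k = 0 := by
      intro k hk
      obtain ⟨j, rfl⟩ : ∃ j, k = j + 1 := ⟨k - 1, by omega⟩
      have h := hco m j
      rw [hvan1 j (by omega), hvan1 (j + 1) (by omega), hvanm (j + 1) (by omega),
        mul_zero, mul_zero, add_zero, add_zero] at h
      exact (mul_eq_zero.mp h.symm).resolve_left (hA (m + 1))
    have hlead2 : (P (m + 1)).coeff (m + 1) = A (m + 2) * (P (m + 2)).coeff (m + 2) := by
      have h := hco m (m + 1)
      rwa [hvan1 (m + 2) (by omega), hvanm (m + 2) (by omega),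
        mul_zero, mul_zero, add_zero, add_zero] at h
    have hne2 : (P (m + 2)).coeff (m + 2) ≠ 0 := by
      intro hz
      rw [hz, mul_zero] at hlead2
      exact hne1 hlead2
    have e1 : (P (m + 1)).coeff m = A (m + 2) * (P (m + 2)).coeff (m + 1)
        + B (m + 1) * (P (m + 1)).coeff (m + 1) := by
      have h := hco m m
      rwa [hvanm (m + 1) (by omega), mul_zero, add_zero] at h
    refine ⟨⟨hne1, hvan1⟩, ⟨hne2, hvan2⟩, ?_⟩
    rw [Finset.sum_range_succ]
    apply mul_left_cancel₀ (hA (m + 1))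
    linear_combination (-1 : ℝ) * e1 + hrel
      - ((∑ k ∈ Finset.range (m + 1), B k) + B (m + 1)) * hlead2

lemma stmt_9_monoaux (m : ℕ) (r : ℕ → ℝ)
    (hmono : ∀ j, 1 ≤ j → j + 1 ≤ m → r j < r (j + 1)) :
    ∀ i j, 1 ≤ i → i < j → j ≤ m → r i < r j := by
  intro i j hi hij hjm
  have key : ∀ j, i + 1 ≤ j → j ≤ m → r i < r j := by
    intro j hj
    induction j, hj using Nat.le_induction with
    | base => intro h; exact hmono i hi h
    | succ j hj ihj =>
      intro h
      exact lt_trans (ihj (by omega)) (hmono j (by omega) h)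
  exact key j (by omega) hjm

/-- Vieta: sum of the roots in terms of the top two coefficients. -/
lemma stmt_9_vieta (P : Polynomial ℝ) (m : ℕ) (hm : 1 ≤ m) (r : ℕ → ℝ)
    (hroot : ∀ j, 1 ≤ j → j ≤ m → P.eval (r j) = 0)
    (hmono : ∀ j, 1 ≤ j → j + 1 ≤ m → r j < r (j + 1))
    (hC : P.coeff m ≠ 0) (hhi : ∀ k, m < k → P.coeff k = 0) :
    P.coeff (m - 1) = -(∑ j ∈ Finset.Icc 1 m, r j) * P.coeff m := by
  classical
  set s : Finset ℕ := Finset.Icc 1 m with hs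
  have hmem : ∀ j ∈ s, 1 ≤ j ∧ j ≤ m := by
    intro j hj; rw [hs, Finset.mem_Icc] at hj; exact hj
  have hinj : Set.InjOn r ↑s := by
    intro i hi j hj hij
    rw [Finset.mem_coe, hs, Finset.mem_Icc] at hi hj
    rcases lt_trichotomy i j with h | h | h
    · exact absurd hij (ne_of_lt (stmt_9_monoaux m r hmono i j hi.1 h hj.2))
    · exact h
    · exact absurd hij.symm (ne_of_lt (stmt_9_monoaux m r hmono j i hj.1 h hi.2))
  set Q : Polynomial ℝ := ∏ j ∈ s, (Polynomial.X - Polynomial.C (r j)) with hQ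
  have hQmonic : Q.Monic :=
    Polynomial.monic_prod_of_monic _ _ fun j _ => Polynomial.monic_X_sub_C _
  have hscard : s.card = m := by rw [hs, Nat.card_Icc]; omega
  have hQdeg : Q.natDegree = m := by
    rw [hQ, Polynomial.natDegree_prod _ _ (fun j _ => Polynomial.X_sub_C_ne_zero _)]
    simp [Polynomial.natDegree_X_sub_C, hscard]
  set c : ℝ := P.coeff m with hc
  set D : Polynomial ℝ := P - Polynomial.C c * Q with hD
  have hDcoeff : ∀ k, m ≤ k → D.coeff k = 0 := by
    intro k hk
    rcases eq_or_lt_of_le hk with rfl | hk'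
    · have hQm : Q.coeff m = 1 := by
        have h2 := hQmonic.coeff_natDegree
        rwa [hQdeg] at h2
      rw [hD, Polynomial.coeff_sub, Polynomial.coeff_C_mul, hQm, hc]
      ring
    · have h1 : P.coeff k = 0 := hhi k hk'
      have h2 : Q.coeff k = 0 := Polynomial.coeff_eq_zero_of_natDegree_lt (by omega)
      rw [hD]
      simp [Polynomial.coeff_sub, Polynomial.coeff_C_mul, h1, h2]
  have hDeval : ∀ j ∈ s, D.eval (r j) = 0 := by
    intro j hj
    have h1 : P.eval (r j) = 0 := hroot j (hmem j hj).1 (hmem j hj).2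
    have h2 : Q.eval (r j) = 0 := by
      rw [hQ, Polynomial.eval_prod]
      exact Finset.prod_eq_zero hj (by simp)
    rw [hD]
    simp [h1, h2]
  have hD0 : D = 0 := by
    by_cases hne : D = 0
    · exact hne
    · have hdeg : D.natDegree < m := by
        by_contra hge
        exact hne (Polynomial.leadingCoeff_eq_zero.mp (hDcoeff _ (not_lt.mp hge)))
      refine Polynomial.eq_zero_of_natDegree_lt_card_of_eval_eq_zero' D (s.image r) ?_ ?_
      · intro t ht
        rw [Finset.mem_image] at ht
        obtain ⟨j, hj, rfl⟩ := ht
        exact hDeval j hj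
      · rwa [Finset.card_image_of_injOn hinj, hscard]
  have hPQ : P = Polynomial.C c * Q := by
    have := sub_eq_zero.mp (hD ▸ hD0)
    exact this
  have hQc : Q.coeff (m - 1) = -∑ j ∈ s, r j := by
    have h := Polynomial.prod_X_sub_C_coeff_card_pred s r (by rw [hscard]; omega)
    rwa [hscard] at h
  rw [hPQ, Polynomial.coeff_C_mul, hQc]
  ring

theorem stmt_9
    (μ : Measure ℝ) [IsProbabilityMeasure μ]
    (lo hi : ℝ)
    (hsupp : μ (Set.Icc lo hi)ᶜ = 0)
    (hinf : ∀ s : Finset ℝ, μ (↑s : Set ℝ)ᶜ ≠ 0)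
    (p : ℕ → Polynomial ℝ)
    (hdeg : ∀ m : ℕ, (p m).degree = m)
    (hlead : ∀ m : ℕ, 0 < (p m).leadingCoeff)
    (horth : ∀ m l : ℕ, ∫ t, (p m).eval t * (p l).eval t ∂μ = if m = l then 1 else 0)
    (a b : ℕ → ℝ)
    (hapos : ∀ m : ℕ, 1 ≤ m → 0 < a m)
    (hrec0 : Polynomial.X * p 0 = Polynomial.C (a 1) * p 1 + Polynomial.C (b 0) * p 0)
    (hrec : ∀ m : ℕ, Polynomial.X * p (m + 1) =
      Polynomial.C (a (m + 2)) * p (m + 2) + Polynomial.C (b (m + 1)) * p (m + 1) +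
        Polynomial.C (a (m + 1)) * p m)
    (x : ℕ → ℕ → ℝ)
    (hxroot : ∀ m j : ℕ, 1 ≤ j → j ≤ m → (p m).eval (x m j) = 0)
    (hxmono : ∀ m j : ℕ, 1 ≤ j → j + 1 ≤ m → x m j < x m (j + 1))
    (q : ℕ → Polynomial ℝ)
    (hq0 : q 0 = 1)
    (hqrec0 : Polynomial.X * q 0 = Polynomial.C (a 2) * q 1 + Polynomial.C (b 1) * q 0)
    (hqrec : ∀ m : ℕ, Polynomial.X * q (m + 1) =
      Polynomial.C (a (m + 3)) * q (m + 2) + Polynomial.C (b (m + 2)) * q (m + 1) +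
        Polynomial.C (a (m + 2)) * q m)
    (y : ℕ → ℕ → ℝ)
    (hyroot : ∀ m j : ℕ, 1 ≤ j → j ≤ m → (q m).eval (y m j) = 0)
    (hymono : ∀ m j : ℕ, 1 ≤ j → j + 1 ≤ m → y m j < y m (j + 1))
    (hxy : ∀ m j : ℕ, 1 ≤ j → j ≤ m → x (m + 1) j < y m j ∧ y m j < x (m + 1) (j + 1))
    (n : ℕ) (hn : 2 ≤ n)
    (f : ℝ → ℝ) (hf : ConvexOn ℝ (Set.Icc lo hi) f)
    (hx_in : ∀ j : ℕ, 1 ≤ j → j ≤ n → x n j ∈ Set.Ioo lo hi)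
    (hy_in : ∀ i : ℕ, 1 ≤ i → i ≤ n - 1 → y (n - 1) i ∈ Set.Ioo lo hi)
    (hb_in : b 0 ∈ Set.Icc lo hi) :
    (∑ i ∈ Finset.Icc 1 (n - 1), f (y (n - 1) i)) + f (b 0) ≤
      ∑ j ∈ Finset.Icc 1 n, f (x n j) := by
  obtain ⟨k, rfl⟩ : ∃ k, n = k + 2 := ⟨n - 2, by omega⟩
  have hn1 : k + 2 - 1 = k + 1 := rfl
  rw [hn1]
  -- coefficient facts for p
  have hAne : ∀ m : ℕ, a (m + 1) ≠ 0 := fun m => (hapos (m + 1) (by omega)).ne'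
  have hpdegnat : ∀ m : ℕ, (p m).natDegree = m := fun m =>
    Polynomial.natDegree_eq_of_degree_eq_some (hdeg m)
  have hp0 : (p 0).coeff 0 ≠ 0 := by
    have h := hlead 0
    rw [Polynomial.leadingCoeff, hpdegnat 0] at h
    exact h.ne'
  have hp0' : ∀ kk, 0 < kk → (p 0).coeff kk = 0 := fun kk hkk =>
    Polynomial.coeff_eq_zero_of_degree_lt (by rw [hdeg 0]; exact_mod_cast hkk)
  have Hp := stmt_9_polyaux a b hAne p hp0 hp0' hrec0 hrec (k + 1)
  -- coefficient facts for q
  have hq00 : (q 0).coeff 0 ≠ 0 := by rw [hq0]; simp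
  have hq00' : ∀ kk, 0 < kk → (q 0).coeff kk = 0 := by
    intro kk hkk
    have hne : kk ≠ 0 := by omega
    simp [hq0, Polynomial.coeff_one, hne, Ne.symm hne]
  have Hq := stmt_9_polyaux (fun m => a (m + 1)) (fun m => b (m + 1))
    (fun m => hAne (m + 1)) q hq00 hq00' hqrec0 (fun m => hqrec m) k
  -- Vieta for p (k+2)
  have hx_sum : (p (k + 2)).coeff (k + 1)
      = -(∑ j ∈ Finset.Icc 1 (k + 2), x (k + 2) j) * (p (k + 2)).coeff (k + 2) :=
    stmt_9_vieta (p (k + 2)) (k + 2) (by omega) (x (k + 2))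
      (fun j h1 h2 => hxroot (k + 2) j h1 h2)
      (fun j h1 h2 => hxmono (k + 2) j h1 h2)
      Hp.2.1.1 Hp.2.1.2
  have hxS : ∑ j ∈ Finset.Icc 1 (k + 2), x (k + 2) j = ∑ i ∈ Finset.range (k + 2), b i := by
    have h := hx_sum.symm.trans Hp.2.2
    have h2 := mul_right_cancel₀ Hp.2.1.1 h
    linarith
  -- Vieta for q (k+1)
  have hy_sum : (q (k + 1)).coeff k
      = -(∑ i ∈ Finset.Icc 1 (k + 1), y (k + 1) i) * (q (k + 1)).coeff (k + 1) :=
    stmt_9_vieta (q (k + 1)) (k + 1) (by omega) (y (k + 1))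
      (fun j h1 h2 => hyroot (k + 1) j h1 h2)
      (fun j h1 h2 => hymono (k + 1) j h1 h2)
      Hq.2.1.1 Hq.2.1.2
  have hyS : ∑ i ∈ Finset.Icc 1 (k + 1), y (k + 1) i
      = ∑ i ∈ Finset.range (k + 1), b (i + 1) := by
    have h := hy_sum.symm.trans Hq.2.2
    have h2 := mul_right_cancel₀ Hq.2.1.1 h
    linarith
  -- trace identity
  have hb0 : b 0 = (∑ j ∈ Finset.Icc 1 (k + 2), x (k + 2) j)
      - ∑ i ∈ Finset.Icc 1 (k + 1), y (k + 1) i := by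
    rw [hxS, hyS, Finset.sum_range_succ' b (k + 1)]
    ring
  -- lower bound x 1 ≤ b 0
  have hlow : x (k + 2) 1 ≤ b 0 := by
    have hle : ∀ i ∈ Finset.Icc 1 (k + 1), y (k + 1) i ≤ x (k + 2) (i + 1) := by
      intro i hi
      rw [Finset.mem_Icc] at hi
      exact (hxy (k + 1) i hi.1 hi.2).2.le
    have hsum_le := Finset.sum_le_sum hle
    have hshift := stmt_9_shiftsum (x (k + 2)) (k + 1)
    linarith
  -- apply the key lemma
  exact stmt_9_keylem hf (k + 1) (x (k + 2)) (y (k + 1)) (b 0)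
    (fun j h1 h2 => Set.Ioo_subset_Icc_self (hx_in j h1 h2))
    hb_in
    (fun i h1 h2 => ⟨(hxy (k + 1) i h1 h2).1.le, (hxy (k + 1) i h1 h2).2.le⟩)
    hlow hb0
end

section
/- Fix an integer n ≥ 2. The vector v = (y_{1,n-1}, …, y_{n-1,n-1}, b_0) ∈ ℝⁿ is majorized by the vector w = (x_{1,n}, …, x_{n,n}) ∈ ℝⁿ: if v̂ and ŵ denote the components of v and w arranged in decreasing order, then Σ_{i=1}^{m} v̂_i ≤ Σ_{i=1}^{m} ŵ_i for every 1 ≤ m ≤ n−1, and Σ_{i=1}^{n} v̂_i = Σ_{i=1}^{n} ŵ_i. -/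
open MeasureTheory Polynomial Finset


private lemma crossSum {α : Type*} [DecidableEq α] (f : α → ℝ) (S T : Finset α)
    (hcard : S.card = T.card)
    (h : ∀ i ∈ S \ T, ∀ j ∈ T \ S, f i ≤ f j) : ∑ i ∈ S, f i ≤ ∑ j ∈ T, f j := by
  have hST : (S \ T).card = (T \ S).card := Finset.card_sdiff_comm hcard
  rcases (S \ T).eq_empty_or_nonempty with he | hne
  · have hS : S ⊆ T := by rwa [Finset.sdiff_eq_empty_iff_subset] at he
    rw [Finset.eq_of_subset_of_card_le hS hcard.ge]
  · have hTne : (T \ S).Nonempty := Finset.card_pos.mp (by rw [← hST]; exact Finset.card_pos.mpr hne)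
    set c := ((T \ S).image f).min' (hTne.image f) with hc
    obtain ⟨j1, hj1, hj1e⟩ := Finset.mem_image.mp (((T \ S).image f).min'_mem (hTne.image f))
    have h1 : ∀ i ∈ S \ T, f i ≤ c := fun i hi => hc ▸ hj1e ▸ h i hi j1 hj1
    have h2 : ∀ j ∈ T \ S, c ≤ f j := fun j hj =>
      Finset.min'_le _ _ (Finset.mem_image_of_mem f hj)
    have e1 : ∑ i ∈ S ∩ T, f i + ∑ i ∈ S \ T, f i = ∑ i ∈ S, f i :=
      Finset.sum_inter_add_sum_sdiff S T f
    have e2 : ∑ i ∈ T ∩ S, f i + ∑ i ∈ T \ S, f i = ∑ i ∈ T, f i :=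
      Finset.sum_inter_add_sum_sdiff T S f
    have k1 : ∑ i ∈ S \ T, f i ≤ (S \ T).card • c := Finset.sum_le_card_nsmul _ _ _ h1
    have k2 : (T \ S).card • c ≤ ∑ j ∈ T \ S, f j := Finset.card_nsmul_le_sum _ _ _ h2
    have : ∑ i ∈ S ∩ T, f i = ∑ i ∈ T ∩ S, f i := by rw [Finset.inter_comm]
    rw [← e1, ← e2, this]
    have := hST ▸ k1
    linarith [le_trans this k2]

private lemma chainLe (z : ℕ → ℝ) (N : ℕ) (h : ∀ j, 1 ≤ j → j + 1 ≤ N → z j < z (j + 1)) :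
    ∀ j k, 1 ≤ j → j ≤ k → k ≤ N → z j ≤ z k := by
  intro j k hj hjk hkN
  induction k with
  | zero => omega
  | succ k ih =>
    rcases Nat.lt_or_ge j (k+1) with hlt | hge
    · have hjk' : j ≤ k := by omega
      have := ih hjk' (by omega)
      exact le_trans this (le_of_lt (h k (by omega) (by omega)))
    · have : j = k + 1 := by omega
      rw [this]

private lemma chainLt (z : ℕ → ℝ) (N : ℕ) (h : ∀ j, 1 ≤ j → j + 1 ≤ N → z j < z (j + 1)) :
    ∀ j k, 1 ≤ j → j < k → k ≤ N → z j < z k := by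
  intro j k hj hjk hkN
  have h1 : z j < z (j + 1) := h j hj (by omega)
  exact lt_of_lt_of_le h1 (chainLe z N h (j+1) k (by omega) (by omega) hkN)

private lemma vietaSum (r : Polynomial ℝ) (N : ℕ) (hN : 1 ≤ N) (hdeg : r.degree = N)
    (z : ℕ → ℝ) (hroot : ∀ j, 1 ≤ j → j ≤ N → r.eval (z j) = 0)
    (hmono : ∀ j, 1 ≤ j → j + 1 ≤ N → z j < z (j + 1)) :
    r.coeff (N - 1) = -(r.coeff N) * ∑ j ∈ Finset.range N, z (j + 1) := by
  have hr0 : r ≠ 0 := fun h => by simp [h] at hdeg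
  have hnd : r.natDegree = N := natDegree_eq_of_degree_eq_some hdeg
  -- the finset of roots
  have hinj : Set.InjOn (fun j => z (j + 1)) (Finset.range N : Set ℕ) := by
    intro i hi j hj hij
    simp only [Finset.coe_range, Set.mem_Iio] at hi hj
    by_contra hne
    rcases Nat.lt_or_ge i j with hlt | hge
    · exact absurd hij (ne_of_lt (chainLt z N hmono (i+1) (j+1) (by omega) (by omega) (by omega)))
    · have : j < i := by omega
      exact absurd hij.symm (ne_of_lt (chainLt z N hmono (j+1) (i+1) (by omega) (by omega) (by omega)))
  set F : Finset ℝ := (Finset.range N).image (fun j => z (j + 1)) with hF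
  have hFcard : F.card = N := by
    rw [hF, Finset.card_image_of_injOn hinj, Finset.card_range]
  have hsub : F.val ⊆ r.roots := by
    intro t ht
    rw [Finset.mem_val, hF] at ht
    obtain ⟨j, hj, rfl⟩ := Finset.mem_image.mp ht
    rw [Finset.mem_range] at hj
    rw [Polynomial.mem_roots hr0]
    exact hroot (j+1) (by omega) (by omega)
  have hle : F.val ≤ r.roots := Finset.val_le_iff_val_subset.mpr hsub
  have hcardroots : Multiset.card r.roots = N := by
    have h1 : Multiset.card r.roots ≤ N := hnd ▸ Polynomial.card_roots' r
    have h2 : N ≤ Multiset.card r.roots := by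
      calc N = Multiset.card F.val := hFcard.symm
        _ ≤ _ := Multiset.card_le_card hle
    omega
  have hroots : r.roots = F.val := (Multiset.eq_of_le_of_card_le hle (by rw [hcardroots]; exact hFcard.ge)).symm
  have hfact := Polynomial.C_leadingCoeff_mul_prod_multiset_X_sub_C (p := r) (by rw [hcardroots, hnd])
  set g : Polynomial ℝ := (r.roots.map fun a => X - C a).prod with hg
  have hgnd : g.natDegree = N := by
    rw [hg, Polynomial.natDegree_multiset_prod_X_sub_C_eq_card, hcardroots]
  have hnext : g.nextCoeff = -r.roots.sum := Polynomial.multiset_prod_X_sub_C_nextCoeff _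
  have hgcoeff : g.coeff (N - 1) = -r.roots.sum := by
    rw [← hnext, Polynomial.nextCoeff_of_natDegree_pos (by omega), hgnd]
  have hsum : r.roots.sum = ∑ j ∈ Finset.range N, z (j + 1) := by
    rw [hroots, hF]
    have e1 : ((Finset.range N).image (fun j => z (j + 1))).val.sum
        = ∑ t ∈ (Finset.range N).image (fun j => z (j + 1)), t := by
      simp [Finset.sum, Multiset.map_id']
    rw [e1]
    exact Finset.sum_image (fun i hi j hj hij => hinj (by simpa using hi) (by simpa using hj) hij)
  have hlead : r.coeff N = r.leadingCoeff := by rw [Polynomial.leadingCoeff, hnd]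
  calc r.coeff (N - 1) = (C r.leadingCoeff * g).coeff (N - 1) := by rw [hfact]
    _ = r.leadingCoeff * g.coeff (N - 1) := by rw [Polynomial.coeff_C_mul]
    _ = -(r.coeff N) * ∑ j ∈ Finset.range N, z (j + 1) := by
        rw [hgcoeff, hsum, hlead]; ring

private lemma coeffHigh (P : Polynomial ℝ) (m k : ℕ) (hd : P.degree = m) (hk : m < k) :
    P.coeff k = 0 :=
  Polynomial.coeff_eq_zero_of_degree_lt (by rw [hd]; exact_mod_cast hk)

private lemma coeffSum (P : ℕ → Polynomial ℝ) (A A' B : ℕ → ℝ)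
    (hdeg : ∀ m, (P m).degree = m)
    (hA : ∀ m, A m ≠ 0)
    (h0 : X * P 0 = C (A 0) * P 1 + C (B 0) * P 0)
    (hrec : ∀ m, X * P (m + 1) =
      C (A (m + 1)) * P (m + 2) + C (B (m + 1)) * P (m + 1) + C (A' m) * P m) :
    ∀ m, (P (m + 1)).coeff m = -(P (m + 1)).coeff (m + 1) * ∑ k ∈ Finset.range (m + 1), B k := by
  intro m
  induction m with
  | zero =>
    have e1 := congrArg (fun r => Polynomial.coeff r 1) h0
    have e0 := congrArg (fun r => Polynomial.coeff r 0) h0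
    simp only [Polynomial.coeff_X_mul, Polynomial.mul_coeff_zero, Polynomial.coeff_add,
      Polynomial.coeff_C_mul, Polynomial.coeff_C_zero, Polynomial.coeff_X_zero, zero_mul]
      at e1 e0
    rw [coeffHigh (P 0) 0 1 (hdeg 0) (by omega)] at e1
    have e1' : (P 0).coeff 0 = A 0 * (P 1).coeff 1 := by linarith [e1]
    have : A 0 * (P 1).coeff 0 = A 0 * (-(P 1).coeff 1 * B 0) := by
      linear_combination (-1 : ℝ) * e0 - B 0 * e1'
    have := mul_left_cancel₀ (hA 0) this
    simpa using this
  | succ m ih =>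
    have e2 := congrArg (fun r => Polynomial.coeff r (m + 2)) (hrec m)
    have e1 := congrArg (fun r => Polynomial.coeff r (m + 1)) (hrec m)
    simp only [Polynomial.coeff_X_mul, Polynomial.coeff_add, Polynomial.coeff_C_mul] at e2 e1
    rw [coeffHigh (P (m+1)) (m+1) (m+2) (hdeg (m+1)) (by omega),
        coeffHigh (P m) m (m+2) (hdeg m) (by omega)] at e2
    rw [coeffHigh (P m) m (m+1) (hdeg m) (by omega)] at e1
    -- e2 : (P (m+1)).coeff (m+1) = A (m+1) * (P (m+2)).coeff (m+2) + B (m+1) * 0 + A' m * 0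
    -- e1 : (P (m+1)).coeff m = A (m+1) * (P (m+2)).coeff (m+1) + B (m+1) * (P (m+1)).coeff (m+1) + 0
    have e2' : (P (m+1)).coeff (m+1) = A (m+1) * (P (m+2)).coeff (m+2) := by linarith [e2]
    have key : A (m+1) * (P (m+2)).coeff (m+1)
        = A (m+1) * (-(P (m+2)).coeff (m+2) * ∑ k ∈ Finset.range (m + 2), B k) := by
      have : A (m+1) * (P (m+2)).coeff (m+1)
          = (P (m+1)).coeff m - B (m+1) * (P (m+1)).coeff (m+1) := by linarith [e1]
      rw [this, ih, e2', Finset.sum_range_succ (f := B) (n := m + 1)]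
      ring
    exact mul_left_cancel₀ (hA (m+1)) key

private lemma qDegree (P : ℕ → Polynomial ℝ) (A A' B : ℕ → ℝ)
    (hP0 : P 0 = 1)
    (hA : ∀ m, A m ≠ 0)
    (h0 : X * P 0 = C (A 0) * P 1 + C (B 0) * P 0)
    (hrec : ∀ m, X * P (m + 1) =
      C (A (m + 1)) * P (m + 2) + C (B (m + 1)) * P (m + 1) + C (A' m) * P m) :
    ∀ m, (P m).degree = m := by
  have key : ∀ m, (P m).degree = m ∧ (P (m + 1)).degree = (m + 1 : ℕ) := by
    intro m
    induction m with
    | zero =>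
      have hd0 : (P 0).degree = (0 : ℕ) := by rw [hP0]; simp
      refine ⟨hd0, ?_⟩
      have heq : C (A 0) * P 1 = X - C (B 0) := by
        rw [hP0] at h0; linear_combination -h0
      have hdr := Polynomial.degree_X_sub_C (B 0)
      have := congrArg Polynomial.degree heq
      rw [hdr, Polynomial.degree_mul, Polynomial.degree_C (hA 0), zero_add] at this
      rw [this]
      norm_cast
    | succ m ih =>
      obtain ⟨h1, h2⟩ := ih
      refine ⟨h2, ?_⟩
      have heq : C (A (m + 1)) * P (m + 2)
          = X * P (m + 1) - C (B (m + 1)) * P (m + 1) - C (A' m) * P m := by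
        linear_combination -hrec m
      have d1 : (X * P (m + 1)).degree = ((m + 2 : ℕ) : WithBot ℕ) := by
        rw [Polynomial.degree_mul, Polynomial.degree_X, h2]
        norm_cast
        omega
      have d2 : (C (B (m + 1)) * P (m + 1)).degree ≤ ((m + 1 : ℕ) : WithBot ℕ) := by
        calc (C (B (m + 1)) * P (m + 1)).degree
            = (C (B (m + 1))).degree + (P (m + 1)).degree := Polynomial.degree_mul
          _ ≤ 0 + ((m + 1 : ℕ) : WithBot ℕ) := add_le_add (Polynomial.degree_C_le) (le_of_eq h2)
          _ = ((m + 1 : ℕ) : WithBot ℕ) := zero_add _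
      have d3 : (C (A' m) * P m).degree ≤ ((m : ℕ) : WithBot ℕ) := by
        calc (C (A' m) * P m).degree
            = (C (A' m)).degree + (P m).degree := Polynomial.degree_mul
          _ ≤ 0 + ((m : ℕ) : WithBot ℕ) := add_le_add (Polynomial.degree_C_le) (le_of_eq h1)
          _ = ((m : ℕ) : WithBot ℕ) := zero_add _
      have dsub1 : (X * P (m + 1) - C (B (m + 1)) * P (m + 1)).degree = ((m + 2 : ℕ) : WithBot ℕ) := by
        rw [Polynomial.degree_sub_eq_left_of_degree_lt, d1]
        rw [d1]
        exact lt_of_le_of_lt d2 (by exact_mod_cast (by omega : m + 1 < m + 2))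
      have dsub2 : (X * P (m + 1) - C (B (m + 1)) * P (m + 1) - C (A' m) * P m).degree
          = ((m + 2 : ℕ) : WithBot ℕ) := by
        rw [Polynomial.degree_sub_eq_left_of_degree_lt, dsub1]
        rw [dsub1]
        exact lt_of_le_of_lt d3 (by exact_mod_cast (by omega : m < m + 2))
      have := congrArg Polynomial.degree heq
      rw [dsub2, Polynomial.degree_mul, Polynomial.degree_C (hA (m + 1)), zero_add] at this
      exact this
  exact fun m => (key m).1

private lemma cardFilterLt (n k : ℕ) (hk : k ≤ n) :
    (Finset.univ.filter fun i : Fin n => (i : ℕ) < k).card = k := by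
  have : (Finset.univ.filter fun i : Fin n => (i : ℕ) < k)
      = Finset.univ.map (Fin.castLEEmb hk) := by
    ext i
    simp only [Finset.mem_filter, Finset.mem_univ, true_and, Finset.mem_map]
    constructor
    · intro h
      exact ⟨⟨(i : ℕ), h⟩, by ext; simp [Fin.castLEEmb]⟩
    · rintro ⟨j, -, rfl⟩
      simp [Fin.castLEEmb]
  rw [this, Finset.card_map, Finset.card_univ, Fintype.card_fin]
theorem stmt_11
    (μ : Measure ℝ) [IsProbabilityMeasure μ]
    (lo hi : ℝ)
    (hsupp : μ (Set.Icc lo hi)ᶜ = 0)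
    (hinf : ∀ s : Finset ℝ, μ (↑s : Set ℝ)ᶜ ≠ 0)
    (p : ℕ → Polynomial ℝ)
    (hdeg : ∀ m : ℕ, (p m).degree = m)
    (hlead : ∀ m : ℕ, 0 < (p m).leadingCoeff)
    (horth : ∀ m l : ℕ, ∫ t, (p m).eval t * (p l).eval t ∂μ = if m = l then 1 else 0)
    (a b : ℕ → ℝ)
    (hapos : ∀ m : ℕ, 1 ≤ m → 0 < a m)
    (hrec0 : Polynomial.X * p 0 = Polynomial.C (a 1) * p 1 + Polynomial.C (b 0) * p 0)
    (hrec : ∀ m : ℕ, Polynomial.X * p (m + 1) =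
      Polynomial.C (a (m + 2)) * p (m + 2) + Polynomial.C (b (m + 1)) * p (m + 1) +
        Polynomial.C (a (m + 1)) * p m)
    (x : ℕ → ℕ → ℝ)
    (hxroot : ∀ m j : ℕ, 1 ≤ j → j ≤ m → (p m).eval (x m j) = 0)
    (hxmono : ∀ m j : ℕ, 1 ≤ j → j + 1 ≤ m → x m j < x m (j + 1))
    (q : ℕ → Polynomial ℝ)
    (hq0 : q 0 = 1)
    (hqrec0 : Polynomial.X * q 0 = Polynomial.C (a 2) * q 1 + Polynomial.C (b 1) * q 0)
    (hqrec : ∀ m : ℕ, Polynomial.X * q (m + 1) =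
      Polynomial.C (a (m + 3)) * q (m + 2) + Polynomial.C (b (m + 2)) * q (m + 1) +
        Polynomial.C (a (m + 2)) * q m)
    (y : ℕ → ℕ → ℝ)
    (hyroot : ∀ m j : ℕ, 1 ≤ j → j ≤ m → (q m).eval (y m j) = 0)
    (hymono : ∀ m j : ℕ, 1 ≤ j → j + 1 ≤ m → y m j < y m (j + 1))
    (hxy : ∀ m j : ℕ, 1 ≤ j → j ≤ m → x (m + 1) j < y m j ∧ y m j < x (m + 1) (j + 1))
    (n : ℕ) (hn : 2 ≤ n)
    (v w : Fin n → ℝ)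
    (hv : ∀ i : Fin n, (i : ℕ) + 1 ≤ n - 1 → v i = y (n - 1) ((i : ℕ) + 1))
    (hv' : ∀ i : Fin n, (i : ℕ) + 1 = n → v i = b 0)
    (hw : ∀ i : Fin n, w i = x n ((i : ℕ) + 1))
    (σ τ : Equiv.Perm (Fin n))
    (hσ : Antitone (fun i => v (σ i))) (hτ : Antitone (fun i => w (τ i))) :
    (∀ m : ℕ, 1 ≤ m → m ≤ n - 1 →
      ∑ i ∈ Finset.univ.filter (fun i : Fin n => (i : ℕ) < m), v (σ i) ≤
        ∑ i ∈ Finset.univ.filter (fun i : Fin n => (i : ℕ) < m), w (τ i)) ∧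
    ∑ i : Fin n, v i = ∑ i : Fin n, w i := by
  classical
  have hnn : n - 1 + 1 = n := by omega
  -- coefficient of p n
  have hpcoeff : ∀ m, (p m).coeff m ≠ 0 := by
    intro m
    have h1 : (p m).natDegree = m := natDegree_eq_of_degree_eq_some (hdeg m)
    have := hlead m
    rw [Polynomial.leadingCoeff, h1] at this
    exact ne_of_gt this
  -- degrees of q
  have hqdeg : ∀ m : ℕ, (q m).degree = m :=
    qDegree q (fun m => a (m + 2)) (fun m => a (m + 2)) (fun m => b (m + 1)) hq0
      (fun m => ne_of_gt (hapos (m + 2) (by omega)))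
      (by simpa using hqrec0) (fun m => by simpa using hqrec m)
  have hqcoeff : ∀ m, (q m).coeff m ≠ 0 := by
    intro m
    have h1 : (q m).natDegree = m := natDegree_eq_of_degree_eq_some (hqdeg m)
    have h0 : q m ≠ 0 := by
      intro h
      have hb := hqdeg m
      rw [h, Polynomial.degree_zero] at hb
      exact WithBot.bot_ne_coe hb
    have := Polynomial.leadingCoeff_ne_zero.mpr h0
    rwa [Polynomial.leadingCoeff, h1] at this
  -- sum of x-roots equals sum of b's
  have hsumx : ∑ j ∈ Finset.range n, x n (j + 1) = ∑ k ∈ Finset.range n, b k := by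
    have hv1 := vietaSum (p n) n (by omega) (hdeg n) (x n)
      (fun j h1 h2 => hxroot n j h1 h2) (fun j h1 h2 => hxmono n j h1 h2)
    have hc := coeffSum p (fun m => a (m + 1)) (fun m => a (m + 1)) b hdeg
      (fun m => ne_of_gt (hapos (m + 1) (by omega)))
      (by simpa using hrec0) (fun m => by simpa using hrec m)
    have hc' := hc (n - 1)
    rw [hnn] at hc'
    rw [hv1] at hc'
    have hne : -(p n).coeff n ≠ 0 := neg_ne_zero.mpr (hpcoeff n)
    have := mul_left_cancel₀ hne hc'
    simpa using this
  -- sum of y-roots equals sum of shifted b's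
  have hsumy : ∑ j ∈ Finset.range (n - 1), y (n - 1) (j + 1)
      = ∑ k ∈ Finset.range (n - 1), b (k + 1) := by
    have hv1 := vietaSum (q (n - 1)) (n - 1) (by omega) (hqdeg (n - 1)) (y (n - 1))
      (fun j h1 h2 => hyroot (n - 1) j h1 h2) (fun j h1 h2 => hymono (n - 1) j h1 h2)
    have hc := coeffSum q (fun m => a (m + 2)) (fun m => a (m + 2)) (fun m => b (m + 1)) hqdeg
      (fun m => ne_of_gt (hapos (m + 2) (by omega)))
      (by simpa using hqrec0) (fun m => by simpa using hqrec m)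
    have h2 : n - 2 + 1 = n - 1 := by omega
    have hc' := hc (n - 2)
    rw [h2] at hc'
    have h3 : n - 1 - 1 = n - 2 := by omega
    rw [h3] at hv1
    rw [hv1] at hc'
    have hne : -(q (n - 1)).coeff (n - 1) ≠ 0 := neg_ne_zero.mpr (hqcoeff (n - 1))
    have := mul_left_cancel₀ hne hc'
    simpa using this
  -- total sums
  have hwsum : ∑ i : Fin n, w i = ∑ j ∈ Finset.range n, x n (j + 1) := by
    rw [← Fin.sum_univ_eq_sum_range (fun j => x n (j + 1)) n]
    exact Finset.sum_congr rfl (fun i _ => hw i)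
  have hvsum : ∑ i : Fin n, v i
      = (∑ j ∈ Finset.range (n - 1), y (n - 1) (j + 1)) + b 0 := by
    set f : ℕ → ℝ := fun k => if hk : k < n then v ⟨k, hk⟩ else 0 with hf
    have e0 : ∑ i : Fin n, v i = ∑ i : Fin n, f (i : ℕ) := by
      refine Finset.sum_congr rfl (fun i _ => ?_)
      rw [hf]; simp [i.isLt]
    rw [e0, Fin.sum_univ_eq_sum_range f n]
    have e1 : n = (n - 1) + 1 := by omega
    rw [e1, Finset.sum_range_succ]
    congr 1
    · refine Finset.sum_congr rfl (fun k hk => ?_)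
      rw [Finset.mem_range] at hk
      have hkn : k < n := by omega
      rw [hf]
      simp only [dif_pos hkn]
      exact hv ⟨k, hkn⟩ (by omega : k + 1 ≤ n - 1)
    · have hkn : n - 1 < n := by omega
      rw [hf]
      simp only [dif_pos hkn]
      exact hv' ⟨n - 1, hkn⟩ hnn
  have htotal : ∑ i : Fin n, v i = ∑ i : Fin n, w i := by
    rw [hvsum, hwsum, hsumx, hsumy]
    have := Finset.sum_range_succ' b (n - 1)
    rw [hnn] at this
    rw [this]
  refine ⟨?_, htotal⟩
  -- Part 1: the partial sum inequalities
  intro m hm1 hm2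
  have hmn : m ≤ n := by omega
  have hnmn : n - m ≤ n := by omega
  set Dm := Finset.univ.filter (fun i : Fin n => (i : ℕ) < m) with hDm
  set S := Dm.image σ with hS
  set T := Dm.image τ with hT
  set S₀ := Finset.univ.filter (fun i : Fin n => ¬ (i : ℕ) < n - m) with hS0
  set B₀ := Finset.univ.filter (fun i : Fin n => (i : ℕ) < n - m) with hB0
  have hDmcard : Dm.card = m := cardFilterLt n m hmn
  have hScard : S.card = m := by rw [hS, Finset.card_image_of_injective _ σ.injective, hDmcard]
  have hTcard : T.card = m := by rw [hT, Finset.card_image_of_injective _ τ.injective, hDmcard]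
  have hB0card : B₀.card = n - m := cardFilterLt n (n - m) hnmn
  have hS0card : S₀.card = m := by
    have := Finset.card_filter_add_card_filter_not
      (s := (Finset.univ : Finset (Fin n))) (p := fun i : Fin n => (i : ℕ) < n - m)
    rw [Finset.card_univ, Fintype.card_fin] at this
    rw [← hB0, ← hS0] at this
    omega
  -- monotonicity of x n
  have hxle : ∀ j k : ℕ, 1 ≤ j → j ≤ k → k ≤ n → x n j ≤ x n k :=
    chainLe (x n) n (fun j h1 h2 => hxmono n j h1 h2)
  -- interlacing in terms of v and w
  have hyx : ∀ i : Fin n, (i : ℕ) + 1 ≤ n - 1 → x n ((i : ℕ) + 1) < v i ∧ v i < x n ((i : ℕ) + 2) := by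
    intro i hi
    have h := hxy (n - 1) ((i : ℕ) + 1) (by omega) hi
    rw [hnn] at h
    rw [hv i hi]
    exact ⟨h.1, h.2⟩
  -- rewrite both sides as sums over images
  have hLrw : ∑ i ∈ Dm, v (σ i) = ∑ i ∈ S, v i := by
    rw [hS]
    exact (Finset.sum_image (fun i _ j _ hij => σ.injective hij)).symm
  have hRrw : ∑ i ∈ Dm, w (τ i) = ∑ i ∈ T, w i := by
    rw [hT]
    exact (Finset.sum_image (fun i _ j _ hij => τ.injective hij)).symm
  -- T is a "top set" for w
  have htop : ∀ j ∈ T, ∀ i : Fin n, i ∉ T → w i ≤ w j := by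
    intro j hj i hi
    rw [hT, Finset.mem_image] at hj
    obtain ⟨s, hs, rfl⟩ := hj
    rw [hDm, Finset.mem_filter] at hs
    set t := τ.symm i with ht
    have hti : τ t = i := τ.apply_symm_apply i
    have htm : ¬ (t : ℕ) < m := by
      intro hc
      exact hi (by rw [hT, Finset.mem_image]; exact ⟨t, by rw [hDm, Finset.mem_filter]; exact ⟨Finset.mem_univ _, hc⟩, hti⟩)
    have hst : s ≤ t := by
      have : (s : ℕ) ≤ (t : ℕ) := by omega
      exact Fin.le_def.mpr this
    have := hτ hst
    simpa [hti] using this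
  have hS0T : ∑ i ∈ S₀, w i ≤ ∑ j ∈ T, w j := by
    refine crossSum w S₀ T (by rw [hS0card, hTcard]) ?_
    intro i hi j hj
    exact htop j (Finset.mem_sdiff.mp hj).1 i (Finset.mem_sdiff.mp hi).2
  -- the special index
  set L : Fin n := ⟨n - 1, by omega⟩ with hLdef
  by_cases hL : L ∈ S
  · -- complement of S consists of y-indices
    set Cc := Finset.univ \ S with hCc
    have hCcard : Cc.card = n - m := by
      rw [hCc, Finset.card_sdiff_of_subset (Finset.subset_univ S), Finset.card_univ, Fintype.card_fin, hScard]
    have hCnotL : ∀ i ∈ Cc, (i : ℕ) + 1 ≤ n - 1 := by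
      intro i hi
      rw [hCc, Finset.mem_sdiff] at hi
      have hiL : i ≠ L := fun h => hi.2 (h ▸ hL)
      have : (i : ℕ) ≠ n - 1 := fun h => hiL (Fin.ext (by simpa using h))
      have := i.isLt
      omega
    have step1 : ∑ i ∈ B₀, w i ≤ ∑ i ∈ Cc, w i := by
      refine crossSum w B₀ Cc (by rw [hB0card, hCcard]) ?_
      intro i hi j hj
      have hi' : (i : ℕ) < n - m := by
        have := (Finset.mem_sdiff.mp hi).1
        rw [hB0, Finset.mem_filter] at this
        exact this.2
      have hj' : ¬ (j : ℕ) < n - m := by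
        intro hc
        exact (Finset.mem_sdiff.mp hj).2 (by rw [hB0, Finset.mem_filter]; exact ⟨Finset.mem_univ _, hc⟩)
      rw [hw i, hw j]
      exact hxle ((i : ℕ) + 1) ((j : ℕ) + 1) (by omega) (by omega) (by omega)
    have step2 : ∑ i ∈ Cc, w i ≤ ∑ i ∈ Cc, v i := by
      refine Finset.sum_le_sum (fun i hi => ?_)
      rw [hw i]
      exact le_of_lt (hyx i (hCnotL i hi)).1
    have step3 : ∑ i ∈ Cc, v i + ∑ i ∈ S, v i = ∑ i : Fin n, v i := by
      rw [hCc]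
      exact Finset.sum_sdiff (Finset.subset_univ S)
    have step4 : ∑ i ∈ B₀, w i + ∑ i ∈ S₀, w i = ∑ i : Fin n, w i := by
      rw [hB0, hS0]
      exact Finset.sum_filter_add_sum_filter_not _ _ _
    rw [hLrw, hRrw]
    have : ∑ i ∈ S, v i ≤ ∑ i ∈ S₀, w i := by linarith [htotal]
    linarith [hS0T]
  · -- S consists of y-indices
    have hSnotL : ∀ i ∈ S, (i : ℕ) + 1 ≤ n - 1 := by
      intro i hi
      have hiL : i ≠ L := fun h => hL (h ▸ hi)
      have : (i : ℕ) ≠ n - 1 := fun h => hiL (Fin.ext (by simpa using h))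
      have := i.isLt
      omega
    set sh : Fin n → Fin n := fun i => if h : (i : ℕ) + 1 < n then ⟨(i : ℕ) + 1, h⟩ else i with hsh
    have hshS : ∀ i ∈ S, ((sh i : ℕ)) = (i : ℕ) + 1 := by
      intro i hi
      have := hSnotL i hi
      rw [hsh]
      simp only [dif_pos (by omega : (i : ℕ) + 1 < n)]
    set S' := S.image sh with hS'
    have hS'card : S'.card = m := by
      rw [hS', Finset.card_image_of_injOn, hScard]
      intro i hi j hj hij
      have h1 := hshS i hi
      have h2 := hshS j hj
      have : (i : ℕ) + 1 = (j : ℕ) + 1 := by rw [← h1, ← h2, hij]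
      exact Fin.ext (by omega)
    have step1 : ∑ i ∈ S, v i ≤ ∑ i ∈ S, w (sh i) := by
      refine Finset.sum_le_sum (fun i hi => ?_)
      have h2 := (hyx i (hSnotL i hi)).2
      rw [hw (sh i), hshS i hi]
      exact le_of_lt h2
    have step2 : ∑ i ∈ S, w (sh i) = ∑ i ∈ S', w i := by
      rw [hS']
      refine (Finset.sum_image ?_).symm
      intro i hi j hj hij
      have h1 := hshS i hi
      have h2 := hshS j hj
      have : (i : ℕ) + 1 = (j : ℕ) + 1 := by rw [← h1, ← h2, hij]
      exact Fin.ext (by omega)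
    have step3 : ∑ i ∈ S', w i ≤ ∑ i ∈ S₀, w i := by
      refine crossSum w S' S₀ (by rw [hS'card, hS0card]) ?_
      intro i hi j hj
      have hi' : (i : ℕ) < n - m := by
        have hni := (Finset.mem_sdiff.mp hi).2
        by_contra hc
        exact hni (by rw [hS0, Finset.mem_filter]; exact ⟨Finset.mem_univ _, hc⟩)
      have hj' : ¬ (j : ℕ) < n - m := by
        have hmem := (Finset.mem_sdiff.mp hj).1
        rw [hS0, Finset.mem_filter] at hmem
        exact hmem.2
      rw [hw i, hw j]
      exact hxle ((i : ℕ) + 1) ((j : ℕ) + 1) (by omega) (by omega) (by omega)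
    rw [hLrw, hRrw]
    calc ∑ i ∈ S, v i ≤ ∑ i ∈ S, w (sh i) := step1
      _ = ∑ i ∈ S', w i := step2
      _ ≤ ∑ i ∈ S₀, w i := step3
      _ ≤ ∑ j ∈ T, w j := hS0T
end
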